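/- arXiv:1104.5452 — 4 statements merged into one kernel-verified Lean document; each statement's English description precedes it below -/
import Mathlib

section
/- Let λ ∈ (0,1), t > 0 and p ∈ ℝ, and suppose there exists a (t,p)-conformal Borel probability measure on (0,1]. Then p ≥ log(4 λ^t (1−λ)^t); moreover, if λ^t ≤ 1/2 then in fact p ≥ log ψ(t), where ψ(t) = (1−λ)^t/(1−λ^t). Consequently the infimum of those p for which a (t,p)-conformal probability measure exists equals log ψ(t) when λ^t ≤ 1/2 and equals log(4 λ^t (1−λ)^t) when λ^t ≥ 1/2, and this infimum is attained. -/
open MeasureTheory Set Filter Topology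

/-- The Markov partition interval `W n = (lam^n, lam^(n-1)]` for `n ≥ 1`. -/
noncomputable def Wint (lam : ℝ) (n : ℕ) : Set ℝ := Set.Ioc (lam ^ n) (lam ^ (n - 1))

/-- The map `F_lam : (0,1] → (0,1]`, extended by the identity outside `(0,1]`.
On `W n` it is `x ↦ (x - lam^n)/(lam(1-lam))` for `n ≥ 2` and
`x ↦ (x - lam)/(1-lam)` on `W 1`; for `x ∈ (0,1]` the branch index is
the least `n` with `lam^n < x`. -/
noncomputable def Flam (lam : ℝ) (x : ℝ) : ℝ :=
  if 0 < x ∧ x ≤ 1 then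
    if sInf {n : ℕ | lam ^ n < x} = 1 then (x - lam) / (1 - lam)
    else (x - lam ^ sInf {n : ℕ | lam ^ n < x}) / (lam * (1 - lam))
  else x

/-- The slope of `F_lam` on the branch `W n`. -/
noncomputable def slopeW (lam : ℝ) (n : ℕ) : ℝ :=
  if n = 1 then 1 / (1 - lam) else 1 / (lam * (1 - lam))

/-- A Borel measure `m` on `(0,1]` is `(t,p)`-conformal for `F_lam` if for every
branch `W n` and every Borel `A ⊆ W n` one has `m(F_lam(A)) = e^p * s_n^t * m(A)`. -/
def IsConformal (lam t p : ℝ) (m : Measure ℝ) : Prop :=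
  ∀ n : ℕ, 1 ≤ n → ∀ A : Set ℝ, MeasurableSet A → A ⊆ Wint lam n →
    m (Flam lam '' A) = ENNReal.ofReal (Real.exp p * slopeW lam n ^ t) * m A

/-- A set is wandering for `F_lam` if its preimages under all iterates are
pairwise disjoint. -/
def IsWanderingSet (lam : ℝ) (A : Set ℝ) : Prop :=
  Pairwise fun i j : ℕ => Disjoint ((Flam lam)^[i] ⁻¹' A) ((Flam lam)^[j] ⁻¹' A)

namespace Stmt6

variable {lam : ℝ}

noncomputable def nB (lam x : ℝ) : ℕ := sInf {n : ℕ | lam ^ n < x}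

lemma Wsub (h1 : 0 < lam) (h2 : lam < 1) {n : ℕ} (_hn : 1 ≤ n) : Wint lam n ⊆ Set.Ioc 0 1 := by
  intro x hx
  obtain ⟨hx1, hx2⟩ := hx
  exact ⟨lt_of_le_of_lt (by positivity) hx1, hx2.trans (pow_le_one₀ h1.le h2.le)⟩

lemma nB_eq (h1 : 0 < lam) (h2 : lam < 1) {n : ℕ} (_hn : 1 ≤ n) {x : ℝ} (hx : x ∈ Wint lam n) :
    nB lam x = n := by
  refine le_antisymm (Nat.sInf_le hx.1) (le_csInf ⟨n, hx.1⟩ ?_)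
  intro k hk
  by_contra hkn
  push_neg at hkn
  have hk1 : k ≤ n - 1 := by omega
  have hle : lam ^ (n-1) ≤ lam ^ k := pow_le_pow_of_le_one h1.le h2.le hk1
  exact absurd (hk.trans_le (hx.2.trans hle)) (lt_irrefl _)

lemma nB_mem (h1 : 0 < lam) (h2 : lam < 1) {x : ℝ} (hx : x ∈ Set.Ioc 0 1) :
    1 ≤ nB lam x ∧ x ∈ Wint lam (nB lam x) := by
  have hne : {n : ℕ | lam ^ n < x}.Nonempty := by
    obtain ⟨n, hn⟩ := exists_pow_lt_of_lt_one hx.1 h2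
    exact ⟨n, hn⟩
  have hmem : lam ^ (nB lam x) < x := Nat.sInf_mem hne
  have h1n : 1 ≤ nB lam x := by
    rcases Nat.eq_zero_or_pos (nB lam x) with h | h
    · exfalso
      rw [h, pow_zero] at hmem
      exact absurd hx.2 (not_le.2 hmem)
    · exact h
  have hnot := Nat.notMem_of_lt_sInf
    (show nB lam x - 1 < sInf {n : ℕ | lam ^ n < x} from by
      have : nB lam x - 1 < nB lam x := by omega
      exact this)
  exact ⟨h1n, hmem, not_lt.1 hnot⟩

lemma slope_pos (h1 : 0 < lam) (h2 : lam < 1) (n : ℕ) : 0 < slopeW lam n := by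
  have h3 : 0 < 1 - lam := by linarith
  unfold slopeW
  split_ifs <;> positivity

lemma Flam_eq (h1 : 0 < lam) (h2 : lam < 1) {n : ℕ} (hn : 1 ≤ n) {x : ℝ} (hx : x ∈ Wint lam n) :
    Flam lam x = slopeW lam n * (x - lam ^ n) := by
  have hx01 := Wsub h1 h2 hn hx
  have hnB : sInf {k : ℕ | lam ^ k < x} = n := nB_eq h1 h2 hn hx
  rw [Flam, if_pos ⟨hx01.1, hx01.2⟩, hnB]
  rcases eq_or_ne n 1 with rfl | hne
  · rw [if_pos rfl, slopeW, if_pos rfl, pow_one]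
    ring
  · rw [if_neg hne, slopeW, if_neg hne]
    ring

lemma Tm_right (h1 : 0 < lam) (h2 : lam < 1) {n : ℕ} (hn : 1 ≤ n) :
    slopeW lam n * (lam ^ (n-1) - lam ^ n) = lam ^ (n - 2) := by
  have h3 : (1:ℝ) - lam ≠ 0 := by linarith
  have h0 : lam ≠ 0 := h1.ne'
  match n, hn with
  | 1, _ => simp [slopeW]; field_simp
  | (n+2), _ =>
    have hne : (n+2 : ℕ) ≠ 1 := by omega
    rw [slopeW, if_neg hne]
    have e1 : n + 2 - 1 = n + 1 := rfl
    have e2 : n + 2 - 2 = n := rfl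
    rw [e1, e2]
    field_simp
    ring

lemma image_Tm_Ioc {s e a b : ℝ} (hs : 0 < s) :
    (fun x => s * (x - e)) '' Set.Ioc a b = Set.Ioc (s*(a-e)) (s*(b-e)) := by
  ext y
  simp only [Set.mem_image, Set.mem_Ioc]
  constructor
  · rintro ⟨x, ⟨hx1, hx2⟩, rfl⟩
    constructor
    · nlinarith
    · nlinarith
  · rintro ⟨hy1, hy2⟩
    refine ⟨y / s + e, ⟨?_, ?_⟩, by field_simp; ring⟩
    · have : a - e < y / s := (lt_div_iff₀ hs).2 (by nlinarith)
      linarith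
    · have : y / s ≤ b - e := (div_le_iff₀ hs).2 (by nlinarith)
      linarith

lemma image_eq_preimage {s e : ℝ} (hs : s ≠ 0) (A : Set ℝ) :
    (fun x => s * (x - e)) '' A = (fun y => y / s + e) ⁻¹' A := by
  ext y
  simp only [Set.mem_image, Set.mem_preimage]
  constructor
  · rintro ⟨x, hx, rfl⟩
    have hxy : s * (x - e) / s + e = x := by field_simp; ring
    rwa [hxy]
  · intro h
    exact ⟨y / s + e, h, by field_simp; ring⟩

lemma no_pos_seq {c δ : ℝ} (hδ : 0 < δ) (S : ℕ → ℝ)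
    (hrec : ∀ n, S (n+2) = S (n+1) - c * S n) (hpos : ∀ n, 0 < S n)
    (hρ1 : S 1 ≤ S 0)
    (hh : ∀ ρ : ℝ, 0 < ρ → ρ ≤ S 1 / S 0 → ρ - ρ^2 - c ≤ -δ) : False := by
  set ρ : ℕ → ℝ := fun n => S (n+1) / S n with hρ
  have hρpos : ∀ n, 0 < ρ n := fun n => div_pos (hpos _) (hpos _)
  have hρ01 : ρ 0 ≤ 1 := (div_le_one (hpos 0)).2 hρ1
  have key : ∀ k : ℕ, ρ k ≤ ρ 0 - k * δ := by
    intro k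
    induction k with
    | zero => simp
    | succ k ih =>
      have hknn : (0:ℝ) ≤ (k:ℝ) := k.cast_nonneg
      have hk0 : ρ k ≤ ρ 0 := le_trans ih (by nlinarith)
      have hk1 : ρ k ≤ 1 := hk0.trans hρ01
      have hhk := hh (ρ k) (hρpos k) hk0
      have hr := hρpos k
      have hrk : ρ (k+1) = 1 - c / ρ k := by
        have hS1 : S (k+1) ≠ 0 := (hpos _).ne'
        have hS2 : S k ≠ 0 := (hpos _).ne'
        show S (k+2) / S (k+1) = 1 - c / (S (k+1) / S k)
        rw [hrec k]
        field_simp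
      have h4 : ρ k - c ≤ ρ k * (ρ k - δ) := by
        nlinarith [mul_nonneg hδ.le (sub_nonneg.2 hk1)]
      have key2 : ρ (k+1) ≤ ρ k - δ := by
        rw [hrk]
        have hcr : c / ρ k * ρ k = c := div_mul_cancel₀ c hr.ne'
        nlinarith [hcr, h4, hr]
      have : (k:ℝ) + 1 = ((k+1 : ℕ) : ℝ) := by push_cast; ring
      calc ρ (k+1) ≤ ρ k - δ := key2
        _ ≤ ρ 0 - k * δ - δ := by linarith
        _ = ρ 0 - (k+1 : ℕ) * δ := by push_cast; ring
  obtain ⟨k, hk⟩ := exists_nat_gt (ρ 0 / δ)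
  have h5 : ρ 0 < k * δ := by
    rw [div_lt_iff₀ hδ] at hk
    linarith
  have := key k
  have := hρpos k
  linarith

lemma pos_of_nonneg {c : ℝ} (hc : 0 < c) (S : ℕ → ℝ)
    (hrec : ∀ n, S (n+2) = S (n+1) - c * S n) (h0 : 0 < S 0) (hnn : ∀ n, 0 ≤ S n) :
    ∀ n, 0 < S n := by
  by_contra h
  push_neg at h
  obtain ⟨N, hN⟩ := h
  have hex : ∃ N, ¬ 0 < S N := ⟨N, not_lt.2 hN⟩
  classical
  have hfind : ¬ 0 < S (Nat.find hex) := Nat.find_spec hex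
  have hmin : ∀ m, m < Nat.find hex → 0 < S m := fun m hm =>
    of_not_not (Nat.find_min hex hm)
  have hMz : S (Nat.find hex) = 0 := le_antisymm (not_lt.1 hfind) (hnn _)
  match hM : Nat.find hex, hfind, hMz, hmin with
  | 0, hf, _, _ => exact hf h0
  | 1, _, hz, _ =>
    have := hrec 0
    rw [hz] at this
    have h2 : S 2 = - (c * S 0) := by linarith
    nlinarith [hnn 2, mul_pos hc h0]
  | (K+2), _, hz, hmin' =>
    have hK1 : 0 < S (K+1) := hmin' (K+1) (by omega)
    have := hrec (K+1)
    rw [hz] at this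
    nlinarith [hnn (K+3)]

end Stmt6
namespace Stmt6

lemma lower_bound (lam t p : ℝ) (h1 : 0 < lam) (h2 : lam < 1) (ht : 0 < t)
    (m : Measure ℝ) (_hm : IsProbabilityMeasure m) (hm1 : m (Set.Ioc 0 1) = 1)
    (hc : IsConformal lam t p m) :
    Real.log (4 * lam^t * (1-lam)^t) ≤ p ∧
      (lam^t ≤ 1/2 → Real.log ((1-lam)^t / (1 - lam^t)) ≤ p) := by
  have h1l : (0:ℝ) < 1 - lam := by linarith
  set θ : ℝ := lam ^ t with hθ
  have hθ0 : 0 < θ := Real.rpow_pos_of_pos h1 t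
  have hθ1 : θ < 1 := Real.rpow_lt_one h1.le h2 ht
  have hL : 0 < (1-lam) ^ t := Real.rpow_pos_of_pos h1l t
  set b : ℝ := Real.exp (-p) * (1-lam)^t with hbdef
  set c : ℝ := b * θ with hcdef
  have hb0 : 0 < b := by positivity
  have hc0 : 0 < c := by positivity
  have hfin : ∀ s : Set ℝ, m s ≠ ⊤ := fun s => measure_ne_top m s
  set S : ℕ → ℝ := fun n => (m (Set.Ioc 0 (lam ^ n))).toReal with hSdef
  have hS0 : S 0 = 1 := by simp [hSdef, pow_zero, hm1]
  have hSnn : ∀ n, 0 ≤ S n := fun n => ENNReal.toReal_nonneg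
  -- conformality applied to the full branch
  have key : ∀ n : ℕ, 1 ≤ n →
      (m (Wint lam n)).toReal = (Real.exp (-p) * (slopeW lam n ^ t)⁻¹) * S (n-2) := by
    intro n hn
    have hWmeas : MeasurableSet (Wint lam n) := measurableSet_Ioc
    have himg : Flam lam '' (Wint lam n) = Set.Ioc 0 (lam ^ (n-2)) := by
      rw [Set.image_congr (fun x hx => Flam_eq h1 h2 hn hx), Wint,
        image_Tm_Ioc (slope_pos h1 h2 n)]
      simp only [sub_self, mul_zero]
      rw [Tm_right h1 h2 hn]
    have hconf := hc n hn _ hWmeas (subset_refl _)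
    rw [himg] at hconf
    have hsl : 0 < slopeW lam n ^ t := Real.rpow_pos_of_pos (slope_pos h1 h2 n) t
    have hek : 0 < Real.exp p * slopeW lam n ^ t := by positivity
    have htR : S (n-2) = (Real.exp p * slopeW lam n ^ t) * (m (Wint lam n)).toReal := by
      show (m (Set.Ioc 0 (lam ^ (n-2)))).toReal = _
      rw [hconf, ENNReal.toReal_mul, ENNReal.toReal_ofReal hek.le]
    rw [htR, Real.exp_neg]
    have hex : Real.exp p ≠ 0 := (Real.exp_pos p).ne'
    field_simp
  have split : ∀ n : ℕ, 1 ≤ n → S (n-1) = S n + (m (Wint lam n)).toReal := by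
    intro n hn
    have hle1 : (0:ℝ) ≤ lam ^ n := by positivity
    have hle2 : lam ^ n ≤ lam ^ (n-1) := pow_le_pow_of_le_one h1.le h2.le (by omega)
    have hu : Set.Ioc (0:ℝ) (lam ^ n) ∪ Set.Ioc (lam^n) (lam^(n-1)) = Set.Ioc 0 (lam^(n-1)) :=
      Set.Ioc_union_Ioc_eq_Ioc hle1 hle2
    have hd : Disjoint (Set.Ioc (0:ℝ) (lam ^ n)) (Set.Ioc (lam^n) (lam^(n-1))) :=
      Set.Ioc_disjoint_Ioc_of_le le_rfl
    have := measure_union (μ := m) hd (measurableSet_Ioc)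
    rw [hu] at this
    rw [hSdef]
    simp only [Wint]
    rw [this, ENNReal.toReal_add (hfin _) (hfin _)]
  -- slope computations
  have slope1 : (slopeW lam 1 ^ t)⁻¹ = (1-lam)^t := by
    rw [slopeW, if_pos rfl, one_div, Real.inv_rpow h1l.le, inv_inv]
  have slope2 : ∀ n : ℕ, n ≠ 1 → (slopeW lam n ^ t)⁻¹ = θ * (1-lam)^t := by
    intro n hne
    rw [slopeW, if_neg hne, one_div, Real.inv_rpow (by positivity), inv_inv,
      Real.mul_rpow h1.le h1l.le]
  have hS1 : S 1 = 1 - b := by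
    have h01 := split 1 le_rfl
    have h02 := key 1 le_rfl
    have e11 : (1:ℕ) - 1 = 0 := rfl
    have e12 : (1:ℕ) - 2 = 0 := rfl
    rw [e11] at h01
    rw [e12, slope1] at h02
    rw [h02, hS0] at h01
    rw [hbdef]
    linarith
  have hrec : ∀ k : ℕ, S (k+2) = S (k+1) - c * S k := by
    intro k
    have h2k : 1 ≤ k + 2 := by omega
    have := split (k+2) h2k
    rw [key (k+2) h2k, slope2 (k+2) (by omega)] at this
    have e1 : k + 2 - 1 = k + 1 := rfl
    have e2 : k + 2 - 2 = k := rfl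
    rw [e1, e2] at this
    rw [hcdef, hbdef]
    linarith [this]
  have hpos : ∀ n, 0 < S n := pos_of_nonneg hc0 S hrec (by rw [hS0]; norm_num) hSnn
  have hb1 : b < 1 := by
    have := hpos 1
    rw [hS1] at this
    linarith
  have hρ1 : S 1 ≤ S 0 := by rw [hS0, hS1]; linarith
  -- first bound : c ≤ 1/4
  have hc14 : c ≤ 1/4 := by
    by_contra hcc
    push_neg at hcc
    refine no_pos_seq (δ := c - 1/4) (by linarith) S hrec hpos hρ1 ?_
    intro ρ hρ0 _
    nlinarith [sq_nonneg (ρ - 1/2)]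
  have hepos := Real.exp_pos p
  have hexpneg : Real.exp (-p) = (Real.exp p)⁻¹ := Real.exp_neg p
  have hinv : (Real.exp p)⁻¹ * Real.exp p = 1 := inv_mul_cancel₀ hepos.ne'
  constructor
  · -- log (4 θ (1-lam)^t) ≤ p
    have h4 : 4 * θ * (1-lam)^t ≤ Real.exp p := by
      have hcc : (Real.exp p)⁻¹ * (1-lam)^t * θ ≤ 1/4 := by
        rw [hcdef, hbdef, hexpneg] at hc14
        linarith
      nlinarith [mul_le_mul_of_nonneg_left hcc hepos.le]
    have hpos4 : (0:ℝ) < 4 * θ * (1-lam)^t := by positivity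
    calc Real.log (4 * lam^t * (1-lam)^t) ≤ Real.log (Real.exp p) :=
          Real.log_le_log (by positivity) h4
      _ = p := Real.log_exp p
  · intro hhalf
    have hble : b ≤ 1 - θ := by
      by_contra hbc
      push_neg at hbc
      refine no_pos_seq (δ := b * (b + θ - 1)) (by nlinarith) S hrec hpos hρ1 ?_
      intro ρ hρ0 hρle
      rw [hS0, hS1, div_one] at hρle
      rw [hcdef]
      nlinarith [mul_nonneg (sub_nonneg.2 hρle) (show (0:ℝ) ≤ b - ρ by nlinarith)]
    have h5 : (1-lam)^t / (1 - θ) ≤ Real.exp p := by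
      rw [div_le_iff₀ (by linarith)]
      rw [hbdef, hexpneg] at hble
      nlinarith [mul_le_mul_of_nonneg_left hble hepos.le]
    have hθ1' : lam ^ t < 1 := hθ1
    calc Real.log ((1-lam)^t / (1 - lam^t)) ≤ Real.log (Real.exp p) :=
          Real.log_le_log (div_pos hL (by linarith)) h5
      _ = p := Real.log_exp p

end Stmt6
namespace Stmt6

noncomputable def ccn (b c : ℝ) (n : ℕ) : ℝ := if n = 1 then b else c

noncomputable def Gfun (lam b c : ℝ) (S : ℕ → ℝ) (x : ℝ) : ℝ :=
  ∑' k : ℕ, (∏ j ∈ Finset.range k, ccn b c (nB lam ((Flam lam)^[j] x))) *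
    S (nB lam ((Flam lam)^[k] x))

noncomputable def Pfun (lam b c : ℝ) (S : ℕ → ℝ) (K : ℕ) (x : ℝ) : ℝ :=
  ∑ k ∈ Finset.range K, (∏ j ∈ Finset.range k, ccn b c (nB lam ((Flam lam)^[j] x))) *
    S (nB lam ((Flam lam)^[k] x))

structure Setup (lam b c : ℝ) (S : ℕ → ℝ) : Prop where
  h1 : 0 < lam
  h2 : lam < 1
  hb0 : 0 < b
  hb1 : b < 1
  hc0 : 0 < c
  hc1 : c < 1
  hS0 : S 0 = 1
  hS1 : S 1 = 1 - b
  hrec : ∀ n, S (n+2) = S (n+1) - c * S n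
  hSnn : ∀ n, 0 ≤ S n
  hSlim : Tendsto S atTop (𝓝 0)

namespace Setup

variable {lam b c : ℝ} {S : ℕ → ℝ}

lemma hSmono (hs : Setup lam b c S) : ∀ n, S (n+1) ≤ S n := by
  intro n
  rcases n with _ | k
  · rw [hs.hS1, hs.hS0]; linarith [hs.hb0]
  · rw [hs.hrec k]
    nlinarith [hs.hSnn k, hs.hc0]

lemma hSanti (hs : Setup lam b c S) : Antitone S :=
  antitone_nat_of_succ_le hs.hSmono

lemma hSle1 (hs : Setup lam b c S) : ∀ n, S n ≤ 1 := fun n => by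
  calc S n ≤ S 0 := hs.hSanti (Nat.zero_le n)
    _ = 1 := hs.hS0

lemma Sid (hs : Setup lam b c S) : ∀ n : ℕ, 1 ≤ n → S n + ccn b c n * S (n-2) = S (n-1) := by
  intro n hn
  match n, hn with
  | 1, _ =>
    rw [ccn, if_pos rfl]
    show S 1 + b * S 0 = S 0
    rw [hs.hS1, hs.hS0]; ring
  | (k+2), _ =>
    rw [ccn, if_neg (by omega)]
    show S (k+2) + c * S k = S (k+1)
    rw [hs.hrec k]; ring

lemma ccn_pos (hs : Setup lam b c S) (n : ℕ) : 0 < ccn b c n := by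
  rw [ccn]; split_ifs; exacts [hs.hb0, hs.hc0]

lemma ccn_le (hs : Setup lam b c S) (n : ℕ) : ccn b c n ≤ max b c := by
  rw [ccn]; split_ifs; exacts [le_max_left _ _, le_max_right _ _]

lemma Flam_mem_Ioc (hs : Setup lam b c S) {x : ℝ} (hx : x ∈ Set.Ioc 0 1) :
    Flam lam x ∈ Set.Ioc 0 (lam ^ (nB lam x - 2)) := by
  obtain ⟨hn1, hxW⟩ := nB_mem hs.h1 hs.h2 hx
  rw [Flam_eq hs.h1 hs.h2 hn1 hxW]
  constructor
  · exact mul_pos (slope_pos hs.h1 hs.h2 _) (by linarith [hxW.1])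
  · calc slopeW lam (nB lam x) * (x - lam ^ nB lam x)
        ≤ slopeW lam (nB lam x) * (lam ^ (nB lam x - 1) - lam ^ nB lam x) := by
          apply mul_le_mul_of_nonneg_left _ (slope_pos hs.h1 hs.h2 _).le
          linarith [hxW.2]
      _ = lam ^ (nB lam x - 2) := Tm_right hs.h1 hs.h2 hn1

lemma Flam_mem01 (hs : Setup lam b c S) {x : ℝ} (hx : x ∈ Set.Ioc 0 1) : Flam lam x ∈ Set.Ioc 0 1 := by
  obtain ⟨ha, hb2⟩ := hs.Flam_mem_Ioc hx
  exact ⟨ha, hb2.trans (pow_le_one₀ hs.h1.le hs.h2.le)⟩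

lemma iter_mem01 (hs : Setup lam b c S) {x : ℝ} (hx : x ∈ Set.Ioc 0 1) (k : ℕ) :
    (Flam lam)^[k] x ∈ Set.Ioc 0 1 := by
  induction k with
  | zero => simpa using hx
  | succ k ih =>
    rw [Function.iterate_succ_apply']
    exact hs.Flam_mem01 ih

lemma summable_term (hs : Setup lam b c S) (x : ℝ) :
    Summable (fun k : ℕ => (∏ j ∈ Finset.range k, ccn b c (nB lam ((Flam lam)^[j] x))) *
      S (nB lam ((Flam lam)^[k] x))) := by
  set M := max b c with hM
  have hM0 : 0 < M := lt_max_of_lt_left hs.hb0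
  have hM1 : M < 1 := max_lt hs.hb1 hs.hc1
  apply Summable.of_nonneg_of_le
  · intro k
    apply mul_nonneg
    · exact Finset.prod_nonneg fun j _ => (hs.ccn_pos _).le
    · exact hs.hSnn _
  · intro k
    show _ ≤ M ^ k
    calc (∏ j ∈ Finset.range k, ccn b c (nB lam ((Flam lam)^[j] x))) *
          S (nB lam ((Flam lam)^[k] x))
        ≤ (∏ j ∈ Finset.range k, ccn b c (nB lam ((Flam lam)^[j] x))) * 1 := by
          apply mul_le_mul_of_nonneg_left (hs.hSle1 _)
          exact Finset.prod_nonneg fun j _ => (hs.ccn_pos _).le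
      _ = ∏ j ∈ Finset.range k, ccn b c (nB lam ((Flam lam)^[j] x)) := mul_one _
      _ ≤ ∏ _j ∈ Finset.range k, M :=
          Finset.prod_le_prod (fun j _ => (hs.ccn_pos _).le) (fun j _ => hs.ccn_le _)
      _ = M ^ k := by rw [Finset.prod_const, Finset.card_range]
  · exact summable_geometric_of_lt_one hM0.le hM1

lemma Gfun_feq (hs : Setup lam b c S) (x : ℝ) :
    Gfun lam b c S x = S (nB lam x) + ccn b c (nB lam x) * Gfun lam b c S (Flam lam x) := by
  rw [Gfun, Summable.tsum_eq_zero_add (hs.summable_term x)]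
  congr 1
  · simp
  · rw [Gfun, ← tsum_mul_left]
    congr 1
    funext k
    rw [Finset.prod_range_succ']
    simp only [Function.iterate_succ_apply, Function.iterate_zero_apply]
    ring

lemma Pfun_succ (K : ℕ) (x : ℝ) :
    Pfun lam b c S (K+1) x =
      S (nB lam x) + ccn b c (nB lam x) * Pfun lam b c S K (Flam lam x) := by
  rw [Pfun, Finset.sum_range_succ']
  simp only [Function.iterate_succ_apply, Function.iterate_zero_apply]
  rw [Pfun, Finset.mul_sum]
  simp only [Finset.prod_range_succ']
  rw [add_comm]
  congr 1
  · simp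
  · apply Finset.sum_congr rfl
    intro k _
    simp only [Function.iterate_succ_apply, Function.iterate_zero_apply]
    ring

end Setup
end Stmt6
namespace Stmt6

def Good (lam : ℝ) (S : ℕ → ℝ) (Q : ℝ → ℝ) : Prop :=
  (∀ x y, x ∈ Set.Ioc (0:ℝ) 1 → y ∈ Set.Ioc (0:ℝ) 1 → x ≤ y → Q x ≤ Q y) ∧
  (∀ x ∈ Set.Ioc (0:ℝ) 1, 0 ≤ Q x) ∧
  (∀ k : ℕ, ∀ x ∈ Set.Ioc (0:ℝ) 1, x ≤ lam ^ k → Q x ≤ S k)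

namespace Setup

variable {lam b c : ℝ} {S : ℕ → ℝ}

lemma good_bound_aux (hs : Setup lam b c S) {Q : ℝ → ℝ} (hQ : Good lam S Q)
    {x : ℝ} (hx : x ∈ Set.Ioc (0:ℝ) 1) :
    S (nB lam x) + ccn b c (nB lam x) * Q (Flam lam x) ≤ S (nB lam x - 1) := by
  obtain ⟨hn1, hxW⟩ := nB_mem hs.h1 hs.h2 hx
  have hF01 := hs.Flam_mem01 hx
  have hFle := (hs.Flam_mem_Ioc hx).2
  have hQF : Q (Flam lam x) ≤ S (nB lam x - 2) := hQ.2.2 _ _ hF01 hFle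
  calc S (nB lam x) + ccn b c (nB lam x) * Q (Flam lam x)
      ≤ S (nB lam x) + ccn b c (nB lam x) * S (nB lam x - 2) := by
        have := hs.ccn_pos (nB lam x)
        nlinarith
    _ = S (nB lam x - 1) := hs.Sid _ hn1

lemma good_step (hs : Setup lam b c S) {Q : ℝ → ℝ} (hQ : Good lam S Q) :
    Good lam S (fun x => S (nB lam x) + ccn b c (nB lam x) * Q (Flam lam x)) := by
  refine ⟨?_, ?_, ?_⟩
  · -- monotone
    intro x y hx hy hxy
    obtain ⟨hnx1, hxW⟩ := nB_mem hs.h1 hs.h2 hx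
    obtain ⟨hny1, hyW⟩ := nB_mem hs.h1 hs.h2 hy
    have hle : nB lam y ≤ nB lam x := Nat.sInf_le (lt_of_lt_of_le hxW.1 hxy)
    rcases eq_or_lt_of_le hle with heq | hlt
    · -- same branch
      simp only
      rw [heq]
      have hFx : Flam lam x ≤ Flam lam y := by
        rw [Flam_eq hs.h1 hs.h2 hnx1 hxW, Flam_eq hs.h1 hs.h2 hny1 hyW, ← heq]
        apply mul_le_mul_of_nonneg_left _ (slope_pos hs.h1 hs.h2 _).le
        linarith
      have := hQ.1 _ _ (hs.Flam_mem01 hx) (hs.Flam_mem01 hy) hFx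
      have hcp := hs.ccn_pos (nB lam x)
      nlinarith
    · -- different branches
      simp only
      calc S (nB lam x) + ccn b c (nB lam x) * Q (Flam lam x)
          ≤ S (nB lam x - 1) := hs.good_bound_aux hQ hx
        _ ≤ S (nB lam y) := hs.hSanti (by omega)
        _ ≤ S (nB lam y) + ccn b c (nB lam y) * Q (Flam lam y) := by
            have := hQ.2.1 _ (hs.Flam_mem01 hy)
            have := hs.ccn_pos (nB lam y)
            nlinarith
  · -- nonneg
    intro x hx
    have := hQ.2.1 _ (hs.Flam_mem01 hx)
    have := hs.ccn_pos (nB lam x)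
    have := hs.hSnn (nB lam x)
    positivity
  · -- bound
    intro k x hx hxk
    obtain ⟨hn1, hxW⟩ := nB_mem hs.h1 hs.h2 hx
    have hkn : k < nB lam x := by
      by_contra hkk
      push_neg at hkk
      have : lam ^ k ≤ lam ^ (nB lam x) := pow_le_pow_of_le_one hs.h1.le hs.h2.le hkk
      linarith [hxW.1]
    calc S (nB lam x) + ccn b c (nB lam x) * Q (Flam lam x)
        ≤ S (nB lam x - 1) := hs.good_bound_aux hQ hx
      _ ≤ S k := hs.hSanti (by omega)

lemma good_P (hs : Setup lam b c S) : ∀ K : ℕ, Good lam S (Pfun lam b c S K) := by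
  intro K
  induction K with
  | zero =>
    constructor
    · intro x y _ _ _; simp [Pfun]
    · refine ⟨fun x _ => by simp [Pfun], fun k x _ _ => by simp [Pfun]; exact hs.hSnn k⟩
  | succ K ih =>
    have hrw : Pfun lam b c S (K+1) =
        fun x => S (nB lam x) + ccn b c (nB lam x) * Pfun lam b c S K (Flam lam x) :=
      funext fun x => Pfun_succ K x
    rw [hrw]
    exact hs.good_step ih

lemma tendsto_P (hs : Setup lam b c S) (x : ℝ) :
    Tendsto (fun K => Pfun lam b c S K x) atTop (𝓝 (Gfun lam b c S x)) :=
  (hs.summable_term x).hasSum.tendsto_sum_nat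

lemma good_G (hs : Setup lam b c S) : Good lam S (Gfun lam b c S) := by
  refine ⟨?_, ?_, ?_⟩
  · intro x y hx hy hxy
    exact le_of_tendsto_of_tendsto' (hs.tendsto_P x) (hs.tendsto_P y)
      (fun K => (hs.good_P K).1 x y hx hy hxy)
  · intro x hx
    exact ge_of_tendsto' (hs.tendsto_P x) (fun K => (hs.good_P K).2.1 x hx)
  · intro k x hx hxk
    exact le_of_tendsto' (hs.tendsto_P x) (fun K => (hs.good_P K).2.2 k x hx hxk)

lemma mem_W1 (hs : Setup lam b c S) : (1:ℝ) ∈ Wint lam 1 := by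
  constructor
  · rw [pow_one]; exact hs.h2
  · norm_num

lemma nB_one (hs : Setup lam b c S) : nB lam 1 = 1 :=
  nB_eq hs.h1 hs.h2 le_rfl hs.mem_W1

lemma Flam_one (hs : Setup lam b c S) : Flam lam (1:ℝ) = 1 := by
  rw [Flam_eq hs.h1 hs.h2 le_rfl hs.mem_W1, slopeW, if_pos rfl, pow_one]
  have : (1:ℝ) - lam ≠ 0 := by linarith [hs.h2]
  field_simp

lemma Gfun_one (hs : Setup lam b c S) : Gfun lam b c S 1 = 1 := by
  have hfe := hs.Gfun_feq 1
  rw [hs.nB_one, hs.Flam_one, ccn, if_pos rfl, hs.hS1] at hfe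
  have hkey : (1 - b) * Gfun lam b c S 1 = (1 - b) * 1 := by
    rw [mul_one]; linear_combination hfe
  exact mul_left_cancel₀ (by linarith [hs.hb1] : (1:ℝ) - b ≠ 0) hkey

lemma mem_Wsucc (hs : Setup lam b c S) (k : ℕ) : lam ^ (k+1) ∈ Wint lam (k+2) := by
  constructor
  · exact pow_lt_pow_right_of_lt_one₀ hs.h1 hs.h2 (by omega)
  · exact le_of_eq rfl

lemma Flam_pow (hs : Setup lam b c S) (k : ℕ) : Flam lam (lam ^ (k+1)) = lam ^ k := by
  rw [Flam_eq hs.h1 hs.h2 (by omega) (hs.mem_Wsucc k)]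
  have := Tm_right hs.h1 hs.h2 (show 1 ≤ k+2 by omega)
  have e1 : k + 2 - 1 = k + 1 := rfl
  have e2 : k + 2 - 2 = k := rfl
  rw [e1, e2] at this
  exact this

lemma Gfun_pow (hs : Setup lam b c S) : ∀ k : ℕ, Gfun lam b c S (lam ^ k) = S k := by
  intro k
  induction k with
  | zero => rw [pow_zero, hs.Gfun_one, hs.hS0]
  | succ k ih =>
    have hfe := hs.Gfun_feq (lam ^ (k+1))
    rw [nB_eq hs.h1 hs.h2 (by omega) (hs.mem_Wsucc k), hs.Flam_pow k, ih,
      ccn, if_neg (by omega)] at hfe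
    rw [hfe, hs.hrec k]
    ring

end Setup
end Stmt6
namespace Stmt6

noncomputable def gE (lam b c : ℝ) (S : ℕ → ℝ) (x : ℝ) : ℝ :=
  if x ≤ 0 then 0 else if x ≤ 1 then Gfun lam b c S x else 1

namespace Setup

variable {lam b c : ℝ} {S : ℕ → ℝ}

lemma gE_eq (hs : Setup lam b c S) {x : ℝ} (hx : x ∈ Set.Ioc (0:ℝ) 1) :
    gE lam b c S x = Gfun lam b c S x := by
  rw [gE, if_neg (not_le.2 hx.1), if_pos hx.2]

lemma gE_nonneg (hs : Setup lam b c S) (x : ℝ) : 0 ≤ gE lam b c S x := by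
  rw [gE]
  split_ifs with h0 h1'
  · exact le_refl _
  · exact hs.good_G.2.1 x ⟨not_le.1 h0, h1'⟩
  · norm_num

lemma gE_le_one (hs : Setup lam b c S) (x : ℝ) : gE lam b c S x ≤ 1 := by
  rw [gE]
  split_ifs with h0 h1'
  · norm_num
  · have := hs.good_G.2.2 0 x ⟨not_le.1 h0, h1'⟩ (by rw [pow_zero]; exact h1')
    rw [hs.hS0] at this
    exact this
  · exact le_refl _

lemma gE_mono (hs : Setup lam b c S) : Monotone (gE lam b c S) := by
  intro x y hxy
  rcases le_or_gt x 0 with hx0 | hx0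
  · rw [gE, if_pos hx0]
    exact hs.gE_nonneg y
  · rcases le_or_gt y 1 with hy1 | hy1
    · have hx1 : x ≤ 1 := hxy.trans hy1
      rw [hs.gE_eq ⟨hx0, hx1⟩, hs.gE_eq ⟨hx0.trans_le hxy, hy1⟩]
      exact hs.good_G.1 x y ⟨hx0, hx1⟩ ⟨hx0.trans_le hxy, hy1⟩ hxy
    · have hy : gE lam b c S y = 1 := by
        rw [gE, if_neg (by linarith), if_neg (by linarith)]
      rw [hy]
      exact hs.gE_le_one x

lemma gE_bound (hs : Setup lam b c S) (k : ℕ) {x : ℝ} (hx0 : 0 < x) (hxk : x ≤ lam ^ k) :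
    gE lam b c S x ≤ S k := by
  have hx1 : x ≤ 1 := hxk.trans (pow_le_one₀ hs.h1.le hs.h2.le)
  rw [hs.gE_eq ⟨hx0, hx1⟩]
  exact hs.good_G.2.2 k x ⟨hx0, hx1⟩ hxk

lemma tendsto_gE_zero (hs : Setup lam b c S) :
    Tendsto (gE lam b c S) (𝓝[>] (0:ℝ)) (𝓝 0) := by
  rw [tendsto_order]
  constructor
  · intro a ha
    filter_upwards [self_mem_nhdsWithin] with y hy
    exact lt_of_lt_of_le ha (hs.gE_nonneg y)
  · intro a ha
    obtain ⟨k, hk⟩ := (hs.hSlim.eventually (gt_mem_nhds ha)).exists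
    have hmem : Set.Ioo (0:ℝ) (lam ^ k) ∈ 𝓝[>] (0:ℝ) :=
      Ioo_mem_nhdsGT_of_mem ⟨le_refl 0, pow_pos hs.h1 k⟩
    filter_upwards [hmem] with y hy
    exact lt_of_le_of_lt (hs.gE_bound k hy.1 hy.2.le) hk

/-- The Stieltjes function: right-continuous regularization of `gE`. -/
noncomputable def stF (hs : Setup lam b c S) : StieltjesFunction ℝ :=
  (hs.gE_mono).stieltjesFunction

lemma stF_of_tendsto (hs : Setup lam b c S) {x l : ℝ}
    (h : Tendsto (gE lam b c S) (𝓝[>] x) (𝓝 l)) : hs.stF x = l :=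
  tendsto_nhds_unique ((hs.gE_mono).tendsto_rightLim x) h

lemma stF_zero (hs : Setup lam b c S) : hs.stF 0 = 0 :=
  hs.stF_of_tendsto hs.tendsto_gE_zero

lemma stF_neg (hs : Setup lam b c S) {x : ℝ} (hx : x < 0) : hs.stF x = 0 := by
  apply hs.stF_of_tendsto
  apply Tendsto.congr' _ tendsto_const_nhds
  filter_upwards [Ioo_mem_nhdsGT_of_mem ⟨le_refl x, hx⟩] with y hy
  rw [gE, if_pos hy.2.le]

lemma stF_ge_one (hs : Setup lam b c S) {x : ℝ} (hx : 1 ≤ x) : hs.stF x = 1 := by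
  apply hs.stF_of_tendsto
  apply Tendsto.congr' _ tendsto_const_nhds
  filter_upwards [self_mem_nhdsWithin] with y hy
  have hy1 : 1 < y := lt_of_le_of_lt hx hy
  rw [gE, if_neg (by linarith), if_neg (by linarith)]

lemma stF_nonneg (hs : Setup lam b c S) (x : ℝ) : 0 ≤ hs.stF x := by
  have := ge_of_tendsto ((hs.gE_mono).tendsto_rightLim x)
    (Filter.Eventually.of_forall fun y => hs.gE_nonneg y)
  exact this

lemma tendsto_Tm (hs : Setup lam b c S) (n : ℕ) (x : ℝ) :
    Tendsto (fun y => slopeW lam n * (y - lam ^ n)) (𝓝[>] x)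
      (𝓝[>] (slopeW lam n * (x - lam ^ n))) := by
  rw [tendsto_nhdsWithin_iff]
  constructor
  · apply Tendsto.mono_left _ nhdsWithin_le_nhds
    exact (continuous_const.mul (continuous_id.sub continuous_const)).tendsto x
  · filter_upwards [self_mem_nhdsWithin] with y hy
    have := slope_pos hs.h1 hs.h2 n
    have : slopeW lam n * (x - lam ^ n) < slopeW lam n * (y - lam ^ n) := by
      apply mul_lt_mul_of_pos_left _ (slope_pos hs.h1 hs.h2 n)
      have : x < y := hy
      linarith
    exact this

/-- Functional equation for the Stieltjes function on the half-open branch. -/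
lemma stF_feq_lt (hs : Setup lam b c S) {n : ℕ} (hn : 1 ≤ n) {x : ℝ}
    (hx1 : lam ^ n ≤ x) (hx2 : x < lam ^ (n-1)) :
    hs.stF x = S n + ccn b c n * hs.stF (slopeW lam n * (x - lam ^ n)) := by
  apply hs.stF_of_tendsto
  have h2 : Tendsto (fun y => S n + ccn b c n * gE lam b c S (slopeW lam n * (y - lam ^ n)))
      (𝓝[>] x) (𝓝 (S n + ccn b c n * hs.stF (slopeW lam n * (x - lam ^ n)))) := by
    apply Tendsto.const_add
    apply Tendsto.const_mul
    exact ((hs.gE_mono).tendsto_rightLim _).comp (hs.tendsto_Tm n x)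
  apply Tendsto.congr' _ h2
  filter_upwards [Ioo_mem_nhdsGT_of_mem ⟨le_refl x, hx2⟩] with y hy
  have hyW : y ∈ Wint lam n := ⟨lt_of_le_of_lt hx1 hy.1, hy.2.le⟩
  have hy01 : y ∈ Set.Ioc (0:ℝ) 1 := Wsub hs.h1 hs.h2 hn hyW
  have hnBy : nB lam y = n := nB_eq hs.h1 hs.h2 hn hyW
  have hFy : Flam lam y = slopeW lam n * (y - lam ^ n) := Flam_eq hs.h1 hs.h2 hn hyW
  have hF01 : Flam lam y ∈ Set.Ioc (0:ℝ) 1 := hs.Flam_mem01 hy01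
  rw [← hFy, hs.gE_eq hF01, hs.gE_eq hy01, ← hnBy]
  exact (hs.Gfun_feq y).symm

lemma stF_pow (hs : Setup lam b c S) : ∀ k : ℕ, hs.stF (lam ^ k) = S k := by
  intro k
  rcases Nat.eq_zero_or_pos k with rfl | hk
  · rw [pow_zero, hs.stF_ge_one le_rfl, hs.hS0]
  · have hlt : lam ^ k < lam ^ (k-1) :=
      pow_lt_pow_right_of_lt_one₀ hs.h1 hs.h2 (by omega)
    rw [hs.stF_feq_lt hk le_rfl hlt, sub_self, mul_zero, hs.stF_zero, mul_zero, add_zero]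

/-- Functional equation including the right endpoint. -/
lemma stF_feq (hs : Setup lam b c S) {n : ℕ} (hn : 1 ≤ n) {x : ℝ}
    (hx1 : lam ^ n ≤ x) (hx2 : x ≤ lam ^ (n-1)) :
    hs.stF x = S n + ccn b c n * hs.stF (slopeW lam n * (x - lam ^ n)) := by
  rcases lt_or_eq_of_le hx2 with hlt | heq
  · exact hs.stF_feq_lt hn hx1 hlt
  · subst heq
    rw [Tm_right hs.h1 hs.h2 hn, hs.stF_pow, hs.stF_pow]
    exact (hs.Sid n hn).symm

end Setup
end Stmt6
namespace Stmt6
namespace Setup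

variable {lam b c : ℝ} {S : ℕ → ℝ}

/-- The candidate conformal measure. -/
noncomputable def mC (hs : Setup lam b c S) : Measure ℝ := hs.stF.measure

lemma mC_Ioc (hs : Setup lam b c S) (a b' : ℝ) :
    hs.mC (Set.Ioc a b') = ENNReal.ofReal (hs.stF b' - hs.stF a) :=
  hs.stF.measure_Ioc a b'

lemma mC_univ (hs : Setup lam b c S) : hs.mC Set.univ = 1 := by
  have hbot : Tendsto (hs.stF : ℝ → ℝ) atBot (𝓝 0) := by
    apply Tendsto.congr' _ tendsto_const_nhds
    filter_upwards [eventually_le_atBot (-1 : ℝ)] with y hy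
    exact (hs.stF_neg (by linarith)).symm
  have htop : Tendsto (hs.stF : ℝ → ℝ) atTop (𝓝 1) := by
    apply Tendsto.congr' _ tendsto_const_nhds
    filter_upwards [eventually_ge_atTop (1 : ℝ)] with y hy
    exact (hs.stF_ge_one hy).symm
  rw [mC, hs.stF.measure_univ hbot htop]
  norm_num

lemma mC_prob (hs : Setup lam b c S) : IsProbabilityMeasure hs.mC := ⟨hs.mC_univ⟩

lemma mC_Ioc01 (hs : Setup lam b c S) : hs.mC (Set.Ioc 0 1) = 1 := by
  rw [hs.mC_Ioc, hs.stF_zero, hs.stF_ge_one le_rfl]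
  norm_num

lemma mC_conformal (hs : Setup lam b c S) {t p : ℝ}
    (hcc : ∀ n : ℕ, 1 ≤ n → Real.exp p * slopeW lam n ^ t * ccn b c n = 1) :
    IsConformal lam t p hs.mC := by
  intro n hn A hA hAW
  set sl := slopeW lam n with hsl
  have hslp : 0 < sl := slope_pos hs.h1 hs.h2 n
  have hslt : 0 < sl ^ t := Real.rpow_pos_of_pos hslp t
  have hep : 0 < Real.exp p * sl ^ t := by positivity
  -- rewrite the image as a preimage under the inverse affine map
  have hFA : Flam lam '' A = (fun y => y / sl + lam ^ n) ⁻¹' A := by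
    rw [Set.image_congr (fun x hx => Flam_eq hs.h1 hs.h2 hn (hAW hx))]
    exact image_eq_preimage hslp.ne' A
  have hU : Measurable (fun y : ℝ => y / sl + lam ^ n) := by
    exact (measurable_id.div_const sl).add_const (lam ^ n)
  have hmap : hs.mC (Flam lam '' A) = (hs.mC.map (fun y => y / sl + lam ^ n)) A := by
    rw [hFA, Measure.map_apply hU hA]
  -- the two measures agree on the branch
  haveI : IsProbabilityMeasure hs.mC := hs.mC_prob
  haveI : IsFiniteMeasure (hs.mC.map (fun y => y / sl + lam ^ n)) := by
    constructor
    rw [Measure.map_apply hU MeasurableSet.univ]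
    exact lt_of_le_of_lt (measure_mono (Set.subset_univ _)) (measure_lt_top _ _)
  have hrestr : (hs.mC.map (fun y => y / sl + lam ^ n)).restrict (Wint lam n) =
      (ENNReal.ofReal (Real.exp p * sl ^ t) • hs.mC).restrict (Wint lam n) := by
    apply Measure.ext_of_Ioc
    intro a' b' _
    rw [Measure.restrict_apply measurableSet_Ioc, Measure.restrict_apply measurableSet_Ioc]
    rw [Wint, Set.Ioc_inter_Ioc]
    set a2 := a' ⊔ lam ^ n with ha2
    set b2 := b' ⊓ lam ^ (n-1) with hb2
    rcases le_or_gt b2 a2 with hba | hab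
    · rw [Set.Ioc_eq_empty (not_lt.2 hba), measure_empty, measure_empty]
    · have ha2n : lam ^ n ≤ a2 := le_sup_right
      have hb2n : b2 ≤ lam ^ (n-1) := inf_le_right
      have ha2n' : a2 ≤ lam ^ (n-1) := hab.le.trans hb2n
      have hb2n' : lam ^ n ≤ b2 := ha2n.trans hab.le
      have hpre : (fun y : ℝ => y / sl + lam ^ n) ⁻¹' Set.Ioc a2 b2 =
          Set.Ioc (sl * (a2 - lam ^ n)) (sl * (b2 - lam ^ n)) := by
        rw [← image_eq_preimage hslp.ne', image_Tm_Ioc hslp]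
      rw [Measure.map_apply hU measurableSet_Ioc, hpre, hs.mC_Ioc, Measure.smul_apply,
        hs.mC_Ioc, smul_eq_mul]
      have hfa := hs.stF_feq hn ha2n ha2n'
      have hfb := hs.stF_feq hn hb2n' hb2n
      have hdiff : (hs.stF b2 : ℝ) - hs.stF a2 =
          ccn b c n * (hs.stF (sl * (b2 - lam ^ n)) - hs.stF (sl * (a2 - lam ^ n))) := by
        rw [hfa, hfb]; ring
      rw [hdiff, ← ENNReal.ofReal_mul hep.le]
      congr 1
      have hthis := hcc n hn
      rw [← hsl] at hthis
      linear_combination (-(((hs.stF : ℝ → ℝ) (sl * (b2 - lam ^ n)) -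
        (hs.stF : ℝ → ℝ) (sl * (a2 - lam ^ n))))) * hthis
  calc hs.mC (Flam lam '' A) = (hs.mC.map (fun y => y / sl + lam ^ n)) A := hmap
    _ = ((hs.mC.map (fun y => y / sl + lam ^ n)).restrict (Wint lam n)) A := by
        rw [Measure.restrict_apply hA, Set.inter_eq_self_of_subset_left hAW]
    _ = ((ENNReal.ofReal (Real.exp p * sl ^ t) • hs.mC).restrict (Wint lam n)) A := by
        rw [hrestr]
    _ = ENNReal.ofReal (Real.exp p * sl ^ t) * hs.mC A := by
        rw [Measure.restrict_apply hA, Set.inter_eq_self_of_subset_left hAW,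
          Measure.smul_apply, smul_eq_mul]

end Setup
end Stmt6
namespace Stmt6

lemma exists_conformal (lam t p : ℝ) (h1 : 0 < lam) (h2 : lam < 1) (ht : 0 < t)
    (S : ℕ → ℝ)
    (hS0 : S 0 = 1) (hS1 : S 1 = 1 - Real.exp (-p) * (1-lam)^t)
    (hrec : ∀ n, S (n+2) = S (n+1) - (Real.exp (-p) * (1-lam)^t * lam^t) * S n)
    (hSnn : ∀ n, 0 ≤ S n) (hSlim : Tendsto S atTop (𝓝 0))
    (hb1 : Real.exp (-p) * (1-lam)^t < 1) :
    ∃ m : Measure ℝ, IsProbabilityMeasure m ∧ m (Set.Ioc 0 1) = 1 ∧ IsConformal lam t p m := by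
  have h1l : (0:ℝ) < 1 - lam := by linarith
  have hθ0 : 0 < lam ^ t := Real.rpow_pos_of_pos h1 t
  have hθ1 : lam ^ t < 1 := Real.rpow_lt_one h1.le h2 ht
  have hL : 0 < (1-lam) ^ t := Real.rpow_pos_of_pos h1l t
  have hb0 : 0 < Real.exp (-p) * (1-lam)^t := by positivity
  have hc0 : 0 < Real.exp (-p) * (1-lam)^t * lam^t := by positivity
  have hc1 : Real.exp (-p) * (1-lam)^t * lam^t < 1 := by nlinarith
  have hs : Setup lam (Real.exp (-p) * (1-lam)^t) (Real.exp (-p) * (1-lam)^t * lam^t) S :=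
    ⟨h1, h2, hb0, hb1, hc0, hc1, hS0, hS1, hrec, hSnn, hSlim⟩
  refine ⟨hs.mC, hs.mC_prob, hs.mC_Ioc01, hs.mC_conformal ?_⟩
  intro n hn
  have hexp : Real.exp p * Real.exp (-p) = 1 := by
    rw [← Real.exp_add]; simp
  rcases eq_or_ne n 1 with rfl | hne
  · rw [ccn, if_pos rfl, slopeW, if_pos rfl, one_div, Real.inv_rpow h1l.le]
    field_simp
    linear_combination hexp
  · rw [ccn, if_neg hne, slopeW, if_neg hne, one_div,
      Real.inv_rpow (by positivity : (0:ℝ) ≤ lam * (1-lam)),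
      Real.mul_rpow h1.le h1l.le]
    field_simp
    linear_combination hexp

lemma exp_neg_log {X : ℝ} (hX : 0 < X) : Real.exp (-Real.log X) = X⁻¹ := by
  rw [Real.exp_neg, Real.exp_log hX]

lemma exists_A (lam t : ℝ) (h1 : 0 < lam) (h2 : lam < 1) (ht : 0 < t) :
    ∃ m : Measure ℝ, IsProbabilityMeasure m ∧ m (Set.Ioc 0 1) = 1 ∧
      IsConformal lam t (Real.log ((1-lam)^t / (1 - lam^t))) m := by
  have h1l : (0:ℝ) < 1 - lam := by linarith
  have hθ0 : 0 < lam ^ t := Real.rpow_pos_of_pos h1 t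
  have hθ1 : lam ^ t < 1 := Real.rpow_lt_one h1.le h2 ht
  have hL : 0 < (1-lam) ^ t := Real.rpow_pos_of_pos h1l t
  set p := Real.log ((1-lam)^t / (1 - lam^t)) with hp
  have hX : (0:ℝ) < (1-lam)^t / (1 - lam^t) := div_pos hL (by linarith)
  have key : Real.exp (-p) * (1-lam)^t = 1 - lam^t := by
    rw [hp, exp_neg_log hX]
    field_simp
  refine exists_conformal lam t p h1 h2 ht (fun n => (lam^t)^n) (pow_zero _) ?_ ?_
    (fun n => by positivity) (tendsto_pow_atTop_nhds_zero_of_lt_one hθ0.le hθ1) ?_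
  · simp only [key, pow_one]
    ring
  · intro n
    rw [key]
    ring
  · rw [key]; linarith

lemma exists_B (lam t : ℝ) (h1 : 0 < lam) (h2 : lam < 1) (ht : 0 < t)
    (hhalf : ¬ lam ^ t ≤ 1/2) :
    ∃ m : Measure ℝ, IsProbabilityMeasure m ∧ m (Set.Ioc 0 1) = 1 ∧
      IsConformal lam t (Real.log (4 * lam^t * (1-lam)^t)) m := by
  push_neg at hhalf
  have h1l : (0:ℝ) < 1 - lam := by linarith
  have hθ0 : 0 < lam ^ t := Real.rpow_pos_of_pos h1 t
  have hθ1 : lam ^ t < 1 := Real.rpow_lt_one h1.le h2 ht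
  have hL : 0 < (1-lam) ^ t := Real.rpow_pos_of_pos h1l t
  set θ := lam ^ t with hθ
  set p := Real.log (4 * θ * (1-lam)^t) with hp
  have hX : (0:ℝ) < 4 * θ * (1-lam)^t := by positivity
  have key : Real.exp (-p) * (1-lam)^t = 1/(4*θ) := by
    rw [hp, exp_neg_log hX]
    field_simp
  set B : ℝ := (2*θ - 1)/(2*θ) with hB
  have hB0 : 0 ≤ B := div_nonneg (by linarith) (by linarith)
  have h2n : ∀ n : ℕ, (0:ℝ) < 2 ^ n := fun n => by positivity
  refine exists_conformal lam t p h1 h2 ht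
    (fun n => (1 + B * n) / 2 ^ n) (by norm_num) ?_ ?_ ?_ ?_ ?_
  · rw [key, hB]
    field_simp
    ring
  · intro n
    have hc : Real.exp (-p) * (1-lam)^t * lam^t = 1/4 := by
      rw [← hθ, key]
      field_simp
    rw [hc, hB]
    have h2nn := (h2n n).ne'
    push_cast
    field_simp
    ring
  · intro n
    apply div_nonneg _ (h2n n).le
    have : (0:ℝ) ≤ B * n := mul_nonneg hB0 n.cast_nonneg
    linarith
  · have hrw : (fun n : ℕ => (1 + B * n) / 2 ^ n) =
        fun n : ℕ => (1/2 : ℝ) ^ n + B * ((n : ℝ) ^ 1 * (1/2 : ℝ) ^ n) := by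
      funext n
      rw [div_pow, one_pow, pow_one]
      field_simp
    rw [hrw]
    have hgeo : Tendsto (fun n : ℕ => (1/2 : ℝ) ^ n) atTop (𝓝 0) :=
      tendsto_pow_atTop_nhds_zero_of_lt_one (by norm_num) (by norm_num)
    have hng : Tendsto (fun n : ℕ => (n : ℝ) ^ 1 * (1/2 : ℝ) ^ n) atTop (𝓝 0) :=
      (summable_pow_mul_geometric_of_norm_lt_one 1
        (by rw [Real.norm_eq_abs, abs_of_pos (by norm_num : (0:ℝ) < 1/2)]; norm_num
          : ‖(1/2 : ℝ)‖ < 1)).tendsto_atTop_zero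
    have := hgeo.add (hng.const_mul B)
    simpa using this
  · rw [key, div_lt_one (by linarith)]
    linarith

end Stmt6

/-- Any `p` admitting a `(t,p)`-conformal probability measure satisfies
`p ≥ log (4 lam^t (1-lam)^t)`, and moreover `p ≥ log ψ(t)` when `lam^t ≤ 1/2`.
The infimum of such `p` is `log ψ(t)` if `lam^t ≤ 1/2` and `log (4 lam^t (1-lam)^t)`
if `lam^t ≥ 1/2`, and it is attained. -/
theorem stmt6 (lam t : ℝ) (h1 : 0 < lam) (h2 : lam < 1) (ht : 0 < t) :
    (∀ p : ℝ, ∀ m : Measure ℝ, IsProbabilityMeasure m → m (Set.Ioc 0 1) = 1 →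
      IsConformal lam t p m →
      Real.log (4 * lam^t * (1-lam)^t) ≤ p ∧
      (lam^t ≤ 1/2 → Real.log ((1-lam)^t / (1 - lam^t)) ≤ p)) ∧
    IsLeast {p : ℝ | ∃ m : Measure ℝ, IsProbabilityMeasure m ∧ m (Set.Ioc 0 1) = 1 ∧
        IsConformal lam t p m}
      (if lam^t ≤ 1/2 then Real.log ((1-lam)^t / (1 - lam^t))
       else Real.log (4 * lam^t * (1-lam)^t)) := by
  constructor
  · intro p m hm hm1 hc
    exact Stmt6.lower_bound lam t p h1 h2 ht m hm hm1 hc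
  · constructor
    · by_cases hhalf : lam ^ t ≤ 1/2
      · rw [if_pos hhalf]
        exact Stmt6.exists_A lam t h1 h2 ht
      · rw [if_neg hhalf]
        exact Stmt6.exists_B lam t h1 h2 ht hhalf
    · intro q hq
      obtain ⟨m, hm, hm1, hc⟩ := hq
      have h := Stmt6.lower_bound lam t q h1 h2 ht m hm hm1 hc
      by_cases hhalf : lam ^ t ≤ 1/2
      · rw [if_pos hhalf]
        exact h.2 hhalf
      · rw [if_neg hhalf]
        exact h.1
end

section
/- Let λ ∈ (0,1) and t > 0 with λ^t ≤ 1/2, and let m be the (t, log ψ(t))-conformal Borel probability measure on (0,1] with m(W_k) = (1−λ^t)·λ^{t(k−1)} for all k ≥ 1, where ψ(t) = (1−λ)^t/(1−λ^t). Then m is conservative for F_λ: every wandering Borel set has m-measure zero. -/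
open MeasureTheory Set Filter Topology

/-- denominator on branch k -/
noncomputable def dnm (lam : ℝ) (k : ℕ) : ℝ := if k = 1 then 1 - lam else lam * (1 - lam)

lemma dnm_pos {lam : ℝ} (h1 : 0 < lam) (h2 : lam < 1) (k : ℕ) : 0 < dnm lam k := by
  unfold dnm; split <;> [exact sub_pos.mpr h2; exact mul_pos h1 (sub_pos.mpr h2)]

lemma wint_subset {lam : ℝ} (h1 : 0 < lam) (h2 : lam < 1) (k : ℕ) :
    Wint lam k ⊆ Set.Ioc 0 1 := by
  intro x hx
  obtain ⟨hx1, hx2⟩ := hx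
  exact ⟨lt_trans (pow_pos h1 k) hx1, hx2.trans (pow_le_one₀ h1.le h2.le)⟩

lemma wint_disjoint {lam : ℝ} (h1 : 0 < lam) (h2 : lam < 1) {i j : ℕ} (hij : i ≠ j) :
    Disjoint (Wint lam i) (Wint lam j) := by
  wlog h : i < j generalizing i j
  · exact (this hij.symm (by omega)).symm
  rw [Set.disjoint_left]
  rintro x ⟨hx1, hx2⟩ ⟨hy1, hy2⟩
  have : lam ^ (j-1) ≤ lam ^ i := pow_le_pow_of_le_one h1.le h2.le (by omega)
  linarith

lemma mem_wint_sInf {lam : ℝ} (h1 : 0 < lam) (h2 : lam < 1) {k : ℕ} (hk : 1 ≤ k) {x : ℝ}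
    (hx : x ∈ Wint lam k) : sInf {n : ℕ | lam ^ n < x} = k := by
  obtain ⟨hx1, hx2⟩ := hx
  have hmem : k ∈ {n : ℕ | lam ^ n < x} := hx1
  refine le_antisymm (Nat.sInf_le hmem) ?_
  by_contra h
  push_neg at h
  have hin : sInf {n : ℕ | lam ^ n < x} ∈ {n : ℕ | lam ^ n < x} := Nat.sInf_mem ⟨k, hmem⟩
  have hle : lam ^ (k-1) ≤ lam ^ (sInf {n : ℕ | lam ^ n < x}) :=
    pow_le_pow_of_le_one h1.le h2.le (by omega)
  have hlt : lam ^ (sInf {n : ℕ | lam ^ n < x}) < x := hin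
  linarith

lemma flam_eq {lam : ℝ} (h1 : 0 < lam) (h2 : lam < 1) {k : ℕ} (hk : 1 ≤ k) {x : ℝ}
    (hx : x ∈ Wint lam k) : Flam lam x = (x - lam ^ k) / dnm lam k := by
  have hx01 : x ∈ Set.Ioc (0:ℝ) 1 := wint_subset h1 h2 k hx
  have hs := mem_wint_sInf h1 h2 hk hx
  unfold Flam dnm
  rw [if_pos ⟨hx01.1, hx01.2⟩, hs]
  by_cases hk1 : k = 1
  · subst hk1; simp [pow_one]
  · rw [if_neg hk1, if_neg hk1]

lemma exists_wint {lam : ℝ} (h1 : 0 < lam) (h2 : lam < 1) {x : ℝ}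
    (hx : x ∈ Set.Ioc (0:ℝ) 1) : ∃ k, 1 ≤ k ∧ x ∈ Wint lam k := by
  obtain ⟨n, hn⟩ := exists_pow_lt_of_lt_one hx.1 h2
  have hne : Set.Nonempty {n : ℕ | lam ^ n < x} := ⟨n, hn⟩
  set k := sInf {n : ℕ | lam ^ n < x} with hkdef
  have hkmem : lam ^ k < x := Nat.sInf_mem hne
  have hk1 : 1 ≤ k := by
    rcases Nat.eq_zero_or_pos k with h0 | h0
    · exfalso
      rw [h0, pow_zero] at hkmem
      exact absurd hx.2 (not_le.mpr hkmem)
    · exact h0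
  refine ⟨k, hk1, hkmem, ?_⟩
  have : k - 1 ∉ {n : ℕ | lam ^ n < x} := Nat.notMem_of_lt_sInf (by omega)
  exact le_of_not_gt this

/-- F(W_k) = (0, lam^(k-2)] -/
lemma flam_image {lam : ℝ} (h1 : 0 < lam) (h2 : lam < 1) {k : ℕ} (hk : 1 ≤ k) :
    Flam lam '' Wint lam k = Set.Ioc 0 (lam ^ (k - 2)) := by
  have hd := dnm_pos h1 h2 k
  have htop : (lam ^ (k-1) - lam ^ k) / dnm lam k = lam ^ (k-2) := by
    rcases k with _ | _ | j
    · omega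
    · simp only [dnm, if_pos rfl, pow_one, pow_zero, Nat.sub_self]
      norm_num
      exact ne_of_gt (by linarith : (0:ℝ) < 1 - lam)
    · unfold dnm
      rw [if_neg (by omega)]
      have : lam ^ (j+1) - lam ^ (j+2) = lam ^ j * (lam * (1-lam)) := by ring
      rw [show (j+2) - 1 = j+1 from rfl, show (j+2) - 2 = j from rfl, this,
        mul_div_assoc, div_self (by positivity), mul_one]
  ext y
  constructor
  · rintro ⟨x, hx, rfl⟩
    rw [flam_eq h1 h2 hk hx]
    constructor
    · exact div_pos (sub_pos.mpr hx.1) hd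
    · rw [← htop]
      gcongr
      exact hx.2
  · intro hy
    refine ⟨dnm lam k * y + lam ^ k, ⟨?_, ?_⟩, ?_⟩
    · nlinarith [hy.1]
    · have : y ≤ (lam ^ (k-1) - lam ^ k) / dnm lam k := htop ▸ hy.2
      rw [le_div_iff₀ hd] at this
      nlinarith
    · rw [flam_eq h1 h2 hk ⟨by nlinarith [hy.1], by
        have : y ≤ (lam ^ (k-1) - lam ^ k) / dnm lam k := htop ▸ hy.2
        rw [le_div_iff₀ hd] at this
        nlinarith⟩]
      field_simp
      ring

lemma flam_measurable {lam : ℝ} (h1 : 0 < lam) (h2 : lam < 1) : Measurable (Flam lam) := by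
  intro s hs
  have hset : Flam lam ⁻¹' s = (s ∩ (Set.Ioc 0 1)ᶜ) ∪
      ⋃ j : ℕ, ((fun x => (x - lam ^ (j+1)) / dnm lam (j+1)) ⁻¹' s ∩ Wint lam (j+1)) := by
    ext x
    by_cases hx : x ∈ Set.Ioc (0:ℝ) 1
    · obtain ⟨k, hk1, hxk⟩ := exists_wint h1 h2 hx
      simp only [Set.mem_preimage, Set.mem_union, Set.mem_inter_iff, Set.mem_compl_iff,
        Set.mem_iUnion]
      constructor
      · intro hFx
        right
        refine ⟨k - 1, ?_, ?_⟩
        · rw [show k - 1 + 1 = k by omega, ← flam_eq h1 h2 hk1 hxk]; exact hFx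
        · rw [show k - 1 + 1 = k by omega]; exact hxk
      · rintro (⟨_, hc⟩ | ⟨j, hj1, hj2⟩)
        · exact absurd hx hc
        · rw [flam_eq h1 h2 (by omega : 1 ≤ j+1) hj2]; exact hj1
    · have hFx : Flam lam x = x := by
        unfold Flam
        rw [if_neg (by simpa [Set.mem_Ioc] using hx)]
      simp only [Set.mem_preimage, hFx, Set.mem_union, Set.mem_inter_iff, Set.mem_compl_iff,
        Set.mem_iUnion]
      constructor
      · intro h; exact Or.inl ⟨h, hx⟩
      · rintro (⟨h, _⟩ | ⟨j, _, hj2⟩)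
        · exact h
        · exact absurd (wint_subset h1 h2 (j+1) hj2) hx
  rw [hset]
  refine (hs.inter measurableSet_Ioc.compl).union (MeasurableSet.iUnion fun j => ?_)
  exact (((measurable_id.sub_const _).div_const _) hs).inter measurableSet_Ioc

lemma flam_id_outside {lam x : ℝ} (hx : x ∉ Set.Ioc (0:ℝ) 1) (n : ℕ) :
    (Flam lam)^[n] x = x := by
  induction n with
  | zero => rfl
  | succ n ih =>
    rw [Function.iterate_succ_apply, show Flam lam x = x from by
      unfold Flam; rw [if_neg (by simpa [Set.mem_Ioc] using hx)]]
    exact ih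

noncomputable def gseq (q : ℝ) : ℕ → ℕ → ℝ
  | 0 => fun k => if k = 1 then 1 else 0
  | (n+1) => fun k =>
      (if k = 1 then 1 - q else q * (1 - q)) * ∑ j ∈ Finset.Icc (max (k-1) 1) (n+1), gseq q n j

noncomputable def Sg (q : ℝ) (n : ℕ) : ℝ := ∑ k ∈ Finset.Icc 1 (n+1), gseq q n k
noncomputable def Vg (q : ℝ) (n : ℕ) : ℝ :=
  ∑ k ∈ Finset.Icc 1 (n+1), ((k:ℝ) * ((1-q)⁻¹)^(k-1)) * gseq q n k

section GS
variable {q : ℝ}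

lemma gseq_succ_eq (n k : ℕ) : gseq q (n+1) k
    = (if k = 1 then 1 - q else q * (1 - q)) * ∑ j ∈ Finset.Icc (max (k-1) 1) (n+1), gseq q n j :=
  rfl

lemma gseq_nonneg (hq0 : 0 < q) (hq1 : q < 1) : ∀ n k, 0 ≤ gseq q n k := by
  intro n
  induction n with
  | zero => intro k; unfold gseq; split <;> norm_num
  | succ n ih =>
    intro k
    unfold gseq
    apply mul_nonneg
    · split <;> nlinarith
    · exact Finset.sum_nonneg fun j _ => ih j

lemma gseq_supp : ∀ n k, n + 1 < k → gseq q n k = 0 := by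
  intro n
  induction n with
  | zero => intro k hk; unfold gseq; rw [if_neg (by omega)]
  | succ n ih =>
    intro k hk
    unfold gseq
    rw [Finset.Icc_eq_empty (by omega : ¬(max (k-1) 1 ≤ n+1)), Finset.sum_empty, mul_zero]

/-- generic weighted-sum recursion -/
lemma gseq_succ_sum (w : ℕ → ℝ) (n : ℕ) :
    ∑ k ∈ Finset.Icc 1 (n+2), w k * gseq q (n+1) k
    = ∑ j ∈ Finset.Icc 1 (n+1),
        ((1-q) * w 1 + q*(1-q) * ∑ k ∈ Finset.Icc 2 (j+1), w k) * gseq q n j := by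
  have hsplit : Finset.Icc 1 (n+2) = insert 1 (Finset.Icc 2 (n+2)) := by
    ext x; simp; omega
  rw [hsplit, Finset.sum_insert (by simp)]
  have h1 : w 1 * gseq q (n+1) 1 = ∑ j ∈ Finset.Icc 1 (n+1), ((1-q) * w 1) * gseq q n j := by
    rw [gseq_succ_eq, if_pos rfl, show max (1-1) 1 = 1 from rfl]
    simp only [Finset.mul_sum]
    rw [← Finset.mul_sum]
    simp only [Finset.mul_sum]
    exact Finset.sum_congr rfl fun j _ => by ring
  have h2 : ∑ k ∈ Finset.Icc 2 (n+2), w k * gseq q (n+1) k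
      = ∑ j ∈ Finset.Icc 1 (n+1), (q*(1-q) * ∑ k ∈ Finset.Icc 2 (j+1), w k) * gseq q n j := by
    have e1 : ∀ k ∈ Finset.Icc 2 (n+2), w k * gseq q (n+1) k
        = ∑ j ∈ Finset.Icc (k-1) (n+1), (w k * (q*(1-q))) * gseq q n j := by
      intro k hk
      simp only [Finset.mem_Icc] at hk
      rw [gseq_succ_eq, if_neg (by omega), show max (k-1) 1 = k-1 by omega]
      simp only [Finset.mul_sum]
      rw [← Finset.mul_sum]
      simp only [Finset.mul_sum]
      exact Finset.sum_congr rfl fun j _ => by ring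
    rw [Finset.sum_congr rfl e1]
    rw [Finset.sum_comm' (t' := Finset.Icc 1 (n+1)) (s' := fun j => Finset.Icc 2 (j+1))
      (by intro k j; simp only [Finset.mem_Icc]; omega)]
    refine Finset.sum_congr rfl fun j _ => ?_
    simp only [Finset.sum_mul, Finset.mul_sum]
    exact Finset.sum_congr rfl fun k _ => by ring
  rw [h1, h2, ← Finset.sum_add_distrib]
  exact Finset.sum_congr rfl fun j _ => by ring

lemma perU (hq0 : 0 < q) (hq1 : q < 1) (m : ℕ) :
    (1-q) + q*(1-q) * ∑ k ∈ Finset.Icc 2 (m+2), ((1-q)⁻¹)^(k-1) = ((1-q)⁻¹)^m := by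
  have h1q : (1:ℝ) - q ≠ 0 := by linarith
  induction m with
  | zero =>
    rw [Finset.Icc_self, Finset.sum_singleton]
    rw [show 2 - 1 = 1 from rfl, pow_one, pow_zero, mul_assoc, mul_inv_cancel₀ h1q]; ring
  | succ m ih =>
    rw [show m+1+2 = (m+2)+1 from rfl, Finset.sum_Icc_succ_top (by omega), mul_add, ← add_assoc,
      ih, show m+2+1-1 = m+2 from rfl]
    simp only [inv_pow]
    field_simp
    ring

lemma perV (hq0 : 0 < q) (hq1 : q < 1) (m : ℕ) :
    (1-q) + q*(1-q) * ∑ k ∈ Finset.Icc 2 (m+2), ((k:ℝ) * ((1-q)⁻¹)^(k-1))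
    = ((m:ℝ)+1) * ((1-q)⁻¹)^m - (1-2*q)/q * ((1-q)⁻¹)^m + (1-q)^2/q := by
  have h1q : (1:ℝ) - q ≠ 0 := by linarith
  have hq : q ≠ 0 := ne_of_gt hq0
  induction m with
  | zero =>
    rw [Finset.Icc_self, Finset.sum_singleton]
    push_cast
    field_simp
    ring
  | succ m ih =>
    rw [show m+1+2 = (m+2)+1 from rfl, Finset.sum_Icc_succ_top (by omega), mul_add, ← add_assoc,
      ih, show m+2+1-1 = m+2 from rfl]
    push_cast
    simp only [inv_pow]
    field_simp
    ring

lemma Ug_one (hq0 : 0 < q) (hq1 : q < 1) :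
    ∀ n, ∑ k ∈ Finset.Icc 1 (n+1), ((1-q)⁻¹)^(k-1) * gseq q n k = 1 := by
  intro n
  induction n with
  | zero => simp [gseq]
  | succ n ih =>
    rw [gseq_succ_sum (fun k => ((1-q)⁻¹)^(k-1)) n]
    have hcoef : ∀ j ∈ Finset.Icc 1 (n+1),
        ((1-q) * ((1-q)⁻¹)^(1-1) + q*(1-q) * ∑ k ∈ Finset.Icc 2 (j+1), ((1-q)⁻¹)^(k-1))
          * gseq q n j
        = ((1-q)⁻¹)^(j-1) * gseq q n j := by
      intro j hj
      simp only [Finset.mem_Icc] at hj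
      obtain ⟨i, rfl⟩ : ∃ i, j = i + 1 := ⟨j-1, by omega⟩
      rw [show (1:ℕ)-1 = 0 from rfl, pow_zero, mul_one, show i+1+1 = i+2 from rfl,
        perU hq0 hq1 i, show i+1-1 = i from rfl]
    rw [Finset.sum_congr rfl hcoef, ih]

lemma Vg_succ (hq0 : 0 < q) (hq1 : q < 1) (n : ℕ) :
    Vg q (n+1) = Vg q n - (1-2*q)/q + (1-q)^2/q * Sg q n := by
  unfold Vg Sg
  rw [gseq_succ_sum (fun k => (k:ℝ) * ((1-q)⁻¹)^(k-1)) n]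
  simp only [Nat.cast_one]
  have hcoef : ∀ j ∈ Finset.Icc 1 (n+1),
      ((1-q) * ((1:ℝ) * ((1-q)⁻¹)^(1-1)) + q*(1-q) * ∑ k ∈ Finset.Icc 2 (j+1),
        ((k:ℝ) * ((1-q)⁻¹)^(k-1))) * gseq q n j
      = ((j:ℝ) * ((1-q)⁻¹)^(j-1)) * gseq q n j
        - ((1-2*q)/q) * (((1-q)⁻¹)^(j-1) * gseq q n j) + ((1-q)^2/q) * gseq q n j := by
    intro j hj
    simp only [Finset.mem_Icc] at hj
    obtain ⟨i, rfl⟩ : ∃ i, j = i + 1 := ⟨j-1, by omega⟩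
    rw [show (1:ℕ)-1 = 0 from rfl, pow_zero, mul_one, mul_one, show i+1+1 = i+2 from rfl,
      perV hq0 hq1 i, show i+1-1 = i from rfl]
    push_cast
    ring
  rw [Finset.sum_congr rfl hcoef]
  rw [Finset.sum_add_distrib, Finset.sum_sub_distrib, ← Finset.mul_sum, ← Finset.mul_sum,
    Ug_one hq0 hq1 n]
  ring

lemma Vg_zero : Vg q 0 = 1 := by simp [Vg, gseq]

lemma Vg_formula (hq0 : 0 < q) (hq1 : q < 1) (N : ℕ) :
    Vg q N = 1 + (1-q)^2/q * ∑ n ∈ Finset.range N, Sg q n - (1-2*q)/q * N := by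
  induction N with
  | zero => simp [Vg_zero]
  | succ N ih =>
    rw [Vg_succ hq0 hq1 N, ih, Finset.sum_range_succ]
    push_cast
    ring

lemma Sg_nonneg (hq0 : 0 < q) (hq1 : q < 1) (n : ℕ) : 0 ≤ Sg q n :=
  Finset.sum_nonneg fun k _ => gseq_nonneg hq0 hq1 n k

/-- the key divergence lemma -/
lemma Sg_div (hq0 : 0 < q) (hq2 : q ≤ 1/2) (C' : ℝ) :
    ∃ N : ℕ, C' < ∑ n ∈ Finset.range N, Sg q n := by
  have hq1 : q < 1 := by linarith
  have h1q0 : (0:ℝ) < 1 - q := by linarith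
  have h1q1 : (1:ℝ) - q ≤ 1 := by linarith
  by_contra hcon
  push_neg at hcon
  have hC0 : 0 ≤ C' := by simpa using hcon 0
  set C : ℝ := 1 + (1-q)^2/q * C' with hCdef
  have hC1 : 1 ≤ C := by
    rw [hCdef]
    have : 0 ≤ (1-q)^2/q * C' := by positivity
    linarith
  have hVle : ∀ N, Vg q N ≤ C := by
    intro N
    rw [Vg_formula hq0 hq1 N, hCdef]
    have h1 : (1-q)^2/q * ∑ n ∈ Finset.range N, Sg q n ≤ (1-q)^2/q * C' := by
      exact mul_le_mul_of_nonneg_left (hcon N) (div_nonneg (sq_nonneg _) hq0.le)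
    have h2 : 0 ≤ (1-2*q)/q * N := by
      apply mul_nonneg (div_nonneg (by linarith) hq0.le) (Nat.cast_nonneg N)
    linarith
  set K : ℕ := max 1 ⌈2*C⌉₊ with hKdef
  have hK1 : 1 ≤ K := le_max_left _ _
  have hKC : 2*C ≤ (K:ℝ) := by
    calc 2*C ≤ (⌈2*C⌉₊:ℝ) := Nat.le_ceil _
    _ ≤ (K:ℝ) := by exact_mod_cast Nat.cast_le.mpr (le_max_right _ _)
  have hKpos : (0:ℝ) < K := by exact_mod_cast hK1
  set dl : ℝ := (1-q)^(K-1) * (1/2) with hdldef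
  have hdl0 : 0 < dl := mul_pos (pow_pos h1q0 _) (by norm_num)
  -- key claim: every Sg q n is at least dl
  have hSg : ∀ n, dl ≤ Sg q n := by
    intro n
    set M : ℕ := max (n+1) K with hMdef
    have hsub : Finset.Icc 1 (n+1) ⊆ Finset.Icc 1 M := by
      apply Finset.Icc_subset_Icc_right (le_max_left _ _)
    have hzero : ∀ w : ℕ → ℝ, ∀ k ∈ Finset.Icc 1 M, k ∉ Finset.Icc 1 (n+1) →
        w k * gseq q n k = 0 := by
      intro w k hk hnk
      simp only [Finset.mem_Icc] at hk hnk
      rw [gseq_supp n k (by omega), mul_zero]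
    have e1 : ∑ k ∈ Finset.Icc 1 M, ((1-q)⁻¹)^(k-1) * gseq q n k = 1 := by
      rw [← Finset.sum_subset hsub (hzero _), Ug_one hq0 hq1 n]
    have e2 : ∑ k ∈ Finset.Icc 1 M, ((k:ℝ) * ((1-q)⁻¹)^(k-1)) * gseq q n k ≤ C := by
      rw [← Finset.sum_subset hsub (hzero _)]
      exact hVle n
    have hterm_nonneg : ∀ k, 0 ≤ ((1-q)⁻¹)^(k-1) * gseq q n k := by
      intro k
      exact mul_nonneg (by positivity) (gseq_nonneg hq0 hq1 n k)
    -- split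
    set s1 := ∑ k ∈ (Finset.Icc 1 M).filter (· ≤ K), ((1-q)⁻¹)^(k-1) * gseq q n k with hs1
    set s2 := ∑ k ∈ (Finset.Icc 1 M).filter (¬ · ≤ K), ((1-q)⁻¹)^(k-1) * gseq q n k with hs2
    have hsplit : s1 + s2 = 1 := by
      rw [hs1, hs2, Finset.sum_filter_add_sum_filter_not, e1]
    have hs2le : (K:ℝ) * s2 ≤ C := by
      rw [hs2, Finset.mul_sum]
      calc ∑ k ∈ (Finset.Icc 1 M).filter (¬ · ≤ K), (K:ℝ) * (((1-q)⁻¹)^(k-1) * gseq q n k)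
          ≤ ∑ k ∈ (Finset.Icc 1 M).filter (¬ · ≤ K), ((k:ℝ) * ((1-q)⁻¹)^(k-1)) * gseq q n k := by
            apply Finset.sum_le_sum
            intro k hk
            simp only [Finset.mem_filter] at hk
            have : (K:ℝ) ≤ k := by
              have := hk.2
              simp only [not_le] at this
              exact_mod_cast le_of_lt this
            rw [← mul_assoc]
            apply mul_le_mul_of_nonneg_right _ (gseq_nonneg hq0 hq1 n k)
            apply mul_le_mul_of_nonneg_right this (by positivity)
        _ ≤ ∑ k ∈ Finset.Icc 1 M, ((k:ℝ) * ((1-q)⁻¹)^(k-1)) * gseq q n k := by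
            apply Finset.sum_le_sum_of_subset_of_nonneg (Finset.filter_subset _ _)
            intro k _ _
            exact mul_nonneg (mul_nonneg (Nat.cast_nonneg k) (by positivity))
              (gseq_nonneg hq0 hq1 n k)
        _ ≤ C := e2
    have hs2half : s2 ≤ 1/2 := by
      rw [← mul_le_mul_iff_right₀ hKpos] at *
      nlinarith [hs2le, hKC, hC1, hKpos]
    have hs1half : 1/2 ≤ s1 := by linarith
    -- now bound Sg from below
    have hSgM : Sg q n = ∑ k ∈ Finset.Icc 1 M, gseq q n k := by
      unfold Sg
      exact Finset.sum_subset hsub (fun k hk hnk => by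
        simp only [Finset.mem_Icc] at hk hnk
        exact gseq_supp n k (by omega))
    rw [hSgM]
    calc dl = (1-q)^(K-1) * (1/2) := hdldef
      _ ≤ (1-q)^(K-1) * s1 := by
          apply mul_le_mul_of_nonneg_left hs1half (by positivity)
      _ ≤ ∑ k ∈ (Finset.Icc 1 M).filter (· ≤ K), gseq q n k := by
          rw [hs1, Finset.mul_sum]
          apply Finset.sum_le_sum
          intro k hk
          simp only [Finset.mem_filter, Finset.mem_Icc] at hk
          have hkK : k - 1 ≤ K - 1 := by omega
          have hpow : (1-q)^(K-1) * ((1-q)⁻¹)^(k-1) ≤ 1 := by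
            have h1 : (1-q)^(K-1) ≤ (1-q)^(k-1) := pow_le_pow_of_le_one h1q0.le h1q1 hkK
            have h2 : (1-q)^(k-1) * ((1-q)⁻¹)^(k-1) = 1 := by
              rw [← mul_pow, mul_inv_cancel₀ (ne_of_gt h1q0), one_pow]
            have h3 : (0:ℝ) ≤ ((1-q)⁻¹)^(k-1) := by positivity
            nlinarith
          calc (1-q)^(K-1) * (((1-q)⁻¹)^(k-1) * gseq q n k)
              = ((1-q)^(K-1) * ((1-q)⁻¹)^(k-1)) * gseq q n k := by ring
            _ ≤ 1 * gseq q n k := by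
                apply mul_le_mul_of_nonneg_right hpow (gseq_nonneg hq0 hq1 n k)
            _ = gseq q n k := one_mul _
      _ ≤ ∑ k ∈ Finset.Icc 1 M, gseq q n k := by
          apply Finset.sum_le_sum_of_subset_of_nonneg (Finset.filter_subset _ _)
          intro k _ _
          exact gseq_nonneg hq0 hq1 n k
  -- conclude
  obtain ⟨N, hN⟩ := exists_nat_gt (C' / dl)
  have hlow : (N:ℝ) * dl ≤ ∑ n ∈ Finset.range N, Sg q n := by
    have h0 : ∑ _n ∈ Finset.range N, dl ≤ ∑ n ∈ Finset.range N, Sg q n :=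
      Finset.sum_le_sum fun n _ => hSg n
    rwa [Finset.sum_const, Finset.card_range, nsmul_eq_mul] at h0
  have : C' < (N:ℝ) * dl := by
    rw [div_lt_iff₀ hdl0] at hN
    linarith
  linarith [hcon N]

end GS


section MeasurePart

open Finset in
lemma branch_measure {lam t : ℝ} (h1 : 0 < lam) (h2 : lam < 1) (ht : 0 < t)
    (m : Measure ℝ)
    (hconf : IsConformal lam t (Real.log ((1-lam)^t / (1 - lam^t))) m)
    {k : ℕ} (hk : 1 ≤ k) {B : Set ℝ} (hB : MeasurableSet B) :
    m (Flam lam ⁻¹' B ∩ Wint lam k)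
      = ENNReal.ofReal (if k = 1 then 1 - lam^t else lam^t * (1 - lam^t))
        * m (B ∩ Set.Ioc 0 (lam ^ (k-2))) := by
  have hq0 : 0 < lam ^ t := Real.rpow_pos_of_pos h1 t
  have hq1 : lam ^ t < 1 := Real.rpow_lt_one h1.le h2 ht
  have h1l : (0:ℝ) < 1 - lam := by linarith
  have hψ : (0:ℝ) < (1-lam)^t / (1 - lam^t) :=
    div_pos (Real.rpow_pos_of_pos h1l t) (by linarith)
  have hpow : (0:ℝ) < (1-lam)^t := Real.rpow_pos_of_pos h1l t
  have hAm : MeasurableSet (Flam lam ⁻¹' B ∩ Wint lam k) :=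
    ((flam_measurable h1 h2) hB).inter measurableSet_Ioc
  have h := hconf k hk _ hAm Set.inter_subset_right
  rw [Set.image_preimage_inter, flam_image h1 h2 hk] at h
  have hγ : (0:ℝ) ≤ (if k = 1 then 1 - lam^t else lam^t * (1 - lam^t)) := by
    split <;> nlinarith
  have hc : (if k = 1 then 1 - lam^t else lam^t * (1 - lam^t))
      * (Real.exp (Real.log ((1-lam)^t / (1 - lam^t))) * slopeW lam k ^ t) = 1 := by
    rw [Real.exp_log hψ]
    unfold slopeW
    by_cases hk1 : k = 1
    · rw [if_pos hk1, if_pos hk1, one_div, Real.inv_rpow h1l.le]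
      field_simp
      exact div_self (ne_of_gt (by linarith : (0:ℝ) < 1 - lam ^ t))
    · rw [if_neg hk1, if_neg hk1, one_div, Real.inv_rpow (by nlinarith),
        Real.mul_rpow h1.le h1l.le]
      field_simp
      exact div_self (ne_of_gt (by linarith : (0:ℝ) < 1 - lam ^ t))
  rw [h, ← mul_assoc, ← ENNReal.ofReal_mul hγ, hc, ENNReal.ofReal_one, one_mul]

open Finset in
lemma tail_sum_le {lam : ℝ} (h1 : 0 < lam) (h2 : lam < 1) (m : Measure ℝ)
    {B : Set ℝ} (hB : MeasurableSet B) {k : ℕ} (hk : 1 ≤ k) (N : ℕ) :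
    ∑ j ∈ Finset.Icc (max (k-1) 1) N, m (B ∩ Wint lam j)
      ≤ m (B ∩ Set.Ioc 0 (lam ^ (k-2))) := by
  have hd : (↑(Finset.Icc (max (k-1) 1) N) : Set ℕ).PairwiseDisjoint
      (fun j => B ∩ Wint lam j) := by
    intro i _ j _ hij
    exact (wint_disjoint h1 h2 hij).mono Set.inter_subset_right Set.inter_subset_right
  have hmeas : ∀ j ∈ Finset.Icc (max (k-1) 1) N, MeasurableSet (B ∩ Wint lam j) :=
    fun j _ => hB.inter measurableSet_Ioc
  rw [← measure_biUnion_finset hd hmeas]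
  apply measure_mono
  intro x hx
  simp only [Set.mem_iUnion] at hx
  obtain ⟨j, hj, hxB, hxW⟩ := hx
  simp only [Finset.mem_Icc] at hj
  refine ⟨hxB, lt_trans (pow_pos h1 j) hxW.1, hxW.2.trans ?_⟩
  exact pow_le_pow_of_le_one h1.le h2.le (by omega)

lemma preimage_iterate_subset {lam : ℝ} {A : Set ℝ} (hA : A ⊆ Set.Ioc 0 1) (n : ℕ) :
    (Flam lam)^[n] ⁻¹' A ⊆ Set.Ioc 0 1 := by
  intro x hx
  by_contra hxn
  have := flam_id_outside (lam := lam) hxn n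
  rw [Set.mem_preimage, this] at hx
  exact hxn (hA hx)

end MeasurePart

/-- For `lam^t ≤ 1/2`, the `(t, log ψ(t))`-conformal probability measure
with `m(W k) = (1-lam^t) lam^(t(k-1))` is conservative: every wandering Borel set has
`m`-measure zero. -/
theorem stmt7 (lam t : ℝ) (h1 : 0 < lam) (h2 : lam < 1) (ht : 0 < t)
    (hl : lam ^ t ≤ 1/2)
    (m : Measure ℝ) (hm : IsProbabilityMeasure m) (hm1 : m (Set.Ioc 0 1) = 1)
    (hconf : IsConformal lam t (Real.log ((1-lam)^t / (1 - lam^t))) m)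
    (hmass : ∀ k : ℕ, 1 ≤ k → m (Wint lam k) =
      ENNReal.ofReal ((1 - lam^t) * lam ^ (t * ((k:ℝ) - 1)))) :
    ∀ A : Set ℝ, MeasurableSet A → A ⊆ Set.Ioc 0 1 → IsWanderingSet lam A →
      m A = 0 := by
  intro A hA hA01 hW
  by_contra hA0
  have hq0 : 0 < lam ^ t := Real.rpow_pos_of_pos h1 t
  have hq1 : lam ^ t < 1 := Real.rpow_lt_one h1.le h2 ht
  have hmeasF : Measurable (Flam lam) := flam_measurable h1 h2
  set B : ℕ → Set ℝ := fun n => (Flam lam)^[n+1] ⁻¹' A with hBdef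
  have hBm : ∀ n, MeasurableSet (B n) := fun n => (hmeasF.iterate (n+1)) hA
  have hBsucc : ∀ n, B (n+1) = Flam lam ⁻¹' B n := by
    intro n
    rw [hBdef]
    simp only
    rw [Function.iterate_succ (Flam lam) (n+1), Set.preimage_comp]
  set eps : ENNReal := ENNReal.ofReal (1 - lam ^ t) * m A with hepsdef
  have heps0 : eps ≠ 0 := by
    apply mul_ne_zero _ hA0
    simp only [ne_eq, ENNReal.ofReal_eq_zero, not_le]
    linarith
  -- the key induction
  have hkey : ∀ n, ∀ k, 1 ≤ k →
      ENNReal.ofReal (gseq (lam ^ t) n k) * eps ≤ m (B n ∩ Wint lam k) := by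
    intro n
    induction n with
    | zero =>
      intro k hk
      by_cases hk1 : k = 1
      · subst hk1
        have hB0 : B 0 = Flam lam ⁻¹' A := by
          rw [hBdef]
          simp only [zero_add, Function.iterate_one]
        have hb := branch_measure h1 h2 ht m hconf (le_refl 1) hA
        rw [hB0, hb, if_pos rfl, show (1:ℕ)-2 = 0 from rfl, pow_zero,
          Set.inter_eq_left.mpr hA01]
        have hg : gseq (lam ^ t) 0 1 = 1 := by unfold gseq; rw [if_pos rfl]
        rw [hg, ENNReal.ofReal_one, one_mul, hepsdef]
      · have hg : gseq (lam ^ t) 0 k = 0 := by unfold gseq; rw [if_neg hk1]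
        rw [hg, ENNReal.ofReal_zero, zero_mul]
        exact zero_le
    | succ n ih =>
      intro k hk
      have hstep : m (B (n+1) ∩ Wint lam k)
          = ENNReal.ofReal (if k = 1 then 1 - lam ^ t else lam ^ t * (1 - lam ^ t))
            * m (B n ∩ Set.Ioc 0 (lam ^ (k-2))) := by
        rw [hBsucc n]
        exact branch_measure h1 h2 ht m hconf hk (hBm n)
      rw [hstep]
      have htail := tail_sum_le h1 h2 m (hBm n) hk (n+1)
      have hIH : ∑ j ∈ Finset.Icc (max (k-1) 1) (n+1),
            ENNReal.ofReal (gseq (lam ^ t) n j) * eps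
          ≤ ∑ j ∈ Finset.Icc (max (k-1) 1) (n+1), m (B n ∩ Wint lam j) := by
        apply Finset.sum_le_sum
        intro j hj
        simp only [Finset.mem_Icc] at hj
        exact ih j (by omega)
      have hγ : (0:ℝ) ≤ (if k = 1 then 1 - lam ^ t else lam ^ t * (1 - lam ^ t)) := by
        split <;> nlinarith
      have hgnn : ∀ j ∈ Finset.Icc (max (k-1) 1) (n+1), 0 ≤ gseq (lam ^ t) n j :=
        fun j _ => gseq_nonneg hq0 hq1 n j
      calc ENNReal.ofReal (gseq (lam ^ t) (n+1) k) * eps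
          = ENNReal.ofReal ((if k = 1 then 1 - lam ^ t else lam ^ t * (1 - lam ^ t))
              * ∑ j ∈ Finset.Icc (max (k-1) 1) (n+1), gseq (lam ^ t) n j) * eps := by
            rw [gseq_succ_eq]
        _ = ENNReal.ofReal (if k = 1 then 1 - lam ^ t else lam ^ t * (1 - lam ^ t))
              * (∑ j ∈ Finset.Icc (max (k-1) 1) (n+1),
                  ENNReal.ofReal (gseq (lam ^ t) n j)) * eps := by
            rw [ENNReal.ofReal_mul hγ, ENNReal.ofReal_sum_of_nonneg hgnn]
        _ = ENNReal.ofReal (if k = 1 then 1 - lam ^ t else lam ^ t * (1 - lam ^ t))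
              * ∑ j ∈ Finset.Icc (max (k-1) 1) (n+1),
                  ENNReal.ofReal (gseq (lam ^ t) n j) * eps := by
            rw [mul_assoc, Finset.sum_mul]
        _ ≤ ENNReal.ofReal (if k = 1 then 1 - lam ^ t else lam ^ t * (1 - lam ^ t))
              * ∑ j ∈ Finset.Icc (max (k-1) 1) (n+1), m (B n ∩ Wint lam j) :=
            mul_le_mul_right hIH _
        _ ≤ ENNReal.ofReal (if k = 1 then 1 - lam ^ t else lam ^ t * (1 - lam ^ t))
              * m (B n ∩ Set.Ioc 0 (lam ^ (k-2))) := mul_le_mul_right htail _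
  -- sum over k
  have hsum : ∀ n, ENNReal.ofReal (Sg (lam ^ t) n) * eps ≤ m (B n) := by
    intro n
    have h1' : ∑ k ∈ Finset.Icc 1 (n+1), ENNReal.ofReal (gseq (lam ^ t) n k) * eps
        ≤ ∑ k ∈ Finset.Icc 1 (n+1), m (B n ∩ Wint lam k) := by
      apply Finset.sum_le_sum
      intro k hk
      simp only [Finset.mem_Icc] at hk
      exact hkey n k (by omega)
    have h2' : ∑ k ∈ Finset.Icc 1 (n+1), m (B n ∩ Wint lam k) ≤ m (B n) := by
      have hd : (↑(Finset.Icc 1 (n+1)) : Set ℕ).PairwiseDisjoint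
          (fun k => B n ∩ Wint lam k) := by
        intro i _ j _ hij
        exact (wint_disjoint h1 h2 hij).mono Set.inter_subset_right Set.inter_subset_right
      rw [← measure_biUnion_finset hd (fun k _ => (hBm n).inter measurableSet_Ioc)]
      apply measure_mono
      intro x hx
      simp only [Set.mem_iUnion] at hx
      obtain ⟨k, _, hk2, _⟩ := hx
      exact hk2
    calc ENNReal.ofReal (Sg (lam ^ t) n) * eps
        = ∑ k ∈ Finset.Icc 1 (n+1), ENNReal.ofReal (gseq (lam ^ t) n k) * eps := by
          rw [Sg, ENNReal.ofReal_sum_of_nonneg (fun k _ => gseq_nonneg hq0 hq1 n k),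
            Finset.sum_mul]
      _ ≤ m (B n) := le_trans h1' h2'
  -- wandering: the B n are pairwise disjoint and total mass ≤ 1
  have htot : ∀ N : ℕ, ∑ n ∈ Finset.range N, m (B n) ≤ 1 := by
    intro N
    have hd : (↑(Finset.range N) : Set ℕ).PairwiseDisjoint B := by
      intro i _ j _ hij
      exact hW (show i+1 ≠ j+1 by omega)
    rw [← measure_biUnion_finset hd (fun n _ => hBm n)]
    calc m (⋃ n ∈ Finset.range N, B n) ≤ m Set.univ := measure_mono (Set.subset_univ _)
      _ = 1 := measure_univ
  -- convert to a real bound and contradict divergence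
  have hC : ∀ N : ℕ, ∑ n ∈ Finset.range N, Sg (lam ^ t) n ≤ (eps⁻¹).toReal := by
    intro N
    have hb : ENNReal.ofReal (∑ n ∈ Finset.range N, Sg (lam ^ t) n) * eps ≤ 1 := by
      rw [ENNReal.ofReal_sum_of_nonneg (fun n _ => Sg_nonneg hq0 hq1 n), Finset.sum_mul]
      exact le_trans (Finset.sum_le_sum (fun n _ => hsum n)) (htot N)
    have hb2 : ENNReal.ofReal (∑ n ∈ Finset.range N, Sg (lam ^ t) n) ≤ eps⁻¹ := by
      rw [← ENNReal.le_div_iff_mul_le (Or.inl heps0) (Or.inr ENNReal.one_ne_top)] at hb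
      simpa [one_div] using hb
    have hb3 := ENNReal.toReal_mono (ENNReal.inv_ne_top.mpr heps0) hb2
    rwa [ENNReal.toReal_ofReal (Finset.sum_nonneg (fun n _ => Sg_nonneg hq0 hq1 n))] at hb3
  obtain ⟨N, hN⟩ := Sg_div hq0 hl (eps⁻¹).toReal
  exact absurd (hC N) (not_le.mpr hN)
end

section
/- Let λ ∈ (0,1), t > 0 and p ∈ ℝ, and let m be a (t,p)-conformal Borel probability measure on (0,1]. If λ^t > 1/2, or if λ^t ≤ 1/2 and p > log ψ(t) where ψ(t) = (1−λ)^t/(1−λ^t), then m is dissipative: for m-almost every x ∈ (0,1], F_λ^n(x) → 0 as n → ∞. -/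
open MeasureTheory Set Filter Topology

-- auxiliary defs
noncomputable def gmap (lam : ℝ) (k : ℕ) (x : ℝ) : ℝ :=
  if k = 0 then (x - lam) / (1 - lam) else (x - lam ^ (k+1)) / (lam * (1 - lam))

noncomputable def tmap (lam : ℝ) (k : ℕ) (y : ℝ) : ℝ :=
  if k = 0 then lam + (1 - lam) * y else lam ^ (k+1) + lam * (1 - lam) * y

noncomputable def imI (lam : ℝ) (k : ℕ) : Set ℝ := Set.Ioc 0 (lam ^ (k - 1))

section Branch

variable {lam : ℝ} (h1 : 0 < lam) (h2 : lam < 1)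

lemma Wint_succ (k : ℕ) : Wint lam (k+1) = Set.Ioc (lam ^ (k+1)) (lam ^ k) := by
  simp [Wint]

include h1 h2

lemma pow_pred_mul (k : ℕ) (hk : 0 < k) : lam * (1 - lam) * lam ^ (k-1) = lam ^ k - lam ^ (k+1) := by
  have hkk : k - 1 + 1 = k := by omega
  have h' : lam * lam ^ (k-1) = lam ^ k := by rw [← pow_succ', hkk]
  have h'' : lam * (lam * lam ^ (k-1)) = lam ^ (k+1) := by
    rw [h', ← pow_succ']
  nlinarith [h', h'']

lemma W_subset_Ioc {k : ℕ} : Wint lam (k+1) ⊆ Set.Ioc 0 1 := by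
  rw [Wint_succ]
  intro x hx
  exact ⟨lt_of_le_of_lt (by positivity) hx.1,
    hx.2.trans (pow_le_one₀ h1.le h2.le)⟩

lemma sInf_branch {k : ℕ} {x : ℝ} (hx : x ∈ Wint lam (k+1)) :
    sInf {n : ℕ | lam ^ n < x} = k + 1 := by
  rw [Wint_succ] at hx
  have hmem : k + 1 ∈ {n : ℕ | lam ^ n < x} := hx.1
  refine le_antisymm (Nat.sInf_le hmem) ?_
  by_contra hlt
  push_neg at hlt
  have hin : sInf {n : ℕ | lam ^ n < x} ∈ {n : ℕ | lam ^ n < x} :=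
    Nat.sInf_mem ⟨k+1, hmem⟩
  have hle : sInf {n : ℕ | lam ^ n < x} ≤ k := by omega
  have hpow : lam ^ k ≤ lam ^ (sInf {n : ℕ | lam ^ n < x}) :=
    pow_le_pow_of_le_one h1.le h2.le hle
  exact absurd (lt_of_le_of_lt (hx.2.trans hpow) hin) (lt_irrefl _)

lemma Flam_branch {k : ℕ} {x : ℝ} (hx : x ∈ Wint lam (k+1)) :
    Flam lam x = gmap lam k x := by
  have hx01 := W_subset_Ioc h1 h2 hx
  have hs := sInf_branch h1 h2 hx
  rw [Flam, if_pos ⟨hx01.1, hx01.2⟩, hs]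
  rcases Nat.eq_zero_or_pos k with hk | hk
  · subst hk
    rw [if_pos rfl, gmap, if_pos rfl]
  · rw [if_neg (by omega), gmap, if_neg (by omega)]

lemma gmap_mem {k : ℕ} {x : ℝ} (hx : x ∈ Wint lam (k+1)) :
    gmap lam k x ∈ imI lam k := by
  rw [Wint_succ] at hx
  have h1l : 0 < 1 - lam := by linarith
  rcases Nat.eq_zero_or_pos k with hk | hk
  · subst hk
    rw [gmap, if_pos rfl]
    have hx1 : lam < x := by simpa using hx.1
    have hx2 : x ≤ 1 := by simpa using hx.2
    constructor
    · exact div_pos (by linarith) h1l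
    · rw [show (0:ℕ)-1 = 0 from rfl, pow_zero, div_le_one h1l]; linarith
  · rw [gmap, if_neg (by omega)]
    have hden : 0 < lam * (1 - lam) := by positivity
    have hml := pow_pred_mul h1 h2 k hk
    constructor
    · exact div_pos (by linarith [hx.1]) hden
    · rw [div_le_iff₀ hden]
      have h2' := hx.2
      nlinarith

lemma tmap_mem {k : ℕ} {y : ℝ} (hy : y ∈ imI lam k) :
    tmap lam k y ∈ Wint lam (k+1) ∧ gmap lam k (tmap lam k y) = y := by
  rw [Wint_succ]
  have h1l : 0 < 1 - lam := by linarith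
  rcases Nat.eq_zero_or_pos k with hk | hk
  · subst hk
    rw [imI, show (0:ℕ)-1 = 0 from rfl, pow_zero] at hy
    rw [tmap, if_pos rfl, gmap, if_pos rfl]
    refine ⟨⟨?_, ?_⟩, ?_⟩
    · rw [zero_add, pow_one]; nlinarith [hy.1]
    · rw [pow_zero]; nlinarith [hy.2]
    · field_simp; ring
  · rw [imI] at hy
    rw [tmap, if_neg (by omega), gmap, if_neg (by omega)]
    have hden : 0 < lam * (1 - lam) := by positivity
    have hml := pow_pred_mul h1 h2 k hk
    refine ⟨⟨?_, ?_⟩, ?_⟩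
    · nlinarith [hy.1]
    · have : lam * (1 - lam) * y ≤ lam * (1-lam) * lam ^ (k-1) :=
        mul_le_mul_of_nonneg_left hy.2 hden.le
      nlinarith
    · field_simp; ring

lemma mem_branch {x : ℝ} (hx : x ∈ Set.Ioc (0:ℝ) 1) : ∃ k, x ∈ Wint lam (k+1) := by
  have hne : {n : ℕ | lam ^ n < x}.Nonempty := by
    obtain ⟨n, hn⟩ := exists_pow_lt_of_lt_one hx.1 h2
    exact ⟨n, hn⟩
  set i := sInf {n : ℕ | lam ^ n < x} with hi
  have hmem : i ∈ {n : ℕ | lam ^ n < x} := Nat.sInf_mem hne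
  have hi0 : i ≠ 0 := by
    intro h0
    rw [h0] at hmem
    simp only [Set.mem_setOf_eq, pow_zero] at hmem
    linarith [hx.2]
  obtain ⟨k, hk⟩ : ∃ k, i = k + 1 := ⟨i - 1, by omega⟩
  refine ⟨k, ?_⟩
  rw [Wint_succ]
  refine ⟨by rw [← hk]; exact hmem, ?_⟩
  by_contra hgt
  push_neg at hgt
  have : k ∈ {n : ℕ | lam ^ n < x} := hgt
  have := Nat.sInf_le this
  omega

lemma Flam_mem_Ioc {x : ℝ} (hx : x ∈ Set.Ioc (0:ℝ) 1) : Flam lam x ∈ Set.Ioc (0:ℝ) 1 := by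
  obtain ⟨k, hk⟩ := mem_branch h1 h2 hx
  rw [Flam_branch h1 h2 hk]
  have := gmap_mem h1 h2 hk
  rw [imI] at this
  exact ⟨this.1, this.2.trans (pow_le_one₀ h1.le h2.le)⟩

omit h1 h2 in
lemma Flam_id_outside {x : ℝ} (hx : x ∉ Set.Ioc (0:ℝ) 1) : Flam lam x = x := by
  rw [Flam, if_neg]
  intro h; exact hx ⟨h.1, h.2⟩

end Branch

section Meas

variable {lam : ℝ} (h1 : 0 < lam) (h2 : lam < 1)

lemma measurable_gmap (k : ℕ) : Measurable (gmap lam k) := by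
  unfold gmap
  rcases Nat.eq_zero_or_pos k with hk | hk
  · subst hk; simp only [if_pos rfl]
    exact (measurable_id.sub measurable_const).div measurable_const
  · simp only [if_neg (by omega : ¬ k = 0)]
    exact (measurable_id.sub measurable_const).div measurable_const

lemma measurableSet_Wint (n : ℕ) : MeasurableSet (Wint lam n) := measurableSet_Ioc

include h1 h2

lemma measurable_Flam : Measurable (Flam lam) := by
  intro B hB
  have heq : Flam lam ⁻¹' B =
      (B ∩ (Set.Ioc (0:ℝ) 1)ᶜ) ∪ ⋃ k, (gmap lam k ⁻¹' B ∩ Wint lam (k+1)) := by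
    ext x
    simp only [Set.mem_preimage, Set.mem_union, Set.mem_inter_iff, Set.mem_compl_iff,
      Set.mem_iUnion]
    constructor
    · intro hx
      by_cases hx01 : x ∈ Set.Ioc (0:ℝ) 1
      · obtain ⟨k, hk⟩ := mem_branch h1 h2 hx01
        right
        exact ⟨k, by rwa [← Flam_branch h1 h2 hk], hk⟩
      · left
        rw [Flam_id_outside hx01] at hx
        exact ⟨hx, hx01⟩
    · rintro (⟨hxB, hx01⟩ | ⟨k, hgk, hk⟩)
      · rwa [Flam_id_outside hx01]
      · rwa [Flam_branch h1 h2 hk]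
  rw [heq]
  exact ((hB.inter measurableSet_Ioc.compl)).union
    (MeasurableSet.iUnion fun k => (measurable_gmap k hB).inter (measurableSet_Wint _))

lemma Wint_disjoint {a b : ℕ} (hab : a ≠ b) :
    Disjoint (Wint lam (a+1)) (Wint lam (b+1)) := by
  wlog h : a < b generalizing a b
  · exact (this hab.symm (by omega)).symm
  rw [Set.disjoint_left]
  intro x hxa hxb
  rw [Wint_succ] at hxa hxb
  have : lam ^ b ≤ lam ^ (a+1) := pow_le_pow_of_le_one h1.le h2.le (by omega)
  linarith [hxa.1, hxb.2]

lemma Ioc_eq_iUnion (k : ℕ) : Set.Ioc (0:ℝ) (lam ^ k) = ⋃ j, Wint lam (k+1+j) := by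
  ext x
  simp only [Set.mem_iUnion]
  constructor
  · intro hx
    have hx01 : x ∈ Set.Ioc (0:ℝ) 1 :=
      ⟨hx.1, hx.2.trans (pow_le_one₀ h1.le h2.le)⟩
    obtain ⟨k', hk'⟩ := mem_branch h1 h2 hx01
    have hge : k ≤ k' := by
      by_contra hlt
      push_neg at hlt
      rw [Wint_succ] at hk'
      have : lam ^ k ≤ lam ^ (k'+1) := pow_le_pow_of_le_one h1.le h2.le (by omega)
      linarith [hk'.1, hx.2]
    exact ⟨k' - k, by rw [show k+1+(k'-k) = k'+1 by omega]; exact hk'⟩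
  · rintro ⟨j, hj⟩
    rw [show k+1+j = (k+j)+1 by omega, Wint_succ] at hj
    have h0 : (0:ℝ) < lam ^ (k+j+1) := by positivity
    have : lam ^ (k+j) ≤ lam ^ k := pow_le_pow_of_le_one h1.le h2.le (by omega)
    exact ⟨lt_trans h0 hj.1, le_trans hj.2 this⟩

end Meas

noncomputable def wgt (lam t p : ℝ) (k : ℕ) : ℝ :=
  if k = 0 then Real.exp (-p) * (1-lam) ^ t else Real.exp (-p) * (lam*(1-lam)) ^ t

section Conf

variable {lam t p : ℝ} (h1 : 0 < lam) (h2 : lam < 1)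
variable {m : Measure ℝ}

include h1 h2

lemma slopeW_pos (k : ℕ) : 0 < slopeW lam (k+1) := by
  unfold slopeW
  rcases Nat.eq_zero_or_pos k with hk | hk
  · subst hk; rw [if_pos rfl]; have : 0 < 1 - lam := by linarith
    positivity
  · rw [if_neg (by omega)]
    have : 0 < lam * (1 - lam) := by nlinarith
    positivity

lemma wgt_pos (k : ℕ) : 0 < wgt lam t p k := by
  unfold wgt
  have h1l : 0 < 1 - lam := by linarith
  rcases Nat.eq_zero_or_pos k with hk | hk
  · subst hk; rw [if_pos rfl]
    have : (0:ℝ) < (1-lam) ^ t := Real.rpow_pos_of_pos h1l t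
    positivity
  · rw [if_neg (by omega)]
    have : (0:ℝ) < (lam*(1-lam)) ^ t := Real.rpow_pos_of_pos (by nlinarith) t
    positivity

lemma wgt_eq_inv (k : ℕ) :
    (Real.exp p * slopeW lam (k+1) ^ t)⁻¹ = wgt lam t p k := by
  have h1l : 0 < 1 - lam := by linarith
  unfold slopeW wgt
  rcases Nat.eq_zero_or_pos k with hk | hk
  · subst hk
    rw [if_pos rfl, if_pos rfl, one_div, Real.inv_rpow h1l.le, mul_inv, inv_inv,
      ← Real.exp_neg]
  · have hll : 0 < lam * (1 - lam) := by nlinarith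
    rw [if_neg (by omega), if_neg (by omega), one_div, Real.inv_rpow hll.le, mul_inv,
      inv_inv, ← Real.exp_neg]

lemma exp_slope_pos (k : ℕ) : 0 < Real.exp p * slopeW lam (k+1) ^ t := by
  have := slopeW_pos h1 h2 k
  have : (0:ℝ) < slopeW lam (k+1) ^ t := Real.rpow_pos_of_pos this t
  positivity

lemma preimage_formula (hconf : IsConformal lam t p m) {B : Set ℝ} (hB : MeasurableSet B)
    (k : ℕ) :
    m (Flam lam ⁻¹' B ∩ Wint lam (k+1)) =
      ENNReal.ofReal (wgt lam t p k) * m (B ∩ imI lam k) := by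
  set A := Flam lam ⁻¹' B ∩ Wint lam (k+1) with hA
  have hAmeas : MeasurableSet A :=
    ((measurable_Flam h1 h2) hB).inter (measurableSet_Wint _)
  have hAsub : A ⊆ Wint lam (k+1) := Set.inter_subset_right
  have himg : Flam lam '' A = B ∩ imI lam k := by
    ext y
    constructor
    · rintro ⟨x, ⟨hxB, hxW⟩, rfl⟩
      exact ⟨hxB, by rw [Flam_branch h1 h2 hxW]; exact gmap_mem h1 h2 hxW⟩
    · rintro ⟨hyB, hyI⟩
      obtain ⟨hW, hg⟩ := tmap_mem h1 h2 hyI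
      have hF : Flam lam (tmap lam k y) = y := by rw [Flam_branch h1 h2 hW, hg]
      exact ⟨tmap lam k y, ⟨by rw [Set.mem_preimage, hF]; exact hyB, hW⟩, hF⟩
  have hc := hconf (k+1) (by omega) A hAmeas hAsub
  rw [himg] at hc
  have hKpos := exp_slope_pos h1 h2 (t := t) (p := p) k
  have hK0 : ENNReal.ofReal (Real.exp p * slopeW lam (k+1) ^ t) ≠ 0 := by
    simp [ENNReal.ofReal_eq_zero]; linarith
  have hKtop : ENNReal.ofReal (Real.exp p * slopeW lam (k+1) ^ t) ≠ ⊤ :=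
    ENNReal.ofReal_ne_top
  have : m A = (ENNReal.ofReal (Real.exp p * slopeW lam (k+1) ^ t))⁻¹ *
      m (B ∩ imI lam k) := by
    rw [hc, ← mul_assoc, ENNReal.inv_mul_cancel hK0 hKtop, one_mul]
  rw [this, ← ENNReal.ofReal_inv_of_pos hKpos, wgt_eq_inv h1 h2]

lemma measure_inter_Ioc (hS : MeasurableSet (s : Set ℝ)) (k : ℕ) :
    m (s ∩ Set.Ioc 0 (lam ^ k)) = ∑' j : ℕ, m (s ∩ Wint lam (k+1+j)) := by
  rw [Ioc_eq_iUnion h1 h2, Set.inter_iUnion]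
  refine measure_iUnion ?_ fun j => hS.inter (measurableSet_Wint _)
  intro i j hij
  exact Set.disjoint_of_subset Set.inter_subset_right Set.inter_subset_right
    (by rw [show k+1+i = (k+i)+1 by omega, show k+1+j = (k+j)+1 by omega]
        exact Wint_disjoint h1 h2 (by omega))

end Conf

section Rec

variable {lam t p : ℝ} (h1 : 0 < lam) (h2 : lam < 1)
variable {m : Measure ℝ}

include h1 h2

lemma W_measure_eq (hconf : IsConformal lam t p m) (k : ℕ) :
    m (Wint lam (k+1)) = ENNReal.ofReal (wgt lam t p k) * m (Set.Ioc 0 (lam ^ (k-1))) := by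
  have hB : MeasurableSet (Set.Ioc (0:ℝ) (lam ^ (k-1))) := measurableSet_Ioc
  have := preimage_formula h1 h2 hconf hB k
  rw [show Set.Ioc (0:ℝ) (lam^(k-1)) ∩ imI lam k = imI lam k by rw [imI, Set.inter_self]]
    at this
  rw [imI] at this
  rw [← this]
  congr 1
  symm
  apply Set.inter_eq_right.mpr
  intro x hW
  have hg := gmap_mem h1 h2 hW
  rw [imI] at hg
  rw [Set.mem_preimage, Flam_branch h1 h2 hW]
  exact hg

lemma cc_le_quarter (hm : IsProbabilityMeasure m) (hm1 : m (Set.Ioc 0 1) = 1)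
    (hconf : IsConformal lam t p m) : wgt lam t p 1 ≤ 1/4 := by
  set cc := wgt lam t p 1 with hcc
  have hccpos : 0 < cc := wgt_pos h1 h2 1
  by_contra hc
  push_neg at hc
  set a : ℕ → ℝ := fun n => (m (Set.Ioc 0 (lam ^ n))).toReal with ha
  have ha0 : a 0 = 1 := by
    simp only [ha, pow_zero]
    rw [hm1]; rfl
  have hanneg : ∀ n, 0 ≤ a n := fun n => ENNReal.toReal_nonneg
  have hamono : ∀ n, a (n+1) ≤ a n := by
    intro n
    apply ENNReal.toReal_mono (measure_ne_top m _)
    exact measure_mono (Set.Ioc_subset_Ioc_right (pow_le_pow_of_le_one h1.le h2.le (by omega)))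
  have harec : ∀ n, a (n+1) = a (n+2) + cc * a n := by
    intro n
    have hsplit : Set.Ioc (0:ℝ) (lam ^ (n+1)) =
        Set.Ioc 0 (lam ^ (n+2)) ∪ Set.Ioc (lam ^ (n+2)) (lam ^ (n+1)) := by
      rw [Set.Ioc_union_Ioc_eq_Ioc (by positivity) (pow_le_pow_of_le_one h1.le h2.le (by omega))]
    have hWeq : m (Wint lam (n+2)) = ENNReal.ofReal cc * m (Set.Ioc 0 (lam ^ n)) := by
      have hkey := W_measure_eq h1 h2 hconf (n+1)
      have e1 : (n+1+1) = n+2 := rfl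
      have e2 : (n+1) - 1 = n := rfl
      have e3 : wgt lam t p (n+1) = cc := by
        rw [hcc]; unfold wgt; rw [if_neg (by omega), if_neg (by omega)]
      rw [e1, e2, e3] at hkey
      exact hkey
    have hmeas : m (Set.Ioc (0:ℝ) (lam^(n+1))) =
        m (Set.Ioc (0:ℝ) (lam ^ (n+2))) + m (Set.Ioc (lam ^ (n+2)) (lam ^ (n+1))) := by
      rw [hsplit]
      exact measure_union (Set.Ioc_disjoint_Ioc_of_le le_rfl) measurableSet_Ioc
    have hWint : Wint lam (n+2) = Set.Ioc (lam ^ (n+2)) (lam ^ (n+1)) := by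
      rw [show n+2 = (n+1)+1 from rfl, Wint_succ]
    rw [← hWint, hWeq] at hmeas
    have := congrArg ENNReal.toReal hmeas
    rw [ENNReal.toReal_add (measure_ne_top m _)
      (by exact ENNReal.mul_ne_top ENNReal.ofReal_ne_top (measure_ne_top m _)),
      ENNReal.toReal_mul, ENNReal.toReal_ofReal hccpos.le] at this
    exact this
  have hane : ∀ n, a n ≠ 0 := by
    intro n
    induction n with
    | zero => rw [ha0]; norm_num
    | succ n ih =>
      intro h0
      have hpos : 0 < a n := lt_of_le_of_ne (hanneg n) (Ne.symm ih)
      have := harec n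
      rw [h0] at this
      nlinarith [hanneg (n+2)]
  have hapos : ∀ n, 0 < a n := fun n => lt_of_le_of_ne (hanneg n) (Ne.symm (hane n))
  set bs : ℕ → ℝ := fun n => a (n+1) / a n with hbs
  have hbpos : ∀ n, 0 < bs n := fun n => div_pos (hapos (n+1)) (hapos n)
  have hble : ∀ n, bs n ≤ 1 := fun n => (div_le_one (hapos n)).mpr (hamono n)
  have hbstep : ∀ n, bs (n+1) ≤ bs n - (cc - 1/4) := by
    intro n
    have hrec := harec n
    have hb := hbpos n
    have hb1 := hble n
    have h1n : bs (n+1) = 1 - cc / bs n := by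
      have hbn : cc / bs n = cc * a n / a (n+1) := by
        rw [hbs]
        simp only
        rw [div_div_eq_mul_div]
      rw [hbs]
      simp only
      rw [hbn, eq_sub_iff_add_eq, ← add_div, div_eq_one_iff_eq (hane (n+1))]
      linarith [hrec]
    rw [h1n]
    have hX : (1 - (bs n - (cc - 1/4))) ≤ cc / bs n := by
      rw [le_div_iff₀ hb]
      nlinarith [sq_nonneg (bs n - 1/2)]
    linarith
  have hbound : ∀ n, bs n ≤ 1 - n * (cc - 1/4) := by
    intro n
    induction n with
    | zero => simpa using hble 0
    | succ n ih =>
      have := hbstep n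
      push_cast
      nlinarith
  obtain ⟨N, hN⟩ := exists_nat_gt (1 / (cc - 1/4))
  have h4 : 0 < cc - 1/4 := by linarith
  have : 1 < N * (cc - 1/4) := by
    rw [div_lt_iff₀ h4] at hN
    linarith
  nlinarith [hbpos N, hbound N]

end Rec

-- Key inequality
lemma KIneq {c d α b : ℝ} (hα : 1 < α) (hb : 0 < b) (hd : 0 ≤ d) (hc : 0 ≤ c)
    (hA : c*α^2 ≤ α - 1) (hB : 1 + d*(b*α) + c*(b*α^2) ≤ b*α) :
    ∀ s : ℕ, 1 + d*(b*α) + c * ∑ k ∈ Finset.range (s+1), b*α^(k+2) ≤ b*α^(s+1) := by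
  intro s
  induction s with
  | zero => simpa [Finset.sum_range_one] using hB
  | succ s ih =>
    rw [Finset.sum_range_succ, mul_add]
    have hα0 : (0:ℝ) < α := by linarith
    have hpos : (0:ℝ) < b * α^(s+1) := by positivity
    have e1 : α^(s+1+2) = α^(s+1)*α^2 := pow_add α (s+1) 2
    have e2 : α^(s+1+1) = α^(s+1)*α := by rw [pow_add, pow_one]
    calc 1 + d*(b*α) + (c * ∑ k ∈ Finset.range (s+1), b*α^(k+2) + c * (b*α^(s+1+2)))
        = (1 + d*(b*α) + c * ∑ k ∈ Finset.range (s+1), b*α^(k+2)) + c*(b*α^(s+1+2)) := by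
          ring
      _ ≤ b*α^(s+1) + c*(b*α^(s+1+2)) := by linarith
      _ = b*α^(s+1) * (1 + c*α^2) := by rw [e1]; ring
      _ ≤ b*α^(s+1) * α := by
          apply mul_le_mul_of_nonneg_left _ hpos.le
          linarith
      _ = b*α^(s+1+1) := by rw [e2]; ring

section Params

variable {lam t p : ℝ} (h1 : 0 < lam) (h2 : lam < 1) (ht : 0 < t)
variable {m : Measure ℝ}

include h1 h2 ht

lemma cc_eq_dd_mul : wgt lam t p 1 = wgt lam t p 0 * lam ^ t := by
  unfold wgt
  rw [if_neg (by omega), if_pos rfl, Real.mul_rpow h1.le (by linarith : (0:ℝ) ≤ 1 - lam)]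
  ring

omit h1 h2 ht in
lemma params_case1 (dd cc q : ℝ) (hdd : 0 < dd) (hcc : 0 < cc) (hq : 1/2 < q)
    (hcd : cc = dd*q) (hc4 : cc ≤ 1/4) :
    ∃ α b : ℝ, 1 < α ∧ 0 < b ∧ cc*α^2 ≤ α - 1 ∧ 1 + dd*(b*α) + cc*(b*α^2) ≤ b*α := by
  have hdd2 : dd < 2*cc := by nlinarith
  have hden : 0 < 2 - dd*2 - cc*4 := by nlinarith
  refine ⟨2, (2 - dd*2 - cc*4)⁻¹, by norm_num, by positivity, by nlinarith, ?_⟩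
  have hb : (2 - dd*2 - cc*4)⁻¹ * (2 - dd*2 - cc*4) = 1 := inv_mul_cancel₀ (ne_of_gt hden)
  nlinarith [hb]

omit h1 h2 ht in
lemma params_case2 (dd cc q : ℝ) (hdd : 0 < dd) (hcc : 0 < cc) (hq0 : 0 < q) (hq1 : q < 1)
    (hcd : cc = dd*q) (hddlt : dd < 1 - q) :
    ∃ α b : ℝ, 1 < α ∧ 0 < b ∧ cc*α^2 ≤ α - 1 ∧ 1 + dd*(b*α) + cc*(b*α^2) ≤ b*α := by
  set A := 1 - q with hA
  set α := A⁻¹ with hα'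
  have hApos : 0 < A := by simp only [hA]; linarith
  have hAα : A * α = 1 := mul_inv_cancel₀ (ne_of_gt hApos)
  have hαpos : 0 < α := by positivity
  have hα1 : 1 < α := by nlinarith
  have hddα : dd * α < 1 := by nlinarith
  have he : α - 1 = q * α := by nlinarith
  have hcond1 : cc*α^2 ≤ α - 1 := by rw [he, hcd]; nlinarith
  have hden : 0 < α - dd*α - cc*α^2 := by
    have hh : α - dd*α - cc*α^2 = α * (1 - dd*α) := by rw [hcd]; nlinarith
    rw [hh]; exact mul_pos hαpos (by linarith)
  refine ⟨α, (α - dd*α - cc*α^2)⁻¹, hα1, by positivity, hcond1, ?_⟩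
  have hb : (α - dd*α - cc*α^2)⁻¹ * (α - dd*α - cc*α^2) = 1 := inv_mul_cancel₀ (ne_of_gt hden)
  nlinarith [hb]

lemma exists_params (hm : IsProbabilityMeasure m) (hm1 : m (Set.Ioc 0 1) = 1)
    (hconf : IsConformal lam t p m)
    (hcase : 1/2 < lam ^ t ∨
      (lam ^ t ≤ 1/2 ∧ Real.log ((1-lam)^t / (1 - lam^t)) < p)) :
    ∃ α b : ℝ, 1 < α ∧ 0 < b ∧
      (wgt lam t p 1)*α^2 ≤ α - 1 ∧
      1 + (wgt lam t p 0)*(b*α) + (wgt lam t p 1)*(b*α^2) ≤ b*α := by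
  set dd := wgt lam t p 0 with hdd'
  set cc := wgt lam t p 1 with hcc'
  have hddpos : 0 < dd := wgt_pos h1 h2 0
  have hccpos : 0 < cc := wgt_pos h1 h2 1
  have hq0 : 0 < lam ^ t := Real.rpow_pos_of_pos h1 t
  have hq1 : lam ^ t < 1 := Real.rpow_lt_one h1.le h2 ht
  have hcd : cc = dd * lam ^ t := cc_eq_dd_mul h1 h2 ht
  rcases hcase with hgt | ⟨hle, hlog⟩
  · -- lam^t > 1/2
    have hc4 : cc ≤ 1/4 := cc_le_quarter h1 h2 hm hm1 hconf
    exact params_case1 dd cc (lam ^ t) hddpos hccpos hgt hcd hc4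
  · -- lam^t ≤ 1/2 and p > log psi
    have hb0 : 0 < 1 - lam ^ t := by linarith
    have h1lt : (0:ℝ) < (1-lam)^t := Real.rpow_pos_of_pos (by linarith) t
    have hψpos : 0 < (1-lam)^t / (1 - lam^t) := div_pos h1lt hb0
    have hψ : (1-lam)^t / (1 - lam^t) < Real.exp p := by
      rw [← Real.exp_log hψpos]
      exact Real.exp_lt_exp.mpr hlog
    have hddlt : dd < 1 - lam ^ t := by
      rw [hdd']
      unfold wgt
      rw [if_pos rfl, Real.exp_neg]
      rw [div_lt_iff₀ hb0] at hψ
      rw [inv_mul_eq_div, div_lt_iff₀ (Real.exp_pos p)]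
      linarith
    exact params_case2 dd cc (lam ^ t) hddpos hccpos hq0 hq1 hcd hddlt

end Params

section Core

variable {lam t p : ℝ} (h1 : 0 < lam) (h2 : lam < 1)
variable {m : Measure ℝ}

lemma iterate_id_outside {x : ℝ} (hx : x ∉ Set.Ioc (0:ℝ) 1) (n : ℕ) :
    (Flam lam)^[n] x = x := by
  induction n with
  | zero => rfl
  | succ n ih =>
    rw [Function.iterate_succ', Function.comp_apply, ih, Flam_id_outside hx]

include h1 h2

lemma iterate_mem {x : ℝ} (hx : x ∈ Set.Ioc (0:ℝ) 1) (n : ℕ) :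
    (Flam lam)^[n] x ∈ Set.Ioc (0:ℝ) 1 := by
  induction n with
  | zero => exact hx
  | succ n ih =>
    rw [Function.iterate_succ', Function.comp_apply]
    exact Flam_mem_Ioc h1 h2 ih

lemma Dn_subset (J n : ℕ) :
    (Flam lam)^[n] ⁻¹' (Wint lam (J+1)) ⊆ Set.Ioc (0:ℝ) 1 := by
  intro x hx
  by_contra hxo
  rw [Set.mem_preimage, iterate_id_outside hxo] at hx
  exact hxo (W_subset_Ioc h1 h2 hx)

lemma Dn_meas (J n : ℕ) :
    MeasurableSet ((Flam lam)^[n] ⁻¹' (Wint lam (J+1))) :=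
  ((measurable_Flam h1 h2).iterate n) (measurableSet_Wint _)

lemma tsum_D_ne_top (hm : IsProbabilityMeasure m) (hconf : IsConformal lam t p m)
    {α b : ℝ} (hα : 1 < α) (hb : 0 < b)
    (hc2 : (wgt lam t p 1)*α^2 ≤ α - 1)
    (hc3 : 1 + (wgt lam t p 0)*(b*α) + (wgt lam t p 1)*(b*α^2) ≤ b*α) (J : ℕ) :
    ∑' n, m ((Flam lam)^[n] ⁻¹' (Wint lam (J+1))) ≠ ⊤ := by
  set dd := wgt lam t p 0 with hdd'
  set cc := wgt lam t p 1 with hcc'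
  have hddpos : 0 < dd := wgt_pos h1 h2 0
  have hccpos : 0 < cc := wgt_pos h1 h2 1
  have hα0 : (0:ℝ) < α := by linarith
  set D : ℕ → Set ℝ := fun n => (Flam lam)^[n] ⁻¹' (Wint lam (J+1)) with hD'
  set φE : ℕ → ENNReal := fun i => ENNReal.ofReal (b*α^i) with hφ'
  set Φ : ℕ → ENNReal := fun n => ∑' l, φE (l+1) * m (D n ∩ Wint lam (l+1)) with hΦ'
  -- the key inequality, in ENNReal coefficient form
  have hKI := KIneq hα hb hddpos.le hccpos.le hc2 hc3
  have hwgt1 : ∀ k : ℕ, wgt lam t p (k+1) = cc := by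
    intro k; rw [hcc']; unfold wgt; rw [if_neg (by omega), if_neg (by omega)]
  have hwgt0 : wgt lam t p 0 = dd := rfl
  -- one induction step
  have hstep : ∀ n, Φ (n+1) + m (D n) ≤ Φ n := by
    intro n
    set ν : ℕ → ENNReal := fun l => m (D n ∩ Wint lam (l+1)) with hν'
    have hDmeas : MeasurableSet (D n) := Dn_meas h1 h2 J n
    have hsucc : D (n+1) = Flam lam ⁻¹' (D n) := by
      simp only [hD', Function.iterate_succ, Set.preimage_comp]
    have hμ : ∀ k, m (D (n+1) ∩ Wint lam (k+1)) =
        ENNReal.ofReal (wgt lam t p k) * m (D n ∩ imI lam k) := by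
      intro k
      rw [hsucc]
      exact preimage_formula h1 h2 hconf hDmeas k
    have hIoc : ∀ k, m (D n ∩ Set.Ioc 0 (lam^k)) = ∑' j, ν (k+j) := by
      intro k
      rw [measure_inter_Ioc h1 h2 hDmeas k]
      exact tsum_congr fun j => by rw [show k+1+j = (k+j)+1 by omega]
    have hDn_eq : m (D n) = ∑' j, ν j := by
      have h0 : D n ∩ Set.Ioc (0:ℝ) 1 = D n := Set.inter_eq_left.mpr (Dn_subset h1 h2 J n)
      have := hIoc 0
      rw [pow_zero, h0] at this
      rw [this]
      exact tsum_congr fun j => by rw [zero_add]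
    have himI0 : imI lam 0 = Set.Ioc (0:ℝ) 1 := by
      rw [imI, show (0:ℕ)-1 = 0 from rfl, pow_zero]
    have himIk : ∀ k : ℕ, imI lam (k+1) = Set.Ioc 0 (lam^k) := by
      intro k; rw [imI, show (k+1)-1 = k from rfl]
    -- rewrite Φ (n+1)
    have hΦsucc : Φ (n+1) = φE 1 * (ENNReal.ofReal dd * m (D n)) +
        ∑' k, φE (k+2) * (ENNReal.ofReal cc * ∑' j, ν (k+j)) := by
      rw [hΦ']
      simp only
      rw [tsum_congr (fun k => by rw [hμ k])]
      rw [tsum_eq_zero_add' ENNReal.summable]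
      congr 1
      · rw [hwgt0, himI0, Set.inter_eq_left.mpr (Dn_subset h1 h2 J n)]
      · exact tsum_congr fun k => by rw [hwgt1 k, himIk k, hIoc k]
    -- double sum manipulation
    have hdouble : ∑' k, φE (k+2) * (ENNReal.ofReal cc * ∑' j, ν (k+j)) =
        ∑' l, (∑ k ∈ Finset.range (l+1), φE (k+2) * ENNReal.ofReal cc) * ν l := by
      have hpt : ∀ k, φE (k+2) * (ENNReal.ofReal cc * ∑' j, ν (k+j)) =
          ∑' l, (if k ≤ l then (φE (k+2) * ENNReal.ofReal cc) * ν l else 0) := by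
        intro k
        have hinj : Function.Injective (fun j : ℕ => k + j) := fun a b hab => by
          simp only at hab; omega
        have hsupp : Function.support
            (fun l => if k ≤ l then (φE (k+2) * ENNReal.ofReal cc) * ν l else 0) ⊆
            Set.range (fun j : ℕ => k + j) := by
          intro l hl
          simp only [Function.mem_support, ne_eq, ite_eq_right_iff, not_forall] at hl
          obtain ⟨hkl, -⟩ := hl
          exact ⟨l - k, by simp only; omega⟩
        calc φE (k+2) * (ENNReal.ofReal cc * ∑' j, ν (k+j))
            = (φE (k+2) * ENNReal.ofReal cc) * ∑' j, ν (k+j) := by rw [mul_assoc]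
          _ = ∑' j, (φE (k+2) * ENNReal.ofReal cc) * ν (k+j) := ENNReal.tsum_mul_left.symm
          _ = ∑' j, (fun l => if k ≤ l then (φE (k+2) * ENNReal.ofReal cc) * ν l else 0)
                ((fun j : ℕ => k + j) j) := by
              refine tsum_congr fun j => ?_
              simp only
              rw [if_pos (Nat.le_add_right k j)]
          _ = ∑' l, (if k ≤ l then (φE (k+2) * ENNReal.ofReal cc) * ν l else 0) :=
              Function.Injective.tsum_eq hinj hsupp
      rw [tsum_congr hpt, ENNReal.tsum_comm]
      refine tsum_congr fun l => ?_
      rw [tsum_eq_sum (s := Finset.range (l+1))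
        (fun k hk => if_neg (fun hkl => hk (Finset.mem_range.mpr (by omega))))]
      rw [Finset.sum_congr rfl (fun k hk => if_pos (by
        have := Finset.mem_range.mp hk; omega))]
      rw [← Finset.sum_mul]
    -- coefficient bound
    have hcoef : ∀ l : ℕ, φE 1 * ENNReal.ofReal dd +
        (∑ k ∈ Finset.range (l+1), φE (k+2) * ENNReal.ofReal cc) + 1 ≤ φE (l+1) := by
      intro l
      have hsum : (∑ k ∈ Finset.range (l+1), φE (k+2) * ENNReal.ofReal cc) =
          ENNReal.ofReal (∑ k ∈ Finset.range (l+1), (b*α^(k+2)) * cc) := by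
        rw [ENNReal.ofReal_sum_of_nonneg (fun k _ => by positivity)]
        exact Finset.sum_congr rfl fun k _ =>
          (ENNReal.ofReal_mul (by positivity)).symm
      rw [hsum, hφ']
      simp only
      rw [← ENNReal.ofReal_mul (by positivity), ← ENNReal.ofReal_one,
        ← ENNReal.ofReal_add (by positivity)
          (Finset.sum_nonneg fun k _ => by positivity),
        ← ENNReal.ofReal_add (by positivity) (by norm_num)]
      apply ENNReal.ofReal_le_ofReal
      have := hKI l
      have hms : (∑ k ∈ Finset.range (l+1), (b*α^(k+2)) * cc) =
          cc * ∑ k ∈ Finset.range (l+1), b*α^(k+2) := by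
        rw [Finset.mul_sum]
        exact Finset.sum_congr rfl fun k _ => by ring
      rw [hms]
      calc b*α^1 * dd + cc * ∑ k ∈ Finset.range (l+1), b*α^(k+2) + 1
          = 1 + dd*(b*α) + cc * ∑ k ∈ Finset.range (l+1), b*α^(k+2) := by ring
        _ ≤ b*α^(l+1) := this
    -- combine
    rw [hΦsucc, hdouble, hDn_eq]
    have e1 : φE 1 * (ENNReal.ofReal dd * ∑' j, ν j) = ∑' l, (φE 1 * ENNReal.ofReal dd) * ν l := by
      rw [← mul_assoc]
      exact ENNReal.tsum_mul_left.symm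
    rw [e1, ← ENNReal.tsum_add, ← ENNReal.tsum_add]
    have hΦn : Φ n = ∑' l, φE (l+1) * ν l := rfl
    rw [hΦn]
    apply ENNReal.tsum_le_tsum
    intro l
    calc (φE 1 * ENNReal.ofReal dd) * ν l +
          (∑ k ∈ Finset.range (l+1), φE (k+2) * ENNReal.ofReal cc) * ν l + ν l
        = (φE 1 * ENNReal.ofReal dd +
          (∑ k ∈ Finset.range (l+1), φE (k+2) * ENNReal.ofReal cc) + 1) * ν l := by ring
      _ ≤ φE (l+1) * ν l := mul_le_mul_left (hcoef l) _
  -- Φ 0 is finite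
  have hΦ0 : Φ 0 = φE (J+1) * m (Wint lam (J+1)) := by
    rw [hΦ']
    simp only [hD', Function.iterate_zero, Set.preimage_id]
    rw [tsum_eq_single J (fun l hl => by
      rw [(Wint_disjoint h1 h2 (fun h => hl (by omega))).inter_eq, measure_empty, mul_zero])]
    rw [Set.inter_self]
  have hΦ0top : Φ 0 ≠ ⊤ := by
    rw [hΦ0]
    exact ENNReal.mul_ne_top ENNReal.ofReal_ne_top (measure_ne_top m _)
  -- telescoping
  have htel : ∀ N, (∑ n ∈ Finset.range N, m (D n)) + Φ N ≤ Φ 0 := by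
    intro N
    induction N with
    | zero => simp
    | succ N ih =>
      rw [Finset.sum_range_succ]
      calc (∑ n ∈ Finset.range N, m (D n)) + m (D N) + Φ (N+1)
          = (∑ n ∈ Finset.range N, m (D n)) + (Φ (N+1) + m (D N)) := by ring
        _ ≤ (∑ n ∈ Finset.range N, m (D n)) + Φ N := add_le_add le_rfl (hstep N)
        _ ≤ Φ 0 := ih
  have hsum_le : ∑' n, m (D n) ≤ Φ 0 := by
    rw [ENNReal.tsum_eq_iSup_nat]
    exact iSup_le fun N => le_trans le_self_add (htel N)
  exact ne_top_of_le_ne_top hΦ0top hsum_le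

end Core

section Final

variable {lam t p : ℝ} (h1 : 0 < lam) (h2 : lam < 1)

include h1 h2 in
lemma le_pow_of_notin {y : ℝ} (hy : y ∈ Set.Ioc (0:ℝ) 1) :
    ∀ M : ℕ, (∀ J < M, y ∉ Wint lam (J+1)) → y ≤ lam ^ M := by
  intro M
  induction M with
  | zero => intro _; simpa using hy.2
  | succ M ih =>
    intro hno
    have hM : y ≤ lam ^ M := ih (fun J hJ => hno J (by omega))
    have := hno M (by omega)
    rw [Wint_succ] at this
    by_contra hgt
    push_neg at hgt
    exact this ⟨hgt, hM⟩

theorem stmt8' (lam t p : ℝ) (h1 : 0 < lam) (h2 : lam < 1) (ht : 0 < t)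
    (m : Measure ℝ) (hm : IsProbabilityMeasure m) (hm1 : m (Set.Ioc 0 1) = 1)
    (hconf : IsConformal lam t p m)
    (hcase : 1/2 < lam ^ t ∨
      (lam ^ t ≤ 1/2 ∧ Real.log ((1-lam)^t / (1 - lam^t)) < p)) :
    ∀ᵐ x ∂m, x ∈ Set.Ioc (0:ℝ) 1 →
      Filter.Tendsto (fun n => (Flam lam)^[n] x) Filter.atTop (nhds 0) := by
  obtain ⟨α, b, hα, hb, hc2, hc3⟩ := exists_params h1 h2 ht hm hm1 hconf hcase
  have hBC : ∀ J : ℕ, ∀ᵐ x ∂m, ∀ᶠ n in atTop, (Flam lam)^[n] x ∉ Wint lam (J+1) :=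
    fun J => MeasureTheory.ae_eventually_notMem
      (tsum_D_ne_top h1 h2 hm hconf hα hb hc2 hc3 J)
  have hae : ∀ᵐ x ∂m, ∀ J : ℕ, ∀ᶠ n in atTop, (Flam lam)^[n] x ∉ Wint lam (J+1) :=
    ae_all_iff.mpr hBC
  filter_upwards [hae] with x hx hx01
  rw [Metric.tendsto_atTop]
  intro ε hε
  obtain ⟨M, hM⟩ := exists_pow_lt_of_lt_one hε h2
  have hev : ∀ᶠ n in atTop, ∀ J ∈ Finset.range M, (Flam lam)^[n] x ∉ Wint lam (J+1) :=
    (Filter.eventually_all_finset (Finset.range M)).mpr (fun J _ => hx J)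
  obtain ⟨N, hN⟩ := Filter.eventually_atTop.mp hev
  refine ⟨N, fun n hn => ?_⟩
  have hmem : (Flam lam)^[n] x ∈ Set.Ioc (0:ℝ) 1 := iterate_mem h1 h2 hx01 n
  have hle : (Flam lam)^[n] x ≤ lam ^ M :=
    le_pow_of_notin h1 h2 hmem M (fun J hJ => hN n hn J (Finset.mem_range.mpr hJ))
  rw [Real.dist_eq, sub_zero, abs_of_pos hmem.1]
  exact lt_of_le_of_lt hle hM

end Final


/-- A `(t,p)`-conformal probability measure `m` is dissipative
(orbits tend to `0` for `m`-a.e. `x ∈ (0,1]`) whenever `lam^t > 1/2`, or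
`lam^t ≤ 1/2` and `p > log ψ(t)`. -/
theorem stmt8 (lam t p : ℝ) (h1 : 0 < lam) (h2 : lam < 1) (ht : 0 < t)
    (m : Measure ℝ) (hm : IsProbabilityMeasure m) (hm1 : m (Set.Ioc 0 1) = 1)
    (hconf : IsConformal lam t p m)
    (hcase : 1/2 < lam ^ t ∨
      (lam ^ t ≤ 1/2 ∧ Real.log ((1-lam)^t / (1 - lam^t)) < p)) :
    ∀ᵐ x ∂m, x ∈ Set.Ioc (0:ℝ) 1 →
      Filter.Tendsto (fun n => (Flam lam)^[n] x) Filter.atTop (nhds 0) :=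
  stmt8' lam t p h1 h2 ht m hm hm1 hconf hcase
end

section
/- Let λ ∈ (0,1) and t > 0 with λ^t < 1/2. Then there exist a (t, log ψ(t))-conformal Borel probability measure m_t on (0,1] with m_t(W_k) = (1−λ^t)·λ^{t(k−1)} for all k ≥ 1, and an F_λ-invariant Borel probability measure μ_t absolutely continuous with respect to m_t, satisfying μ_t(W_j) = ((1−2λ^t)/λ^t)·(λ^t/(1−λ^t))^j for every j ≥ 1. -/
open MeasureTheory Set Filter Topology

namespace S9

noncomputable def beta (lam t : ℝ) : ℝ := lam ^ t

noncomputable def cc (lam t : ℝ) (n : ℕ) : ℝ :=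
  if n = 1 then 1 - beta lam t else beta lam t * (1 - beta lam t)

noncomputable def Fb (lam : ℝ) (n : ℕ) (x : ℝ) : ℝ :=
  if n = 1 then (x - lam) / (1 - lam) else (x - lam ^ n) / (lam * (1 - lam))

noncomputable def Gb (lam : ℝ) (n : ℕ) (y : ℝ) : ℝ :=
  if n = 1 then y * (1 - lam) + lam else y * (lam * (1 - lam)) + lam ^ n

noncomputable def dig (lam x : ℝ) : ℕ := sInf {n : ℕ | lam ^ n < x}

section basic

variable {lam t : ℝ}

lemma beta_pos (h1 : 0 < lam) : 0 < beta lam t := Real.rpow_pos_of_pos h1 t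

lemma beta_lt_one (h1 : 0 < lam) (h2 : lam < 1) (ht : 0 < t) : beta lam t < 1 :=
  Real.rpow_lt_one h1.le h2 ht

lemma one_sub_beta_pos (h1 : 0 < lam) (h2 : lam < 1) (ht : 0 < t) : 0 < 1 - beta lam t := by
  linarith [beta_lt_one h1 h2 ht]

lemma cc_pos (h1 : 0 < lam) (h2 : lam < 1) (ht : 0 < t) (n : ℕ) : 0 < cc lam t n := by
  unfold cc
  have hb := beta_pos (t := t) h1
  have h1b := one_sub_beta_pos h1 h2 ht
  split <;> positivity

lemma cc_le (h1 : 0 < lam) (h2 : lam < 1) (ht : 0 < t) (n : ℕ) : cc lam t n ≤ 1 - beta lam t := by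
  unfold cc
  have hb := beta_pos (t := t) h1
  have hb1 := beta_lt_one h1 h2 ht
  have h1b := one_sub_beta_pos h1 h2 ht
  split
  · exact le_refl _
  · nlinarith

lemma pow_lt_pow_iff_nat (h1 : 0 < lam) (h2 : lam < 1) (m n : ℕ) :
    lam ^ n < lam ^ m ↔ m < n := pow_lt_pow_iff_right_of_lt_one₀ h1 h2

lemma pow_le_pow_iff_nat (h1 : 0 < lam) (h2 : lam < 1) (m n : ℕ) :
    lam ^ n ≤ lam ^ m ↔ m ≤ n := by
  constructor
  · intro h
    by_contra hc
    push_neg at hc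
    exact absurd ((pow_lt_pow_iff_nat h1 h2 _ _).2 hc) (not_lt.2 h)
  · intro h
    exact pow_le_pow_of_le_one h1.le h2.le h

lemma dig_spec (h2 : lam < 1) {x : ℝ} (hx : 0 < x) : lam ^ dig lam x < x := by
  have hne : {n : ℕ | lam ^ n < x}.Nonempty := by
    obtain ⟨n, hn⟩ := exists_pow_lt_of_lt_one hx h2
    exact ⟨n, hn⟩
  exact Nat.sInf_mem hne

lemma dig_le_of_lt {x : ℝ} {n : ℕ} (h : lam ^ n < x) : dig lam x ≤ n := Nat.sInf_le h

lemma dig_pos (h2 : lam < 1) {x : ℝ} (hx : x ≤ 1) (hx0 : 0 < x) : 1 ≤ dig lam x := by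
  rcases Nat.eq_zero_or_pos (dig lam x) with h | h
  · have := dig_spec h2 hx0 (lam := lam)
    rw [h] at this
    simp at this
    linarith
  · exact h

lemma le_dig_pow (h2 : lam < 1) {x : ℝ} (hx0 : 0 < x) (hx : x ≤ 1) :
    x ≤ lam ^ (dig lam x - 1) := by
  by_contra hc
  push_neg at hc
  have h := dig_le_of_lt (lam := lam) hc
  have h1d := dig_pos (lam := lam) h2 hx hx0
  omega

lemma mem_W_dig (h2 : lam < 1) {x : ℝ} (hx0 : 0 < x) (hx : x ≤ 1) :
    x ∈ Wint lam (dig lam x) := ⟨dig_spec h2 hx0, le_dig_pow h2 hx0 hx⟩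

lemma W_subset_Ioc (h1 : 0 < lam) (h2 : lam < 1) {n : ℕ} (hn : 1 ≤ n) :
    Wint lam n ⊆ Set.Ioc 0 1 := by
  intro x hx
  obtain ⟨hx1, hx2⟩ := hx
  constructor
  · exact lt_of_le_of_lt (by positivity) hx1
  · refine hx2.trans ?_
    calc lam ^ (n-1) ≤ lam ^ 0 := (pow_le_pow_iff_nat h1 h2 _ _).2 (Nat.zero_le _)
    _ = 1 := pow_zero lam

lemma dig_eq_of_mem (h1 : 0 < lam) (h2 : lam < 1) {x : ℝ} {n : ℕ} (hn : 1 ≤ n)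
    (hx : x ∈ Wint lam n) : dig lam x = n := by
  obtain ⟨hx1, hx2⟩ := hx
  have hle : dig lam x ≤ n := dig_le_of_lt hx1
  by_contra hc
  have hlt : dig lam x < n := lt_of_le_of_ne hle hc
  have hx0 : 0 < x := lt_of_le_of_lt (by positivity) hx1
  have h := dig_spec (lam := lam) h2 hx0
  have : lam ^ (n - 1) ≤ lam ^ dig lam x := (pow_le_pow_iff_nat h1 h2 _ _).2 (by omega)
  linarith

lemma Fb_strictMono (h1 : 0 < lam) (h2 : lam < 1) (n : ℕ) : StrictMono (Fb lam n) := by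
  intro x y hxy
  unfold Fb
  have hp : (0:ℝ) < 1 - lam := by linarith
  have hq : (0:ℝ) < lam * (1 - lam) := by positivity
  split
  · exact div_lt_div_of_pos_right (by linarith) hp
  · exact div_lt_div_of_pos_right (by linarith) hq

lemma Gb_Fb (h1 : 0 < lam) (h2 : lam < 1) (n : ℕ) (x : ℝ) : Gb lam n (Fb lam n x) = x := by
  have hp : (1:ℝ) - lam ≠ 0 := by linarith
  have hq : lam * (1 - lam) ≠ 0 := by positivity
  unfold Fb Gb
  split <;> field_simp <;> ring

lemma Fb_Gb (h1 : 0 < lam) (h2 : lam < 1) (n : ℕ) (y : ℝ) : Fb lam n (Gb lam n y) = y := by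
  have hp : (1:ℝ) - lam ≠ 0 := by linarith
  have hq : lam * (1 - lam) ≠ 0 := by positivity
  unfold Fb Gb
  split <;> field_simp <;> ring

lemma Fb_pow_self (h1 : 0 < lam) (h2 : lam < 1) (n : ℕ) : Fb lam n (lam ^ n) = 0 := by
  have hp : (1:ℝ) - lam ≠ 0 := by linarith
  have hq : lam * (1 - lam) ≠ 0 := by positivity
  unfold Fb
  split
  · rename_i h; rw [h]; simp
  · simp

lemma Fb_pow_pred (h1 : 0 < lam) (h2 : lam < 1) {n : ℕ} (hn : 1 ≤ n) :
    Fb lam n (lam ^ (n - 1)) = lam ^ (n - 2) := by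
  have hp : (1:ℝ) - lam ≠ 0 := by linarith
  have hl : lam ≠ 0 := h1.ne'
  match n, hn with
  | 1, _ =>
    unfold Fb
    norm_num
    exact hp
  | (m+2), _ =>
    unfold Fb
    have h2m : ¬ (m + 2 = 1) := by omega
    rw [if_neg h2m]
    show (lam ^ (m+1) - lam ^ (m+2)) / (lam * (1 - lam)) = lam ^ m
    field_simp
    ring

lemma Gb_continuous (n : ℕ) : Continuous (Gb lam n) := by
  unfold Gb
  split <;> continuity

lemma Gb_measurable (n : ℕ) : Measurable (Gb lam n) := (Gb_continuous n).measurable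

lemma Fb_le_iff (h1 : 0 < lam) (h2 : lam < 1) (n : ℕ) {x y : ℝ} :
    Gb lam n y ≤ x ↔ y ≤ Fb lam n x := by
  constructor
  · intro h
    have := (Fb_strictMono h1 h2 n).monotone h
    rwa [Fb_Gb h1 h2] at this
  · intro h
    have hG : Monotone (fun z => Gb lam n z) := by
      intro a b hab
      unfold Gb
      have hp : (0:ℝ) ≤ 1 - lam := by linarith
      have hq : (0:ℝ) ≤ lam * (1 - lam) := by positivity
      simp only
      split <;> nlinarith
    have := hG h
    simpa [Gb_Fb h1 h2] using this

lemma lt_Gb_iff (h1 : 0 < lam) (h2 : lam < 1) (n : ℕ) {x y : ℝ} :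
    x < Gb lam n y ↔ Fb lam n x < y := by
  rw [← not_le, ← not_le, Fb_le_iff h1 h2]

lemma Gb_preimage_Ioc (h1 : 0 < lam) (h2 : lam < 1) (n : ℕ) (a b : ℝ) :
    Gb lam n ⁻¹' Set.Ioc a b = Set.Ioc (Fb lam n a) (Fb lam n b) := by
  ext y
  simp only [Set.mem_preimage, Set.mem_Ioc]
  rw [lt_Gb_iff h1 h2, Fb_le_iff h1 h2]


lemma Flam_eq {x : ℝ} (hx0 : 0 < x) (hx : x ≤ 1) :
    Flam lam x = Fb lam (dig lam x) x := by
  unfold Flam Fb dig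
  rw [if_pos ⟨hx0, hx⟩]

lemma Flam_eq_W (h1 : 0 < lam) (h2 : lam < 1) {x : ℝ} {n : ℕ} (hn : 1 ≤ n)
    (hx : x ∈ Wint lam n) : Flam lam x = Fb lam n x := by
  have h := W_subset_Ioc h1 h2 hn hx
  rw [Flam_eq h.1 h.2, dig_eq_of_mem h1 h2 hn hx]

end basic

noncomputable def Top (lam t : ℝ) (G : ℝ → ℝ) (x : ℝ) : ℝ :=
  if 0 < x ∧ x ≤ 1 then
    beta lam t ^ dig lam x + cc lam t (dig lam x) * G (Fb lam (dig lam x) x)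
  else if x ≤ 0 then 0 else 1

def IsK (lam t : ℝ) (G : ℝ → ℝ) : Prop :=
  Monotone G ∧ Continuous G ∧ (∀ x, x ≤ 0 → G x = 0) ∧ (∀ x, 1 ≤ x → G x = 1) ∧
    ∀ m : ℕ, G (lam ^ m) = beta lam t ^ m

section opK

variable {lam t : ℝ} {G G' : ℝ → ℝ}

lemma IsK.nonneg (hK : IsK lam t G) (x : ℝ) : 0 ≤ G x := by
  rcases le_or_gt x 0 with h | h
  · rw [hK.2.2.1 x h]
  · have := hK.2.2.1 0 le_rfl
    calc (0:ℝ) = G 0 := this.symm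
    _ ≤ G x := hK.1 h.le

lemma IsK.le_one (hK : IsK lam t G) (x : ℝ) : G x ≤ 1 := by
  rcases le_or_gt 1 x with h | h
  · rw [hK.2.2.2.1 x h]
  · calc G x ≤ G 1 := hK.1 h.le
    _ = 1 := hK.2.2.2.1 1 le_rfl

lemma pow_rpow_beta (h1 : 0 < lam) (m : ℕ) : (lam ^ m : ℝ) ^ t = beta lam t ^ m := by
  unfold beta
  rw [← Real.rpow_natCast lam m, ← Real.rpow_mul h1.le, mul_comm, Real.rpow_mul h1.le,
    Real.rpow_natCast]

lemma G0_isK (h1 : 0 < lam) (h2 : lam < 1) (ht : 0 < t) :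
    IsK lam t (fun x => (min 1 (max x 0)) ^ t) := by
  have hrpow : Continuous fun z : ℝ => z ^ t :=
    continuous_iff_continuousAt.2 fun z => Real.continuousAt_rpow_const z t (Or.inr ht.le)
  refine ⟨?_, ?_, ?_, ?_, ?_⟩
  · intro x y hxy
    have hx0 : 0 ≤ min 1 (max x 0) := le_min (by norm_num) (le_max_right _ _)
    exact Real.rpow_le_rpow hx0 (min_le_min le_rfl (max_le_max hxy le_rfl)) ht.le
  · exact hrpow.comp ((continuous_const.min ((continuous_id).max continuous_const)))
  · intro x hx
    show (min 1 (max x 0)) ^ t = 0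
    rw [max_eq_right hx, min_eq_right (by norm_num)]
    exact Real.zero_rpow ht.ne'
  · intro x hx
    show (min 1 (max x 0)) ^ t = 1
    rw [max_eq_left (by linarith), min_eq_left hx, Real.one_rpow]
  · intro m
    have h0 : (0:ℝ) ≤ lam ^ m := by positivity
    have hle : lam ^ m ≤ 1 := pow_le_one₀ h1.le h2.le
    show (min 1 (max (lam ^ m) 0)) ^ t = beta lam t ^ m
    rw [max_eq_left h0, min_eq_right hle, pow_rpow_beta h1]

lemma Top_apply {x : ℝ} (hx0 : 0 < x) (hx1 : x ≤ 1) :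
    Top lam t G x = beta lam t ^ dig lam x + cc lam t (dig lam x) * G (Fb lam (dig lam x) x) :=
  if_pos ⟨hx0, hx1⟩

lemma Top_W (h1 : 0 < lam) (h2 : lam < 1) {x : ℝ} {n : ℕ} (hn : 1 ≤ n) (hx : x ∈ Wint lam n) :
    Top lam t G x = beta lam t ^ n + cc lam t n * G (Fb lam n x) := by
  have h := W_subset_Ioc h1 h2 hn hx
  rw [Top_apply h.1 h.2, dig_eq_of_mem h1 h2 hn hx]

lemma dig_one (h1 : 0 < lam) (h2 : lam < 1) : dig lam 1 = 1 :=
  dig_eq_of_mem h1 h2 le_rfl ⟨by simpa using h2, by simp⟩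

lemma Top_pin (h1 : 0 < lam) (h2 : lam < 1) (ht : 0 < t) (hK : IsK lam t G) (m : ℕ) :
    Top lam t G (lam ^ m) = beta lam t ^ m := by
  match m with
  | 0 =>
    have h0 : Top lam t G 1 = beta lam t ^ 1 + cc lam t 1 * G (Fb lam 1 1) :=
      Top_W h1 h2 le_rfl ⟨by simpa using h2, by simp⟩
    have hFb : Fb lam 1 (1:ℝ) = 1 := by
      unfold Fb; rw [if_pos rfl, div_self (by linarith : (1:ℝ) - lam ≠ 0)]
    simp only [pow_zero]
    rw [h0, hFb, hK.2.2.2.1 1 le_rfl]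
    unfold cc
    simp
  | (m+1) =>
    have hmem : lam ^ (m+1) ∈ Wint lam (m+2) := by
      constructor
      · exact (pow_lt_pow_iff_nat h1 h2 _ _).2 (by omega)
      · simp
    rw [Top_W h1 h2 (by omega) hmem]
    have hFb : Fb lam (m+2) (lam ^ (m+1)) = lam ^ m := by
      have := Fb_pow_pred h1 h2 (n := m+2) (by omega)
      simpa using this
    rw [hFb, hK.2.2.2.2 m]
    unfold cc
    rw [if_neg (by omega)]
    ring

lemma Top_le (h1 : 0 < lam) (h2 : lam < 1) (ht : 0 < t) (hK : IsK lam t G)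
    {x : ℝ} (hx0 : 0 < x) (hx1 : x ≤ 1) :
    Top lam t G x ≤ beta lam t ^ (dig lam x - 1) := by
  set n := dig lam x with hn
  have hn1 : 1 ≤ n := dig_pos h2 hx1 hx0
  rw [Top_apply hx0 hx1, ← hn]
  have hb := beta_pos (t := t) h1
  have hb1 := beta_lt_one h1 h2 ht
  have hGle : G (Fb lam n x) ≤ beta lam t ^ (n - 2) := by
    have h3 : Fb lam n x ≤ Fb lam n (lam ^ (n-1)) :=
      (Fb_strictMono h1 h2 n).monotone (le_dig_pow h2 hx0 hx1)
    rw [Fb_pow_pred h1 h2 hn1] at h3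
    calc G (Fb lam n x) ≤ G (lam ^ (n-2)) := hK.1 h3
    _ = beta lam t ^ (n-2) := hK.2.2.2.2 _
  have hcc : 0 < cc lam t n := cc_pos h1 h2 ht n
  have : cc lam t n * G (Fb lam n x) ≤ cc lam t n * beta lam t ^ (n-2) :=
    mul_le_mul_of_nonneg_left hGle hcc.le
  have key : beta lam t ^ n + cc lam t n * beta lam t ^ (n - 2) ≤ beta lam t ^ (n - 1) := by
    match n, hn1 with
    | 1, _ =>
      unfold cc; norm_num
    | (m+2), _ =>
      unfold cc
      rw [if_neg (by omega)]
      have e1 : m + 2 - 2 = m := by omega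
      have e2 : m + 2 - 1 = m + 1 := by omega
      rw [e1, e2]
      have : beta lam t ^ (m+2) + beta lam t * (1 - beta lam t) * beta lam t ^ m
          = beta lam t ^ (m+1) := by ring
      linarith
  linarith

lemma Top_ge (h1 : 0 < lam) (h2 : lam < 1) (ht : 0 < t) (hK : IsK lam t G)
    {x : ℝ} (hx0 : 0 < x) (hx1 : x ≤ 1) :
    beta lam t ^ (dig lam x) ≤ Top lam t G x := by
  rw [Top_apply hx0 hx1]
  have := mul_nonneg (cc_pos h1 h2 ht (dig lam x)).le (hK.nonneg (Fb lam (dig lam x) x))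
  linarith

lemma Top_nonneg (h1 : 0 < lam) (h2 : lam < 1) (ht : 0 < t) (hK : IsK lam t G) (x : ℝ) :
    0 ≤ Top lam t G x := by
  unfold Top
  split
  · rename_i h
    have := Top_ge h1 h2 ht hK h.1 h.2
    rw [Top_apply h.1 h.2] at this
    refine le_trans ?_ this
    exact pow_nonneg (beta_pos (t := t) h1).le _
  · split <;> norm_num

lemma Top_le_one (h1 : 0 < lam) (h2 : lam < 1) (ht : 0 < t) (hK : IsK lam t G) (x : ℝ) :
    Top lam t G x ≤ 1 := by
  have hb := beta_pos (t := t) h1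
  have hb1 := beta_lt_one h1 h2 ht
  rcases le_or_gt x 0 with h | h
  · unfold Top
    rw [if_neg (by rintro ⟨h', _⟩; linarith), if_pos h]
    norm_num
  rcases le_or_gt x 1 with h' | h'
  · refine (Top_le h1 h2 ht hK h h').trans ?_
    exact pow_le_one₀ hb.le hb1.le
  · unfold Top
    rw [if_neg (by rintro ⟨_, h''⟩; linarith), if_neg (by linarith)]

lemma Top_mono (h1 : 0 < lam) (h2 : lam < 1) (ht : 0 < t) (hK : IsK lam t G) :
    Monotone (Top lam t G) := by
  intro x y hxy
  have hb := beta_pos (t := t) h1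
  have hb1 := beta_lt_one h1 h2 ht
  rcases le_or_gt y 0 with hy0 | hy0
  · unfold Top
    rw [if_neg (by rintro ⟨h', _⟩; linarith), if_pos (le_trans hxy hy0),
      if_neg (by rintro ⟨h', _⟩; linarith), if_pos hy0]
  rcases le_or_gt y 1 with hy1 | hy1
  · rcases le_or_gt x 0 with hx0 | hx0
    · have : Top lam t G x = 0 := by
        unfold Top
        rw [if_neg (by rintro ⟨h', _⟩; linarith), if_pos hx0]
      rw [this]
      exact Top_nonneg h1 h2 ht hK y
    · have hx1 : x ≤ 1 := le_trans hxy hy1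
      have hkn : dig lam y ≤ dig lam x :=
        dig_le_of_lt (lt_of_lt_of_le (dig_spec h2 hx0) hxy)
      rcases eq_or_lt_of_le hkn with heq | hlt
      · rw [Top_apply hx0 hx1, Top_apply hy0 hy1, ← heq]
        have hFb : Fb lam (dig lam y) x ≤ Fb lam (dig lam y) y :=
          (Fb_strictMono h1 h2 _).monotone hxy
        have hG : G (Fb lam (dig lam y) x) ≤ G (Fb lam (dig lam y) y) := hK.1 hFb
        have hcc := cc_pos h1 h2 ht (dig lam y)
        nlinarith
      · refine (Top_le h1 h2 ht hK hx0 hx1).trans (le_trans ?_ (Top_ge h1 h2 ht hK hy0 hy1))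
        exact pow_le_pow_of_le_one hb.le hb1.le (by omega)
  · have : Top lam t G y = 1 := by
      unfold Top
      rw [if_neg (by rintro ⟨_, h''⟩; linarith), if_neg (by linarith)]
    rw [this]
    exact Top_le_one h1 h2 ht hK x

end opK

section cont

variable {lam t : ℝ} {G : ℝ → ℝ}

lemma Fb_continuous (n : ℕ) : Continuous (Fb lam n) := by
  unfold Fb
  split
  · exact (continuous_id.sub continuous_const).div_const _
  · exact (continuous_id.sub continuous_const).div_const _

lemma Top_boundary (h1 : 0 < lam) (h2 : lam < 1) (ht : 0 < t) (hK : IsK lam t G)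
    {m : ℕ} (hm : 1 ≤ m) :
    Top lam t G (lam ^ m) = beta lam t ^ m + cc lam t m * G (Fb lam m (lam ^ m)) := by
  -- value of Top at the *left* endpoint of W m, computed from branch m formula
  rw [Top_pin h1 h2 ht hK m, Fb_pow_self h1 h2, hK.2.2.1 0 le_rfl, mul_zero, add_zero]

lemma Top_cont (h1 : 0 < lam) (h2 : lam < 1) (ht : 0 < t) (hK : IsK lam t G) :
    Continuous (Top lam t G) := by
  obtain ⟨hmono, hcont, hzero, hone, hpin⟩ := hK
  have hKK : IsK lam t G := ⟨hmono, hcont, hzero, hone, hpin⟩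
  have hb := beta_pos (t := t) h1
  have hb1 := beta_lt_one h1 h2 ht
  rw [continuous_iff_continuousAt]
  intro x
  rcases lt_trichotomy x 0 with hx | hx | hx
  · -- x < 0
    have hev : (fun _ : ℝ => (0:ℝ)) =ᶠ[𝓝 x] Top lam t G := by
      filter_upwards [Iio_mem_nhds hx] with y hy
      unfold Top
      rw [if_neg (by rintro ⟨h', _⟩; exact absurd h' (not_lt.2 (le_of_lt hy))),
        if_pos (le_of_lt hy)]
    exact continuousAt_const.congr hev
  · -- x = 0
    subst hx
    have hT0 : Top lam t G 0 = 0 := by unfold Top; norm_num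
    rw [Metric.continuousAt_iff]
    intro ε hε
    obtain ⟨n, hn⟩ := exists_pow_lt_of_lt_one hε hb1
    refine ⟨lam ^ n, by positivity, ?_⟩
    intro y hy
    rw [Real.dist_eq, sub_zero] at hy
    rw [Real.dist_eq, hT0, sub_zero]
    rcases le_or_gt y 0 with hy0 | hy0
    · have : Top lam t G y = 0 := by
        unfold Top
        rw [if_neg (by rintro ⟨h', _⟩; linarith), if_pos hy0]
      rw [this]; simpa using hε
    · have hylt : y < lam ^ n := lt_of_le_of_lt (le_abs_self y) hy
      have hy1 : y ≤ 1 := by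
        refine le_trans hylt.le ?_
        calc lam ^ n ≤ lam ^ 0 := (pow_le_pow_iff_nat h1 h2 _ _).2 (Nat.zero_le _)
        _ = 1 := pow_zero lam
      have habs : |Top lam t G y| = Top lam t G y :=
        abs_of_nonneg (Top_nonneg h1 h2 ht hKK y)
      rw [habs]
      have hd : n < dig lam y := by
        by_contra hc
        push_neg at hc
        have : lam ^ n ≤ lam ^ dig lam y := (pow_le_pow_iff_nat h1 h2 _ _).2 hc
        have := dig_spec (lam := lam) h2 hy0
        linarith
      calc Top lam t G y ≤ beta lam t ^ (dig lam y - 1) := Top_le h1 h2 ht hKK hy0 hy1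
      _ ≤ beta lam t ^ n := pow_le_pow_of_le_one hb.le hb1.le (by omega)
      _ < ε := hn
  · -- x > 0
    rcases le_or_gt x 1 with hx1 | hx1
    · set n := dig lam x with hndef
      have hn1 : 1 ≤ n := dig_pos h2 hx1 hx
      have hmem : x ∈ Wint lam n := mem_W_dig h2 hx hx1
      have hWopen : lam ^ n < x := hmem.1
      have hfc : ContinuousAt (fun y => beta lam t ^ n + cc lam t n * G (Fb lam n y)) x :=
        (continuousAt_const.add (continuousAt_const.mul
          ((hcont.comp (Fb_continuous n)).continuousAt)))
      rcases eq_or_lt_of_le hmem.2 with heq | hlt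
      · -- x = lam ^ (n-1), boundary point
        rw [continuousAt_iff_continuous_left_right]
        constructor
        · -- left
          refine hfc.continuousWithinAt.congr_of_eventuallyEq ?_ ?_
          · filter_upwards [Ioc_mem_nhdsLE hWopen] with y hy
            exact Top_W h1 h2 hn1 ⟨hy.1, hy.2.trans_eq heq⟩
          · exact Top_W h1 h2 hn1 hmem
        · -- right
          match n, hn1, heq with
          | 1, _, heq =>
            -- x = lam ^ 0 = 1
            have hx1' : x = 1 := by simpa using heq
            subst hx1'
            have hc1 : ContinuousWithinAt (fun _ : ℝ => (1:ℝ)) (Ici 1) 1 :=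
              continuousWithinAt_const
            refine hc1.congr ?_ ?_
            · intro y hy
              rcases eq_or_lt_of_le (mem_Ici.1 hy) with h | h
              · rw [← h]
                have := Top_pin h1 h2 ht hKK 0
                simpa using this
              · unfold Top
                rw [if_neg (by rintro ⟨_, h''⟩; linarith), if_neg (by linarith)]
            · have := Top_pin h1 h2 ht hKK 0
              simpa using this
          | (m+2), _, heq =>
            -- x = lam ^ (m+1)
            have hxval : x = lam ^ (m+1) := by simpa using heq
            subst hxval
            have hfc2 : ContinuousAt
                (fun y => beta lam t ^ (m+1) + cc lam t (m+1) * G (Fb lam (m+1) y))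
                (lam ^ (m+1)) :=
              (continuousAt_const.add (continuousAt_const.mul
                ((hcont.comp (Fb_continuous (m+1))).continuousAt)))
            refine hfc2.continuousWithinAt.congr_of_eventuallyEq ?_ ?_
            · have hlt2 : lam ^ (m+1) < lam ^ m := (pow_lt_pow_iff_nat h1 h2 _ _).2 (by omega)
              filter_upwards [Icc_mem_nhdsGE_of_mem ⟨le_refl _, hlt2⟩] with y hy
              rcases eq_or_lt_of_le hy.1 with h | h
              · rw [← h]
                exact Top_boundary h1 h2 ht hKK (by omega)
              · refine Top_W h1 h2 (by omega) ⟨h, ?_⟩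
                simpa using hy.2
            · exact Top_boundary h1 h2 ht hKK (by omega)
      · -- interior point
        refine hfc.congr ?_
        have hoo : Ioo (lam ^ n) (lam ^ (n-1)) ∈ 𝓝 x := Ioo_mem_nhds hWopen hlt
        filter_upwards [hoo] with y hy
        exact (Top_W h1 h2 hn1 ⟨hy.1, hy.2.le⟩).symm
    · -- x > 1
      have hev : (fun _ : ℝ => (1:ℝ)) =ᶠ[𝓝 x] Top lam t G := by
        filter_upwards [Ioi_mem_nhds hx1] with y hy
        unfold Top
        rw [if_neg (by rintro ⟨_, h''⟩; exact absurd h'' (not_le.2 hy)), if_neg (by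
          rw [not_le]; linarith [mem_Ioi.1 hy])]
      exact continuousAt_const.congr hev

lemma Top_isK (h1 : 0 < lam) (h2 : lam < 1) (ht : 0 < t) (hK : IsK lam t G) :
    IsK lam t (Top lam t G) := by
  refine ⟨Top_mono h1 h2 ht hK, Top_cont h1 h2 ht hK, ?_, ?_, Top_pin h1 h2 ht hK⟩
  · intro x hx
    unfold Top
    rw [if_neg (by rintro ⟨h', _⟩; linarith), if_pos hx]
  · intro x hx
    rcases eq_or_lt_of_le hx with h | h
    · rw [← h]
      have := Top_pin h1 h2 ht hK 0
      simpa using this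
    · unfold Top
      rw [if_neg (by rintro ⟨_, h''⟩; linarith), if_neg (by linarith)]

lemma Top_contraction (h1 : 0 < lam) (h2 : lam < 1) (ht : 0 < t) {G' : ℝ → ℝ} {B : ℝ}
    (hB : ∀ y, |G y - G' y| ≤ B) (x : ℝ) :
    |Top lam t G x - Top lam t G' x| ≤ (1 - beta lam t) * B := by
  have hB0 : 0 ≤ B := le_trans (abs_nonneg _) (hB 0)
  have h1b := one_sub_beta_pos h1 h2 ht
  unfold Top
  split
  · rename_i h
    have hcc := cc_pos h1 h2 ht (dig lam x)
    have hccle := cc_le h1 h2 ht (dig lam x)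
    have : beta lam t ^ dig lam x + cc lam t (dig lam x) * G (Fb lam (dig lam x) x)
        - (beta lam t ^ dig lam x + cc lam t (dig lam x) * G' (Fb lam (dig lam x) x))
        = cc lam t (dig lam x) * (G (Fb lam (dig lam x) x) - G' (Fb lam (dig lam x) x)) := by
      ring
    rw [this, abs_mul, abs_of_pos hcc]
    calc cc lam t (dig lam x) * |G (Fb lam (dig lam x) x) - G' (Fb lam (dig lam x) x)|
        ≤ cc lam t (dig lam x) * B := mul_le_mul_of_nonneg_left (hB _) hcc.le
    _ ≤ (1 - beta lam t) * B := mul_le_mul_of_nonneg_right hccle hB0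
  · simp only [sub_self, abs_zero]
    positivity

end cont

noncomputable def G0fun (t : ℝ) : ℝ → ℝ := fun x => (min 1 (max x 0)) ^ t

noncomputable def Git (lam t : ℝ) : ℕ → ℝ → ℝ := fun k => (Top lam t)^[k] (G0fun t)

noncomputable def Glim (lam t : ℝ) : ℝ → ℝ :=
  fun x => G0fun t x + ∑' k, (Git lam t (k+1) x - Git lam t k x)

section limit

variable {lam t : ℝ}

lemma Git_succ (k : ℕ) : Git lam t (k+1) = Top lam t (Git lam t k) := by
  unfold Git
  rw [Function.iterate_succ_apply']

lemma Git_zero : Git lam t 0 = G0fun t := rfl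

lemma Git_isK (h1 : 0 < lam) (h2 : lam < 1) (ht : 0 < t) (k : ℕ) : IsK lam t (Git lam t k) := by
  induction k with
  | zero => exact G0_isK h1 h2 ht
  | succ k ih => rw [Git_succ]; exact Top_isK h1 h2 ht ih

lemma Git_diff (h1 : 0 < lam) (h2 : lam < 1) (ht : 0 < t) (k : ℕ) (x : ℝ) :
    |Git lam t (k+1) x - Git lam t k x| ≤ (1 - beta lam t) ^ k := by
  induction k generalizing x with
  | zero =>
    have hK1 := Git_isK h1 h2 ht (lam := lam) (t := t) 1
    have hK0 := Git_isK h1 h2 ht (lam := lam) (t := t) 0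
    rw [pow_zero, abs_sub_le_iff]
    constructor
    · linarith [hK1.le_one x, hK0.nonneg x]
    · linarith [hK0.le_one x, hK1.nonneg x]
  | succ k ih =>
    have h := Top_contraction h1 h2 ht (G := Git lam t (k+1)) (G' := Git lam t k)
      (fun y => ih y) x
    rw [← Git_succ, ← Git_succ] at h
    simpa [pow_succ, mul_comm] using h

lemma Git_summable (h1 : 0 < lam) (h2 : lam < 1) (ht : 0 < t) (x : ℝ) :
    Summable (fun k => Git lam t (k+1) x - Git lam t k x) := by
  have hb := beta_pos (t := t) h1
  have hb1 := beta_lt_one h1 h2 ht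
  refine Summable.of_norm_bounded
    (summable_geometric_of_lt_one (r := 1 - beta lam t) (by linarith) (by linarith)) ?_
  intro k
  simpa [Real.norm_eq_abs] using Git_diff h1 h2 ht k x

lemma Git_tendsto (h1 : 0 < lam) (h2 : lam < 1) (ht : 0 < t) (x : ℝ) :
    Tendsto (fun k => Git lam t k x) atTop (𝓝 (Glim lam t x)) := by
  have hs := Git_summable h1 h2 ht (lam := lam) (t := t) x
  have h := hs.hasSum.tendsto_sum_nat
  have heq : ∀ K, ∑ i ∈ Finset.range K, (Git lam t (i+1) x - Git lam t i x)
      = Git lam t K x - Git lam t 0 x := fun K =>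
    Finset.sum_range_sub (f := fun i => Git lam t i x) K
  have h2' : Tendsto (fun K => Git lam t K x - Git lam t 0 x) atTop
      (𝓝 (∑' k, (Git lam t (k+1) x - Git lam t k x))) := by
    refine h.congr ?_
    intro K; rw [heq]
  have := h2'.add_const (Git lam t 0 x)
  simp only [sub_add_cancel] at this
  unfold Glim
  convert this using 2
  rw [Git_zero]
  ring

lemma Glim_pin (h1 : 0 < lam) (h2 : lam < 1) (ht : 0 < t) (m : ℕ) :
    Glim lam t (lam ^ m) = beta lam t ^ m := by
  refine tendsto_nhds_unique (Git_tendsto h1 h2 ht _) ?_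
  have : ∀ k, Git lam t k (lam ^ m) = beta lam t ^ m :=
    fun k => (Git_isK h1 h2 ht k).2.2.2.2 m
  simp only [this]
  exact tendsto_const_nhds

lemma Glim_zero (h1 : 0 < lam) (h2 : lam < 1) (ht : 0 < t) {x : ℝ} (hx : x ≤ 0) :
    Glim lam t x = 0 := by
  refine tendsto_nhds_unique (Git_tendsto h1 h2 ht _) ?_
  have : ∀ k, Git lam t k x = 0 := fun k => (Git_isK h1 h2 ht k).2.2.1 x hx
  simp only [this]
  exact tendsto_const_nhds

lemma Glim_one (h1 : 0 < lam) (h2 : lam < 1) (ht : 0 < t) {x : ℝ} (hx : 1 ≤ x) :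
    Glim lam t x = 1 := by
  refine tendsto_nhds_unique (Git_tendsto h1 h2 ht _) ?_
  have : ∀ k, Git lam t k x = 1 := fun k => (Git_isK h1 h2 ht k).2.2.2.1 x hx
  simp only [this]
  exact tendsto_const_nhds

lemma Glim_mono (h1 : 0 < lam) (h2 : lam < 1) (ht : 0 < t) : Monotone (Glim lam t) := by
  intro x y hxy
  refine le_of_tendsto_of_tendsto' (Git_tendsto h1 h2 ht x) (Git_tendsto h1 h2 ht y) ?_
  intro k
  exact (Git_isK h1 h2 ht k).1 hxy

lemma Glim_nonneg (h1 : 0 < lam) (h2 : lam < 1) (ht : 0 < t) (x : ℝ) : 0 ≤ Glim lam t x := by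
  rcases le_or_gt x 0 with h | h
  · rw [Glim_zero h1 h2 ht h]
  · rw [← Glim_zero h1 h2 ht (le_refl 0)]
    exact Glim_mono h1 h2 ht h.le

lemma Glim_dist (h1 : 0 < lam) (h2 : lam < 1) (ht : 0 < t) (K : ℕ) (x : ℝ) :
    |Glim lam t x - Git lam t K x| ≤ (1 - beta lam t) ^ K / beta lam t := by
  have hb := beta_pos (t := t) h1
  have hb1 := beta_lt_one h1 h2 ht
  have hs := Git_summable h1 h2 ht (lam := lam) (t := t) x
  have htail := (Summable.sum_add_tsum_nat_add K hs).symm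
  have heq : ∑ i ∈ Finset.range K, (Git lam t (i+1) x - Git lam t i x)
      = Git lam t K x - Git lam t 0 x :=
    Finset.sum_range_sub (f := fun i => Git lam t i x) K
  have hGlim : Glim lam t x - Git lam t K x
      = ∑' i, (Git lam t (i+K+1) x - Git lam t (i+K) x) := by
    unfold Glim
    rw [Git_zero] at heq
    have : ∑' k, (Git lam t (k+1) x - Git lam t k x)
        = (Git lam t K x - G0fun t x) + ∑' i, (Git lam t (i+K+1) x - Git lam t (i+K) x) := by
      rw [htail, heq]
    rw [this]
    ring
  rw [hGlim]
  have hsum2 : Summable (fun i => (1 - beta lam t) ^ (i + K)) := by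
    refine Summable.comp_injective ?_ (add_left_injective K)
    exact summable_geometric_of_lt_one (by linarith) (by linarith)
  calc |∑' i, (Git lam t (i+K+1) x - Git lam t (i+K) x)|
      ≤ ∑' i, (1 - beta lam t) ^ (i + K) := by
        rw [← Real.norm_eq_abs]
        refine (norm_tsum_le_tsum_norm ?_).trans ?_
        · refine hsum2.of_nonneg_of_le (fun i => norm_nonneg _) ?_
          intro i
          simpa [Real.norm_eq_abs] using Git_diff h1 h2 ht (i+K) x
        · refine Summable.tsum_le_tsum ?_ ?_ hsum2
          · intro i
            simpa [Real.norm_eq_abs] using Git_diff h1 h2 ht (i+K) x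
          · refine hsum2.of_nonneg_of_le (fun i => norm_nonneg _) ?_
            intro i
            simpa [Real.norm_eq_abs] using Git_diff h1 h2 ht (i+K) x
  _ = (1 - beta lam t) ^ K / beta lam t := by
        have : ∀ i : ℕ, (1 - beta lam t) ^ (i + K)
            = (1 - beta lam t) ^ K * (1 - beta lam t) ^ i := by
          intro i; rw [pow_add]; ring
        simp only [this]
        rw [tsum_mul_left, tsum_geometric_of_lt_one (by linarith) (by linarith)]
        field_simp
        rw [sub_sub_cancel]; field_simp

lemma Glim_cont (h1 : 0 < lam) (h2 : lam < 1) (ht : 0 < t) : Continuous (Glim lam t) := by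
  have hb := beta_pos (t := t) h1
  have hb1 := beta_lt_one h1 h2 ht
  have hu : TendstoUniformly (fun k => Git lam t k) (Glim lam t) atTop := by
    rw [Metric.tendstoUniformly_iff]
    intro ε hε
    have htend : Tendsto (fun K : ℕ => (1 - beta lam t) ^ K / beta lam t) atTop (𝓝 0) := by
      have := tendsto_pow_atTop_nhds_zero_of_lt_one (by linarith : (0:ℝ) ≤ 1 - beta lam t)
        (by linarith : 1 - beta lam t < 1)
      simpa using this.div_const (beta lam t)
    filter_upwards [htend.eventually (gt_mem_nhds hε)] with K hK x
    rw [Real.dist_eq]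
    exact lt_of_le_of_lt (Glim_dist h1 h2 ht K x) hK
  exact hu.continuous (Eventually.of_forall fun k => (Git_isK h1 h2 ht k).2.1).frequently

lemma Glim_isK (h1 : 0 < lam) (h2 : lam < 1) (ht : 0 < t) : IsK lam t (Glim lam t) :=
  ⟨Glim_mono h1 h2 ht, Glim_cont h1 h2 ht, fun x hx => Glim_zero h1 h2 ht hx,
    fun x hx => Glim_one h1 h2 ht hx, Glim_pin h1 h2 ht⟩

lemma Glim_FE (h1 : 0 < lam) (h2 : lam < 1) (ht : 0 < t) {x : ℝ} (hx0 : 0 < x) (hx1 : x ≤ 1) :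
    Glim lam t x = beta lam t ^ dig lam x + cc lam t (dig lam x)
      * Glim lam t (Fb lam (dig lam x) x) := by
  have h1' : Tendsto (fun k => Git lam t (k+1) x) atTop (𝓝 (Glim lam t x)) :=
    (Git_tendsto h1 h2 ht x).comp (tendsto_add_atTop_nat 1)
  have h2' : Tendsto (fun k => beta lam t ^ dig lam x + cc lam t (dig lam x)
      * Git lam t k (Fb lam (dig lam x) x)) atTop
      (𝓝 (beta lam t ^ dig lam x + cc lam t (dig lam x)
        * Glim lam t (Fb lam (dig lam x) x))) :=
    tendsto_const_nhds.add (tendsto_const_nhds.mul (Git_tendsto h1 h2 ht _))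
  refine tendsto_nhds_unique (h1'.congr ?_) h2'
  intro k
  rw [Git_succ, Top_apply hx0 hx1]

end limit

open Classical in
noncomputable def GS (lam t : ℝ) : StieltjesFunction ℝ :=
  if h : 0 < lam ∧ lam < 1 ∧ 0 < t then
    { toFun := Glim lam t
      mono' := Glim_mono h.1 h.2.1 h.2.2
      right_continuous' := fun x => (Glim_cont h.1 h.2.1 h.2.2).continuousWithinAt }
  else StieltjesFunction.id

noncomputable def mm (lam t : ℝ) : Measure ℝ := (GS lam t).measure

section stieltjes

variable {lam t : ℝ}

lemma GS_apply (h1 : 0 < lam) (h2 : lam < 1) (ht : 0 < t) (x : ℝ) :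
    GS lam t x = Glim lam t x := by
  unfold GS
  rw [dif_pos ⟨h1, h2, ht⟩]

lemma mm_Ioc (h1 : 0 < lam) (h2 : lam < 1) (ht : 0 < t) (a b : ℝ) :
    mm lam t (Set.Ioc a b) = ENNReal.ofReal (Glim lam t b - Glim lam t a) := by
  unfold mm
  rw [StieltjesFunction.measure_Ioc, GS_apply h1 h2 ht, GS_apply h1 h2 ht]

lemma mm_univ (h1 : 0 < lam) (h2 : lam < 1) (ht : 0 < t) : mm lam t Set.univ = 1 := by
  unfold mm
  have hbot : Tendsto (GS lam t) atBot (𝓝 0) := by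
    refine tendsto_const_nhds.congr' ?_
    filter_upwards [eventually_le_atBot (0:ℝ)] with x hx
    rw [GS_apply h1 h2 ht, Glim_zero h1 h2 ht hx]
  have htop : Tendsto (GS lam t) atTop (𝓝 1) := by
    refine tendsto_const_nhds.congr' ?_
    filter_upwards [eventually_ge_atTop (1:ℝ)] with x hx
    rw [GS_apply h1 h2 ht, Glim_one h1 h2 ht hx]
  rw [(GS lam t).measure_univ hbot htop]
  norm_num

lemma mm_prob (h1 : 0 < lam) (h2 : lam < 1) (ht : 0 < t) : IsProbabilityMeasure (mm lam t) :=
  ⟨mm_univ h1 h2 ht⟩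

lemma mm_Ioc01 (h1 : 0 < lam) (h2 : lam < 1) (ht : 0 < t) : mm lam t (Set.Ioc 0 1) = 1 := by
  rw [mm_Ioc h1 h2 ht, Glim_one h1 h2 ht le_rfl, Glim_zero h1 h2 ht le_rfl]
  norm_num

lemma mm_W (h1 : 0 < lam) (h2 : lam < 1) (ht : 0 < t) {k : ℕ} (hk : 1 ≤ k) :
    mm lam t (Wint lam k) = ENNReal.ofReal ((1 - beta lam t) * beta lam t ^ (k-1)) := by
  unfold Wint
  rw [mm_Ioc h1 h2 ht, Glim_pin h1 h2 ht, Glim_pin h1 h2 ht]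
  congr 1
  match k, hk with
  | (m+1), _ =>
    have e : m + 1 - 1 = m := by omega
    rw [e]
    ring

lemma Glim_FE_Icc (h1 : 0 < lam) (h2 : lam < 1) (ht : 0 < t) {n : ℕ} (hn : 1 ≤ n) {u : ℝ}
    (hu : u ∈ Set.Icc (lam ^ n) (lam ^ (n-1))) :
    Glim lam t u = beta lam t ^ n + cc lam t n * Glim lam t (Fb lam n u) := by
  rcases eq_or_lt_of_le hu.1 with heq | hlt
  · rw [← heq, Glim_pin h1 h2 ht, Fb_pow_self h1 h2, Glim_zero h1 h2 ht le_rfl]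
    ring
  · have hmem : u ∈ Wint lam n := ⟨hlt, hu.2⟩
    have h := W_subset_Ioc h1 h2 hn hmem
    have := Glim_FE h1 h2 ht h.1 h.2
    rwa [dig_eq_of_mem h1 h2 hn hmem] at this

lemma fb_interval (h1 : 0 < lam) (h2 : lam < 1) {n : ℕ} (hn : 1 ≤ n) :
    Gb lam n ⁻¹' (Wint lam n) = Set.Ioc 0 (lam ^ (n-2)) := by
  unfold Wint
  rw [Gb_preimage_Ioc h1 h2, Fb_pow_self h1 h2, Fb_pow_pred h1 h2 hn]

lemma map_eq (h1 : 0 < lam) (h2 : lam < 1) (ht : 0 < t) {n : ℕ} (hn : 1 ≤ n) :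
    ((mm lam t).map (Gb lam n)).restrict (Wint lam n)
      = (ENNReal.ofReal (1 / cc lam t n)) • ((mm lam t).restrict (Wint lam n)) := by
  have hGb := Gb_measurable (lam := lam) n
  haveI : IsProbabilityMeasure (mm lam t) := mm_prob h1 h2 ht
  haveI : IsProbabilityMeasure ((mm lam t).map (Gb lam n)) :=
    Measure.isProbabilityMeasure_map hGb.aemeasurable
  have hcc := cc_pos h1 h2 ht n
  have key : ∀ a b : ℝ, ((mm lam t).map (Gb lam n)).restrict (Wint lam n) (Set.Ioc a b)
      = ((ENNReal.ofReal (1 / cc lam t n)) • ((mm lam t).restrict (Wint lam n))) (Set.Ioc a b) := by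
    intro a b
    set a' := a ⊔ lam ^ n with ha'
    set b' := b ⊓ lam ^ (n-1) with hb'
    have hrs : ((mm lam t).map (Gb lam n)).restrict (Wint lam n) (Set.Ioc a b)
        = mm lam t (Set.Ioc (Fb lam n a') (Fb lam n b')) := by
      rw [Measure.restrict_apply measurableSet_Ioc]
      unfold Wint
      rw [Set.Ioc_inter_Ioc, Measure.map_apply hGb measurableSet_Ioc, Gb_preimage_Ioc h1 h2]
    have hrs2 : (ENNReal.ofReal (1 / cc lam t n) • ((mm lam t).restrict (Wint lam n)))
          (Set.Ioc a b)
        = ENNReal.ofReal (1 / cc lam t n) * mm lam t (Set.Ioc a' b') := by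
      rw [Measure.smul_apply, Measure.restrict_apply measurableSet_Ioc, smul_eq_mul]
      unfold Wint
      rw [Set.Ioc_inter_Ioc]
    rw [hrs, hrs2, mm_Ioc h1 h2 ht, mm_Ioc h1 h2 ht]
    rcases lt_or_ge a' b' with hab | hab
    · have ha'mem : a' ∈ Set.Icc (lam ^ n) (lam ^ (n-1)) :=
        ⟨le_sup_right, le_trans hab.le inf_le_right⟩
      have hb'mem : b' ∈ Set.Icc (lam ^ n) (lam ^ (n-1)) :=
        ⟨le_trans le_sup_right hab.le, inf_le_right⟩
      have hFE1 := Glim_FE_Icc h1 h2 ht hn ha'mem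
      have hFE2 := Glim_FE_Icc h1 h2 ht hn hb'mem
      rw [← ENNReal.ofReal_mul (by positivity)]
      congr 1
      rw [hFE1, hFE2]
      field_simp
      ring
    · have hL : Glim lam t (Fb lam n b') - Glim lam t (Fb lam n a') ≤ 0 := by
        have := Glim_mono h1 h2 ht ((Fb_strictMono h1 h2 n).monotone hab)
        linarith
      have hR : Glim lam t b' - Glim lam t a' ≤ 0 := by
        have := Glim_mono h1 h2 ht hab
        linarith
      rw [ENNReal.ofReal_of_nonpos hL, ENNReal.ofReal_of_nonpos hR, mul_zero]
  refine Measure.ext_of_Ioc_finite _ _ ?_ (fun a b _ => key a b)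
  · have h1' := key (lam ^ n) (lam ^ (n-1))
    have hWW : Set.Ioc (lam ^ n) (lam ^ (n-1)) ∩ Wint lam n = Wint lam n := by
      unfold Wint; exact Set.inter_self _
    rw [Measure.restrict_apply measurableSet_Ioc, Measure.smul_apply,
      Measure.restrict_apply measurableSet_Ioc, hWW] at h1'
    rw [Measure.restrict_apply_univ, Measure.smul_apply, Measure.restrict_apply_univ, h1',
      smul_eq_mul]

lemma conf_image (h1 : 0 < lam) (h2 : lam < 1) (ht : 0 < t) {n : ℕ} (hn : 1 ≤ n)
    {A : Set ℝ} (hA : MeasurableSet A) (hsub : A ⊆ Wint lam n) :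
    mm lam t (Fb lam n '' A) = ENNReal.ofReal (1 / cc lam t n) * mm lam t A := by
  have himg : Fb lam n '' A = Gb lam n ⁻¹' A := by
    ext y
    constructor
    · rintro ⟨x, hx, rfl⟩
      rwa [Set.mem_preimage, Gb_Fb h1 h2]
    · intro hy
      exact ⟨Gb lam n y, hy, Fb_Gb h1 h2 n y⟩
  rw [himg, ← Measure.map_apply (Gb_measurable n) hA]
  have step : ((mm lam t).map (Gb lam n)) A
      = (((mm lam t).map (Gb lam n)).restrict (Wint lam n)) A := by
    rw [Measure.restrict_apply hA, Set.inter_eq_self_of_subset_left hsub]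
  rw [step, map_eq h1 h2 ht hn, Measure.smul_apply, Measure.restrict_apply hA,
    Set.inter_eq_self_of_subset_left hsub, smul_eq_mul]

lemma conf_pre (h1 : 0 < lam) (h2 : lam < 1) (ht : 0 < t) {n : ℕ} (hn : 1 ≤ n)
    {A : Set ℝ} (hA : MeasurableSet A) :
    mm lam t (Wint lam n ∩ Fb lam n ⁻¹' A)
      = ENNReal.ofReal (cc lam t n) * mm lam t (A ∩ Set.Ioc 0 (lam ^ (n-2))) := by
  have hGb := Gb_measurable (lam := lam) n
  have hS : MeasurableSet (Wint lam n ∩ Fb lam n ⁻¹' A) :=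
    measurableSet_Ioc.inter ((Fb_continuous n).measurable hA)
  have hcc := cc_pos h1 h2 ht n
  have hpre : Gb lam n ⁻¹' (Wint lam n ∩ Fb lam n ⁻¹' A) = Set.Ioc 0 (lam ^ (n-2)) ∩ A := by
    rw [Set.preimage_inter, fb_interval h1 h2 hn]
    congr 1
    ext y
    simp only [Set.mem_preimage, Fb_Gb h1 h2]
  have step' : (((mm lam t).map (Gb lam n)).restrict (Wint lam n))
        (Wint lam n ∩ Fb lam n ⁻¹' A)
      = ((ENNReal.ofReal (1 / cc lam t n)) • ((mm lam t).restrict (Wint lam n)))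
        (Wint lam n ∩ Fb lam n ⁻¹' A) := by
    rw [map_eq h1 h2 ht hn]
  rw [Measure.restrict_apply hS, Set.inter_eq_self_of_subset_left Set.inter_subset_left,
    Measure.map_apply hGb hS, hpre, Measure.smul_apply, Measure.restrict_apply hS,
    Set.inter_eq_self_of_subset_left Set.inter_subset_left, smul_eq_mul] at step'
  rw [Set.inter_comm] at step'
  rw [step', ← mul_assoc, ← ENNReal.ofReal_mul hcc.le, mul_one_div, div_self hcc.ne',
    ENNReal.ofReal_one, one_mul]

end stieltjes

section mu

variable {lam t : ℝ}

lemma Wint_meas (n : ℕ) : MeasurableSet (Wint lam n) := measurableSet_Ioc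

lemma W_disjoint (h1 : 0 < lam) (h2 : lam < 1) {j k : ℕ} (hj : 1 ≤ j) (hk : 1 ≤ k)
    (hjk : j ≠ k) : Disjoint (Wint lam j) (Wint lam k) := by
  rw [Set.disjoint_left]
  intro x hxj hxk
  have e1 := dig_eq_of_mem h1 h2 hj hxj
  have e2 := dig_eq_of_mem h1 h2 hk hxk
  omega

lemma Flam_preimage (h1 : 0 < lam) (h2 : lam < 1) (B : Set ℝ) :
    Flam lam ⁻¹' B = (B \ Set.Ioc 0 1)
      ∪ ⋃ i : ℕ, (Wint lam (i+1) ∩ Fb lam (i+1) ⁻¹' B) := by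
  ext x
  simp only [Set.mem_preimage, Set.mem_union, Set.mem_diff, Set.mem_iUnion, Set.mem_inter_iff,
    Set.mem_Ioc]
  constructor
  · intro hx
    by_cases hx01 : 0 < x ∧ x ≤ 1
    · right
      have hd := dig_pos h2 hx01.2 hx01.1
      refine ⟨dig lam x - 1, ?_, ?_⟩
      · have e : dig lam x - 1 + 1 = dig lam x := by omega
        rw [e]
        exact mem_W_dig h2 hx01.1 hx01.2
      · have e : dig lam x - 1 + 1 = dig lam x := by omega
        rw [e, ← Flam_eq hx01.1 hx01.2]
        exact hx
    · left
      have : Flam lam x = x := by unfold Flam; rw [if_neg hx01]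
      rw [this] at hx
      exact ⟨hx, hx01⟩
  · intro hx
    rcases hx with ⟨hB, hnot⟩ | ⟨i, hW, hF⟩
    · have : Flam lam x = x := by unfold Flam; rw [if_neg hnot]
      rwa [this]
    · rwa [Flam_eq_W h1 h2 (by omega) hW]

lemma Flam_measurable (h1 : 0 < lam) (h2 : lam < 1) : Measurable (Flam lam) := by
  intro B hB
  rw [Flam_preimage h1 h2]
  exact (hB.diff measurableSet_Ioc).union
    (MeasurableSet.iUnion fun i => (Wint_meas _).inter ((Fb_continuous _).measurable hB))

lemma Ioc_pow_iUnion (h1 : 0 < lam) (h2 : lam < 1) (m : ℕ) :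
    Set.Ioc (0:ℝ) (lam ^ m) = ⋃ i : ℕ, Wint lam (m+1+i) := by
  ext x
  simp only [Set.mem_iUnion, Set.mem_Ioc]
  constructor
  · rintro ⟨hx0, hxm⟩
    have hx1 : x ≤ 1 := hxm.trans (pow_le_one₀ h1.le h2.le)
    have hd : m + 1 ≤ dig lam x := by
      by_contra hc
      push_neg at hc
      have hle : lam ^ m ≤ lam ^ dig lam x := (pow_le_pow_iff_nat h1 h2 _ _).2 (by omega)
      have := dig_spec (lam := lam) h2 hx0
      linarith
    refine ⟨dig lam x - (m+1), ?_⟩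
    have e : m + 1 + (dig lam x - (m+1)) = dig lam x := by omega
    rw [e]
    exact mem_W_dig h2 hx0 hx1
  · rintro ⟨i, hxi⟩
    obtain ⟨hxi1, hxi2⟩ := hxi
    have h0 : (0:ℝ) < lam ^ (m+1+i) := by positivity
    refine ⟨by linarith, hxi2.trans ?_⟩
    exact (pow_le_pow_iff_nat h1 h2 _ _).2 (by omega)

lemma mm_inter_Ioc (h1 : 0 < lam) (h2 : lam < 1) (ht : 0 < t) {A : Set ℝ}
    (hA : MeasurableSet A) (m : ℕ) :
    mm lam t (A ∩ Set.Ioc 0 (lam ^ m)) = ∑' i, mm lam t (A ∩ Wint lam (m+1+i)) := by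
  rw [Ioc_pow_iUnion h1 h2 m, Set.inter_iUnion]
  refine measure_iUnion ?_ ?_
  · intro i j hij
    have hd := W_disjoint h1 h2 (j := m+1+i) (k := m+1+j) (by omega) (by omega) (by omega)
    exact hd.mono Set.inter_subset_right Set.inter_subset_right
  · exact fun i => hA.inter (Wint_meas _)

lemma tsum_shift (F : ℕ → ENNReal) (s : ℕ) :
    ∑' (b' : ℕ), F (s + b') = ∑' (b : ℕ), if s ≤ b then F b else 0 := by
  set f : ℕ → ENNReal := fun b => if s ≤ b then F b else 0 with hf
  have hg : Function.Injective (fun b' : ℕ => s + b') := fun a b h => Nat.add_left_cancel h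
  have hrange : ∀ x, x ∉ Set.range (fun b' : ℕ => s + b') → f x = 0 := by
    intro x hx
    rw [hf]
    simp only
    rw [if_neg]
    intro hle
    exact hx ⟨x - s, by show s + (x - s) = x; omega⟩
  have h := (Function.Injective.hasSum_iff hg hrange).2 ENNReal.summable.hasSum
  have hcomp : (f ∘ fun b' => s + b') = fun b' => F (s + b') := by
    funext b'
    simp [hf, Nat.le_add_right]
  rw [hcomp] at h
  exact h.tsum_eq

noncomputable def Hr (lam t : ℝ) (j : ℕ) : ℝ := (1 - 2*beta lam t) / (1 - beta lam t)^(j+1)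

noncomputable def muM (lam t : ℝ) : Measure ℝ :=
  Measure.sum (fun i : ℕ => ENNReal.ofReal (Hr lam t (i+1)) • (mm lam t).restrict (Wint lam (i+1)))

lemma muM_apply {A : Set ℝ} (hA : MeasurableSet A) :
    muM lam t A = ∑' i, ENNReal.ofReal (Hr lam t (i+1)) * mm lam t (A ∩ Wint lam (i+1)) := by
  unfold muM
  rw [Measure.sum_apply _ hA]
  congr 1
  funext i
  rw [Measure.smul_apply, Measure.restrict_apply hA, smul_eq_mul]

lemma Hr_sum (h1 : 0 < lam) (h2 : lam < 1) (ht : 0 < t) (hl : beta lam t < 1/2) (b : ℕ) :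
    ∑ i ∈ Finset.range (b+2), Hr lam t (i+1) * cc lam t (i+1) = Hr lam t (b+1) := by
  have hb := beta_pos (t := t) h1
  have h1b := one_sub_beta_pos h1 h2 ht
  induction b with
  | zero =>
    rw [Finset.sum_range_succ, Finset.sum_range_one]
    unfold Hr cc
    rw [if_pos rfl, if_neg (by omega)]
    field_simp
    ring
  | succ b ih =>
    rw [Finset.sum_range_succ, ih]
    unfold Hr cc
    rw [if_neg (by omega)]
    field_simp
    ring

lemma muM_invariant (h1 : 0 < lam) (h2 : lam < 1) (ht : 0 < t) (hl : beta lam t < 1/2)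
    {A : Set ℝ} (hA : MeasurableSet A) :
    muM lam t (Flam lam ⁻¹' A) = muM lam t A := by
  have hb := beta_pos (t := t) h1
  have h1b := one_sub_beta_pos h1 h2 ht
  have hFA : MeasurableSet (Flam lam ⁻¹' A) := Flam_measurable h1 h2 hA
  rw [muM_apply hFA, muM_apply hA]
  have hstep : ∀ i : ℕ, ENNReal.ofReal (Hr lam t (i+1)) * mm lam t (Flam lam ⁻¹' A ∩ Wint lam (i+1))
      = ∑' b : ℕ, (if i ≤ b + 1 then ENNReal.ofReal (Hr lam t (i+1) * cc lam t (i+1)) else 0)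
          * mm lam t (A ∩ Wint lam (b+1)) := by
    intro i
    have hset : Flam lam ⁻¹' A ∩ Wint lam (i+1) = Wint lam (i+1) ∩ Fb lam (i+1) ⁻¹' A := by
      ext x
      simp only [Set.mem_inter_iff, Set.mem_preimage]
      constructor
      · rintro ⟨hxA, hxW⟩
        refine ⟨hxW, ?_⟩
        rwa [← Flam_eq_W h1 h2 (by omega) hxW]
      · rintro ⟨hxW, hxA⟩
        refine ⟨?_, hxW⟩
        rwa [Flam_eq_W h1 h2 (by omega) hxW]
    rw [hset, conf_pre h1 h2 ht (by omega) hA]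
    have e2 : i + 1 - 2 = i - 1 := by omega
    rw [e2, mm_inter_Ioc h1 h2 ht hA (i-1)]
    have hsh : ∀ b' : ℕ, mm lam t (A ∩ Wint lam ((i-1) + 1 + b'))
        = (fun b => mm lam t (A ∩ Wint lam (b+1))) ((i-1) + b') := by
      intro b'
      have e : (i-1) + 1 + b' = ((i-1) + b') + 1 := by omega
      rw [e]
    calc ENNReal.ofReal (Hr lam t (i+1)) * (ENNReal.ofReal (cc lam t (i+1))
          * ∑' b', mm lam t (A ∩ Wint lam ((i-1) + 1 + b')))
        = ENNReal.ofReal (Hr lam t (i+1) * cc lam t (i+1))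
          * ∑' b', (fun b => mm lam t (A ∩ Wint lam (b+1))) ((i-1) + b') := by
          rw [← mul_assoc, ← ENNReal.ofReal_mul]
          · congr 1
            exact tsum_congr hsh
          · exact le_of_lt (div_pos (by linarith) (pow_pos h1b _))
    _ = ENNReal.ofReal (Hr lam t (i+1) * cc lam t (i+1))
          * ∑' b, if i - 1 ≤ b then mm lam t (A ∩ Wint lam (b+1)) else 0 := by
          rw [tsum_shift (fun b => mm lam t (A ∩ Wint lam (b+1))) (i-1)]
    _ = ∑' b : ℕ, (if i ≤ b + 1 then ENNReal.ofReal (Hr lam t (i+1) * cc lam t (i+1)) else 0)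
          * mm lam t (A ∩ Wint lam (b+1)) := by
          rw [← ENNReal.tsum_mul_left]
          congr 1
          funext b
          by_cases hib : i - 1 ≤ b
          · rw [if_pos hib, if_pos (by omega)]
          · rw [if_neg hib, if_neg (by omega), mul_zero, zero_mul]
  calc ∑' i, ENNReal.ofReal (Hr lam t (i+1)) * mm lam t (Flam lam ⁻¹' A ∩ Wint lam (i+1))
      = ∑' i, ∑' b, (if i ≤ b + 1 then ENNReal.ofReal (Hr lam t (i+1) * cc lam t (i+1)) else 0)
          * mm lam t (A ∩ Wint lam (b+1)) := tsum_congr hstep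
  _ = ∑' b, ∑' i, (if i ≤ b + 1 then ENNReal.ofReal (Hr lam t (i+1) * cc lam t (i+1)) else 0)
          * mm lam t (A ∩ Wint lam (b+1)) := ENNReal.tsum_comm
  _ = ∑' b, ENNReal.ofReal (Hr lam t (b+1)) * mm lam t (A ∩ Wint lam (b+1)) := by
      refine tsum_congr fun b => ?_
      rw [ENNReal.tsum_mul_right]
      congr 1
      have hfin : ∑' i, (if i ≤ b + 1 then ENNReal.ofReal (Hr lam t (i+1) * cc lam t (i+1)) else 0)
          = ∑ i ∈ Finset.range (b+2),
              (if i ≤ b + 1 then ENNReal.ofReal (Hr lam t (i+1) * cc lam t (i+1)) else 0) := by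
        refine tsum_eq_sum ?_
        intro i hi
        rw [if_neg]
        simp only [Finset.mem_range] at hi
        omega
      rw [hfin]
      have : ∀ i ∈ Finset.range (b+2),
          (if i ≤ b + 1 then ENNReal.ofReal (Hr lam t (i+1) * cc lam t (i+1)) else 0)
          = ENNReal.ofReal (Hr lam t (i+1) * cc lam t (i+1)) := by
        intro i hi
        simp only [Finset.mem_range] at hi
        rw [if_pos (by omega)]
      rw [Finset.sum_congr rfl this, ← ENNReal.ofReal_sum_of_nonneg, Hr_sum h1 h2 ht hl b]
      intro i _
      have hcc := cc_pos h1 h2 ht (i+1)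
      have hHr : 0 < Hr lam t (i+1) := div_pos (by linarith) (pow_pos h1b _)
      positivity

end mu

section total

variable {lam t : ℝ}

lemma hr_ratio (h1 : 0 < lam) (h2 : lam < 1) (ht : 0 < t) (hl : beta lam t < 1/2) :
    0 ≤ beta lam t / (1 - beta lam t) ∧ beta lam t / (1 - beta lam t) < 1 := by
  have hb := beta_pos (t := t) h1
  have h1b := one_sub_beta_pos h1 h2 ht
  constructor
  · positivity
  · rw [div_lt_one h1b]
    linarith

lemma muM_term (h1 : 0 < lam) (h2 : lam < 1) (ht : 0 < t) (hl : beta lam t < 1/2) (i : ℕ) :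
    ENNReal.ofReal (Hr lam t (i+1)) * mm lam t (Wint lam (i+1))
      = ENNReal.ofReal (((1 - 2*beta lam t)/(1 - beta lam t))
          * (beta lam t / (1 - beta lam t))^i) := by
  have hb := beta_pos (t := t) h1
  have h1b := one_sub_beta_pos h1 h2 ht
  have hHr : 0 < Hr lam t (i+1) := div_pos (by linarith) (pow_pos h1b _)
  rw [mm_W h1 h2 ht (by omega), ← ENNReal.ofReal_mul hHr.le]
  congr 1
  have e : i + 1 - 1 = i := by omega
  rw [e]
  unfold Hr
  rw [div_pow]
  field_simp
  ring

lemma muM_of_superset (h1 : 0 < lam) (h2 : lam < 1) (ht : 0 < t) (hl : beta lam t < 1/2)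
    {A : Set ℝ} (hA : MeasurableSet A) (hsup : ∀ i : ℕ, Wint lam (i+1) ⊆ A) :
    muM lam t A = 1 := by
  have hb := beta_pos (t := t) h1
  have h1b := one_sub_beta_pos h1 h2 ht
  obtain ⟨hr0, hr1⟩ := hr_ratio h1 h2 ht hl
  rw [muM_apply hA]
  have hterm : ∀ i : ℕ, ENNReal.ofReal (Hr lam t (i+1)) * mm lam t (A ∩ Wint lam (i+1))
      = ENNReal.ofReal (((1 - 2*beta lam t)/(1 - beta lam t))
          * (beta lam t / (1 - beta lam t))^i) := by
    intro i
    rw [Set.inter_eq_self_of_subset_right (hsup i)]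
    exact muM_term h1 h2 ht hl i
  rw [tsum_congr hterm]
  have hsumm : Summable (fun i : ℕ => ((1 - 2*beta lam t)/(1 - beta lam t))
      * (beta lam t / (1 - beta lam t))^i) :=
    (summable_geometric_of_lt_one hr0 hr1).mul_left _
  rw [← ENNReal.ofReal_tsum_of_nonneg
    (fun i => mul_nonneg (div_nonneg (by linarith) h1b.le) (pow_nonneg hr0 i)) hsumm]
  rw [tsum_mul_left, tsum_geometric_of_lt_one hr0 hr1]
  have h12 : (0:ℝ) < 1 - 2*beta lam t := by linarith
  have h1r : 1 - beta lam t / (1 - beta lam t) = (1 - 2*beta lam t)/(1 - beta lam t) := by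
    field_simp
    ring
  have : ((1 - 2*beta lam t)/(1 - beta lam t))
      * (1 - beta lam t / (1 - beta lam t))⁻¹ = 1 := by
    rw [h1r, inv_div]
    field_simp
  rw [this, ENNReal.ofReal_one]

lemma muM_prob (h1 : 0 < lam) (h2 : lam < 1) (ht : 0 < t) (hl : beta lam t < 1/2) :
    IsProbabilityMeasure (muM lam t) :=
  ⟨muM_of_superset h1 h2 ht hl MeasurableSet.univ (fun _ => Set.subset_univ _)⟩

lemma muM_Ioc01 (h1 : 0 < lam) (h2 : lam < 1) (ht : 0 < t) (hl : beta lam t < 1/2) :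
    muM lam t (Set.Ioc 0 1) = 1 :=
  muM_of_superset h1 h2 ht hl measurableSet_Ioc (fun i => W_subset_Ioc h1 h2 (by omega))

lemma muM_ac : muM lam t ≪ mm lam t := by
  refine Measure.AbsolutelyContinuous.mk (fun s hs hs0 => ?_)
  rw [muM_apply hs]
  have hz : ∀ i : ℕ, mm lam t (s ∩ Wint lam (i+1)) = 0 :=
    fun i => measure_mono_null Set.inter_subset_left hs0
  simp [hz]

lemma muM_W (h1 : 0 < lam) (h2 : lam < 1) (ht : 0 < t) (hl : beta lam t < 1/2)
    {j : ℕ} (hj : 1 ≤ j) :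
    muM lam t (Wint lam j) = ENNReal.ofReal ((1 - 2*beta lam t)/beta lam t
      * (beta lam t/(1 - beta lam t))^j) := by
  have hb := beta_pos (t := t) h1
  have h1b := one_sub_beta_pos h1 h2 ht
  match j, hj with
  | (b+1), _ =>
    rw [muM_apply (Wint_meas _)]
    rw [tsum_eq_single b ?_]
    · rw [Set.inter_self, mm_W h1 h2 ht (by omega)]
      have hHr : 0 < Hr lam t (b+1) := div_pos (by linarith) (pow_pos h1b _)
      rw [← ENNReal.ofReal_mul hHr.le]
      congr 1
      have e : b + 1 - 1 = b := by omega
      rw [e]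
      unfold Hr
      rw [div_pow]
      field_simp
      ring
    · intro i hib
      have hd := W_disjoint h1 h2 (j := b+1) (k := i+1) (by omega) (by omega) (by omega)
      rw [Set.disjoint_iff_inter_eq_empty.1 hd, measure_empty, mul_zero]

lemma conformal_const (h1 : 0 < lam) (h2 : lam < 1) (ht : 0 < t) (n : ℕ) :
    Real.exp (Real.log ((1-lam)^t / (1 - lam^t))) * slopeW lam n ^ t = 1 / cc lam t n := by
  have h1l : (0:ℝ) < 1 - lam := by linarith
  have hA : (0:ℝ) < (1-lam)^t := Real.rpow_pos_of_pos h1l t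
  have hC : (0:ℝ) < lam ^ t := Real.rpow_pos_of_pos h1 t
  have hB : (0:ℝ) < 1 - lam^t := by
    have := one_sub_beta_pos h1 h2 ht
    unfold beta at this
    exact this
  rw [Real.exp_log (div_pos hA hB)]
  unfold slopeW cc beta
  by_cases hn1 : n = 1
  · rw [if_pos hn1, if_pos hn1, one_div, Real.inv_rpow h1l.le]
    field_simp
  · rw [if_neg hn1, if_neg hn1, one_div, Real.inv_rpow (by positivity),
      Real.mul_rpow h1.le h1l.le]
    field_simp

lemma mm_W_stmt (h1 : 0 < lam) (h2 : lam < 1) (ht : 0 < t) {k : ℕ} (hk : 1 ≤ k) :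
    mm lam t (Wint lam k) = ENNReal.ofReal ((1 - lam^t) * lam ^ (t * ((k:ℝ) - 1))) := by
  rw [mm_W h1 h2 ht hk]
  congr 1
  unfold beta
  have e : (k:ℝ) - 1 = ((k-1 : ℕ) : ℝ) := by
    rw [Nat.cast_sub hk, Nat.cast_one]
  rw [e, Real.rpow_mul h1.le, Real.rpow_natCast]

end total

end S9

/-- For `lam^t < 1/2` there exist a `(t, log ψ(t))`-conformal Borel
probability measure `m` with `m(W k) = (1-lam^t) lam^(t(k-1))`, and an
`F_lam`-invariant Borel probability measure `μ ≪ m` with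
`μ(W j) = ((1-2 lam^t)/lam^t) (lam^t/(1-lam^t))^j` for all `j ≥ 1`. -/
theorem stmt9 (lam t : ℝ) (h1 : 0 < lam) (h2 : lam < 1) (ht : 0 < t)
    (hl : lam ^ t < 1/2) :
    ∃ m μ : Measure ℝ,
      IsProbabilityMeasure m ∧ m (Set.Ioc 0 1) = 1 ∧
      IsConformal lam t (Real.log ((1-lam)^t / (1 - lam^t))) m ∧
      (∀ k : ℕ, 1 ≤ k → m (Wint lam k) =
        ENNReal.ofReal ((1 - lam^t) * lam ^ (t * ((k:ℝ) - 1)))) ∧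
      IsProbabilityMeasure μ ∧ μ (Set.Ioc 0 1) = 1 ∧
      (∀ A : Set ℝ, MeasurableSet A → μ (Flam lam ⁻¹' A) = μ A) ∧
      μ ≪ m ∧
      ∀ j : ℕ, 1 ≤ j → μ (Wint lam j) =
        ENNReal.ofReal ((1 - 2*lam^t)/lam^t * (lam^t/(1-lam^t))^j) := by
  have hl' : S9.beta lam t < 1/2 := hl
  refine ⟨S9.mm lam t, S9.muM lam t, S9.mm_prob h1 h2 ht, S9.mm_Ioc01 h1 h2 ht, ?_, ?_,
    S9.muM_prob h1 h2 ht hl', S9.muM_Ioc01 h1 h2 ht hl',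
    fun A hA => S9.muM_invariant h1 h2 ht hl' hA, S9.muM_ac,
    fun j hj => S9.muM_W h1 h2 ht hl' hj⟩
  · intro n hn A hA hsub
    have himg : Flam lam '' A = S9.Fb lam n '' A :=
      Set.image_congr fun x hx => S9.Flam_eq_W h1 h2 hn (hsub hx)
    rw [himg, S9.conformal_const h1 h2 ht n]
    exact S9.conf_image h1 h2 ht hn hA hsub
  · intro k hk
    exact S9.mm_W_stmt h1 h2 ht hk
end
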